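/- arXiv:2310.12735 — 4 statements merged into one kernel-verified Lean document; each statement's English description precedes it below -/
import Mathlib

section
/- Let a>b>0 and q=b²/a². For each n, consider the probability measure on DWBC configurations of the n×n square supported on configurations with the minimal value N₅(σ)+N₆(σ)=n, with probabilities proportional to a^{N₁(σ)+N₂(σ)} b^{N₃(σ)+N₄(σ)} (this is the weak limit as ε→0 of the Gibbs measures with weights (a,b,ε)), and let (λ_i^j) be its random monotone triangle. Then for every fixed k≥1 and every injective tuple (m₁,…,m_k) of positive integers, lim_{n→∞} Prob( for every 1≤j≤k, (λ_1^j,…,λ_j^j) is the increasing rearrangement of (m₁,…,m_j) ) = ∏_{i=1}^k (1−q)·q^{ξ_i−1}, where ξ_i is the position of m_i in the increasing enumeration of ℤ_{>0}∖{m₁,…,m_{i−1}}. Equivalently, for every fixed k the triangle (λ_i^j)_{1≤i≤j≤k} converges in distribution to the triangle whose j-th row is the increasing rearrangement of (τ(1),…,τ(j)), where τ:ℤ_{>0}→ℤ_{>0} is the q-exchangeable random bijection built from i.i.d. Geometric(q) variables (Prob(ξ=k)=(1−q)q^{k−1}). -/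
open scoped BigOperators Classical
open Filter MeasureTheory Topology

namespace SixV


/-- Edge occupations for the six-vertex model on the `n × n` square:
`σ.1 x j` is the occupation of the horizontal edge between `(x, j+1)` and `(x+1, j+1)`
(i.e. `H(x, j+1)` for `x ∈ {0,…,n}`), and `σ.2 i y` is the occupation of the vertical
edge `V(i+1, y)` for `y ∈ {0,…,n}`. -/
abbrev Config (n : ℕ) := (Fin (n + 1) → Fin n → Bool) × (Fin n → Fin (n + 1) → Bool)

def b2n (b : Bool) : ℕ := if b then 1 else 0

/-- Domain Wall Boundary Conditions together with the ice rule (conservation law). -/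
def IsDWBC {n : ℕ} (σ : Config n) : Prop :=
  (∀ i j : Fin n,
      b2n (σ.1 i.castSucc j) + b2n (σ.2 i j.castSucc)
        = b2n (σ.1 i.succ j) + b2n (σ.2 i j.succ)) ∧
  (∀ j : Fin n, σ.1 0 j = true) ∧
  (∀ j : Fin n, σ.1 (Fin.last n) j = false) ∧
  (∀ i : Fin n, σ.2 i 0 = false) ∧
  (∀ i : Fin n, σ.2 i (Fin.last n) = true)

abbrev DWBC (n : ℕ) := {σ : Config n // IsDWBC σ}

noncomputable instance instFintypeDWBC (n : ℕ) : Fintype (DWBC n) := Fintype.ofFinite _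

/-- Vertex type from quadruple (H(x−1,y), V(x,y−1), H(x,y), V(x,y)). -/
def vtype : Bool → Bool → Bool → Bool → ℕ
  | false, false, false, false => 1
  | true,  true,  true,  true  => 2
  | true,  false, true,  false => 3
  | false, true,  false, true  => 4
  | true,  false, false, true  => 5
  | false, true,  true,  false => 6
  | _, _, _, _ => 0

/-- Type of the vertex at `(i+1, j+1)`. -/
def vertexType {n : ℕ} (σ : Config n) (i j : Fin n) : ℕ :=
  vtype (σ.1 i.castSucc j) (σ.2 i j.castSucc) (σ.1 i.succ j) (σ.2 i j.succ)

/-- `Ncount σ t` is the number of vertices of Type `t`. -/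
noncomputable def Ncount {n : ℕ} (σ : Config n) (ty : ℕ) : ℕ :=
  (Finset.univ.filter fun p : Fin n × Fin n => vertexType σ p.1 p.2 = ty).card

/-- The weight `a^(N₁+N₂) b^(N₃+N₄) c^(N₅+N₆)`. -/
noncomputable def wtABC {n : ℕ} (a b c : ℝ) (σ : Config n) : ℝ :=
  a ^ (Ncount σ 1 + Ncount σ 2) * b ^ (Ncount σ 3 + Ncount σ 4)
    * c ^ (Ncount σ 5 + Ncount σ 6)

/-- Gibbs probability of a DWBC configuration. -/
noncomputable def gibbs (n : ℕ) (a b c : ℝ) (σ : DWBC n) : ℝ :=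
  wtABC a b c σ.1 / ∑ σ' : DWBC n, wtABC a b c σ'.1

/-- Columns `x ∈ {1,…,n}` with `V(x, j) = 1`. -/
noncomputable def rowFinset {n : ℕ} (σ : DWBC n) (j : ℕ) : Finset ℕ :=
  if h : j ≤ n then
    (Finset.univ.filter fun x : Fin n => σ.1.2 x ⟨j, Nat.lt_succ_of_le h⟩ = true).image
      fun x : Fin n => (x : ℕ) + 1
  else ∅

/-- The monotone triangle: `lam σ i j` is the `i`-th smallest column with `V(·, j) = 1`. -/
noncomputable def lam {n : ℕ} (σ : DWBC n) (i j : ℕ) : ℕ :=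
  ((rowFinset σ j).sort (· ≤ ·)).getD (i - 1) 0


/-! ### permutation configurations -/

def permConfig {n : ℕ} (π : Equiv.Perm (Fin n)) : Config n :=
  (fun x j => decide ((x:ℕ) ≤ (π j : ℕ)), fun i y => decide ((π.symm i : ℕ) < (y:ℕ)))

noncomputable def pinv {n : ℕ} (π : Equiv.Perm (Fin n)) : ℕ :=
  (Finset.univ.filter fun p : Fin n × Fin n => p.1 < p.2 ∧ π p.2 < π p.1).card

noncomputable def pninv {n : ℕ} (π : Equiv.Perm (Fin n)) : ℕ :=
  (Finset.univ.filter fun p : Fin n × Fin n => p.1 < p.2 ∧ π p.1 < π p.2).card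

lemma pinv_add_pninv {n : ℕ} (π : Equiv.Perm (Fin n)) :
    pinv π + pninv π
      = (Finset.univ.filter fun p : Fin n × Fin n => p.1 < p.2).card := by
  classical
  rw [pinv, pninv]
  rw [← Finset.filter_filter (fun p : Fin n × Fin n => p.1 < p.2)
        (fun p => π p.2 < π p.1),
      ← Finset.filter_filter (fun p : Fin n × Fin n => p.1 < p.2)
        (fun p => π p.1 < π p.2)]
  have hset : (Finset.filter (fun p : Fin n × Fin n => π p.1 < π p.2)
        (Finset.filter (fun p : Fin n × Fin n => p.1 < p.2) Finset.univ))
      = (Finset.filter (fun p : Fin n × Fin n => ¬ π p.2 < π p.1)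
        (Finset.filter (fun p : Fin n × Fin n => p.1 < p.2) Finset.univ)) := by
    apply Finset.filter_congr
    intro p hp
    simp only [Finset.mem_filter] at hp
    have hne : π p.1 ≠ π p.2 := fun h => (ne_of_lt hp.2) (π.injective h)
    constructor
    · intro h; exact h.asymm
    · intro h
      rcases lt_or_gt_of_ne hne with h' | h'
      · exact h'
      · exact absurd h' h
  rw [hset]
  exact Finset.card_filter_add_card_filter_not
        (s := Finset.univ.filter fun p : Fin n × Fin n => p.1 < p.2)
        (p := fun p => π p.2 < π p.1)

lemma permConfig_isDWBC {n : ℕ} (π : Equiv.Perm (Fin n)) : IsDWBC (permConfig π) := by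
  refine ⟨?_, ?_, ?_, ?_, ?_⟩
  · intro i j
    have key : ((i:ℕ) = ((π j : Fin n):ℕ)) ↔ (((π.symm i : Fin n):ℕ) = (j:ℕ)) := by
      rw [← Fin.ext_iff, ← Fin.ext_iff]
      constructor
      · intro h; rw [h]; simp
      · intro h; rw [← h]; simp
    simp only [permConfig, b2n, Fin.coe_castSucc, Fin.val_succ, decide_eq_true_eq]
    rcases em ((i:ℕ) = ((π j : Fin n):ℕ)) with he | he
    · have h2 := key.mp he
      split_ifs <;> omega
    · have h2 : ¬ (((π.symm i : Fin n):ℕ) = (j:ℕ)) := fun h => he (key.mpr h)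
      split_ifs <;> omega
  · intro j; simp [permConfig]
  · intro j
    simp only [permConfig]
    have : ¬ ((Fin.last n : ℕ) ≤ (π j : ℕ)) := by
      simp only [Fin.val_last, not_le]; exact (π j).isLt
    simp [this]
  · intro i; simp [permConfig]
  · intro i
    simp only [permConfig]
    have : (π.symm i : ℕ) < (Fin.last n : ℕ) := by
      simp only [Fin.val_last]; exact (π.symm i).isLt
    simp [this]

lemma symm_val_eq_iff {n : ℕ} (π : Equiv.Perm (Fin n)) (i j : Fin n) :
    ((π.symm i : Fin n):ℕ) = (j:ℕ) ↔ ((i:ℕ) = ((π j : Fin n):ℕ)) := by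
  rw [← Fin.ext_iff, ← Fin.ext_iff]
  constructor
  · intro h; rw [← h]; simp
  · intro h; rw [h]; simp

lemma vertexType_permConfig {n : ℕ} (π : Equiv.Perm (Fin n)) (i j : Fin n) :
    vertexType (permConfig π) i j =
      if (i:ℕ) = ((π j : Fin n):ℕ) then 5
      else if (i:ℕ) < ((π j : Fin n):ℕ) then
        (if ((π.symm i : Fin n):ℕ) < (j:ℕ) then 2 else 3)
      else (if ((π.symm i : Fin n):ℕ) < (j:ℕ) then 4 else 1) := by
  have key := symm_val_eq_iff π i j
  simp only [vertexType, permConfig, Fin.coe_castSucc, Fin.val_succ]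
  rcases Nat.lt_trichotomy (i:ℕ) ((π j : Fin n):ℕ) with h | h | h
  · have hne : ((π.symm i : Fin n):ℕ) ≠ (j:ℕ) := fun hh => by omega
    by_cases hs : ((π.symm i : Fin n):ℕ) < (j:ℕ)
    · rw [decide_eq_true (show (i:ℕ) ≤ ((π j : Fin n):ℕ) by omega),
          decide_eq_true (show ((π.symm i : Fin n):ℕ) < (j:ℕ) from hs),
          decide_eq_true (show (i:ℕ) + 1 ≤ ((π j : Fin n):ℕ) by omega),
          decide_eq_true (show ((π.symm i : Fin n):ℕ) < (j:ℕ) + 1 by omega),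
          if_neg (by omega), if_pos h, if_pos hs]
      rfl
    · rw [decide_eq_true (show (i:ℕ) ≤ ((π j : Fin n):ℕ) by omega),
          decide_eq_false (show ¬ (((π.symm i : Fin n):ℕ) < (j:ℕ)) from hs),
          decide_eq_true (show (i:ℕ) + 1 ≤ ((π j : Fin n):ℕ) by omega),
          decide_eq_false (show ¬ (((π.symm i : Fin n):ℕ) < (j:ℕ) + 1) by omega),
          if_neg (by omega), if_pos h, if_neg hs]
      rfl
  · have hs : ((π.symm i : Fin n):ℕ) = (j:ℕ) := key.mpr h
    rw [decide_eq_true (show (i:ℕ) ≤ ((π j : Fin n):ℕ) by omega),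
        decide_eq_false (show ¬ (((π.symm i : Fin n):ℕ) < (j:ℕ)) by omega),
        decide_eq_false (show ¬ ((i:ℕ) + 1 ≤ ((π j : Fin n):ℕ)) by omega),
        decide_eq_true (show ((π.symm i : Fin n):ℕ) < (j:ℕ) + 1 by omega),
        if_pos h]
    rfl
  · have hne : ((π.symm i : Fin n):ℕ) ≠ (j:ℕ) := fun hh => by omega
    by_cases hs : ((π.symm i : Fin n):ℕ) < (j:ℕ)
    · rw [decide_eq_false (show ¬ ((i:ℕ) ≤ ((π j : Fin n):ℕ)) by omega),
          decide_eq_true (show ((π.symm i : Fin n):ℕ) < (j:ℕ) from hs),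
          decide_eq_false (show ¬ ((i:ℕ) + 1 ≤ ((π j : Fin n):ℕ)) by omega),
          decide_eq_true (show ((π.symm i : Fin n):ℕ) < (j:ℕ) + 1 by omega),
          if_neg (by omega), if_neg (by omega), if_pos hs]
      rfl
    · rw [decide_eq_false (show ¬ ((i:ℕ) ≤ ((π j : Fin n):ℕ)) by omega),
          decide_eq_false (show ¬ (((π.symm i : Fin n):ℕ) < (j:ℕ)) from hs),
          decide_eq_false (show ¬ ((i:ℕ) + 1 ≤ ((π j : Fin n):ℕ)) by omega),
          decide_eq_false (show ¬ (((π.symm i : Fin n):ℕ) < (j:ℕ) + 1) by omega),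
          if_neg (by omega), if_neg (by omega), if_neg hs]
      rfl

lemma Ncount5_permConfig {n : ℕ} (π : Equiv.Perm (Fin n)) :
    Ncount (permConfig π) 5 = n := by
  have h1 : (Finset.univ.filter fun p : Fin n × Fin n =>
      vertexType (permConfig π) p.1 p.2 = 5)
      = Finset.univ.filter fun p : Fin n × Fin n => (p.1:ℕ) = ((π p.2 : Fin n):ℕ) := by
    apply Finset.filter_congr
    intro p _
    rw [vertexType_permConfig]
    split_ifs <;> omega
  rw [Ncount, h1]
  have hcard : (Finset.univ.filter fun p : Fin n × Fin n =>
      (p.1:ℕ) = ((π p.2 : Fin n):ℕ)).card = (Finset.univ : Finset (Fin n)).card := by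
    apply Finset.card_nbij' (i := fun p => p.2) (j := fun j => (π j, j))
    · intro p hp; exact Finset.mem_univ _
    · intro j _; simp
    · intro p hp
      simp only [Finset.mem_coe, Finset.mem_filter] at hp
      have : π p.2 = p.1 := Fin.ext hp.2.symm
      beta_reduce; rw [this]
    · intro j _; rfl
  rw [hcard, Finset.card_fin]

lemma Ncount6_permConfig {n : ℕ} (π : Equiv.Perm (Fin n)) :
    Ncount (permConfig π) 6 = 0 := by
  rw [Ncount, Finset.card_eq_zero, Finset.filter_eq_empty_iff]
  intro p _
  rw [vertexType_permConfig]
  split_ifs <;> omega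

lemma Ncount2_permConfig {n : ℕ} (π : Equiv.Perm (Fin n)) :
    Ncount (permConfig π) 2 = pninv π := by
  have h1 : (Finset.univ.filter fun p : Fin n × Fin n =>
      vertexType (permConfig π) p.1 p.2 = 2)
      = Finset.univ.filter fun p : Fin n × Fin n =>
        (p.1:ℕ) < ((π p.2 : Fin n):ℕ) ∧ ((π.symm p.1 : Fin n):ℕ) < (p.2:ℕ) := by
    apply Finset.filter_congr
    intro p _
    rw [vertexType_permConfig]
    split_ifs <;> omega
  rw [Ncount, h1, pninv]
  apply Finset.card_nbij' (i := fun p => (π.symm p.1, p.2)) (j := fun p => (π p.1, p.2))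
  · intro p hp
    simp only [Finset.mem_coe, Finset.mem_filter, Finset.mem_univ, true_and] at hp ⊢
    refine ⟨Fin.lt_def.mpr hp.2, ?_⟩
    rw [Fin.lt_def]
    simpa using hp.1
  · intro p hp
    simp only [Finset.mem_coe, Finset.mem_filter, Finset.mem_univ, true_and, Fin.lt_def] at hp ⊢
    constructor
    · simpa using hp.2
    · simpa using hp.1
  · intro p _; simp
  · intro p _; simp

lemma Ncount3_permConfig {n : ℕ} (π : Equiv.Perm (Fin n)) :
    Ncount (permConfig π) 3 = pinv π := by
  have h1 : (Finset.univ.filter fun p : Fin n × Fin n =>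
      vertexType (permConfig π) p.1 p.2 = 3)
      = Finset.univ.filter fun p : Fin n × Fin n =>
        (p.1:ℕ) < ((π p.2 : Fin n):ℕ) ∧ (p.2:ℕ) < ((π.symm p.1 : Fin n):ℕ) := by
    apply Finset.filter_congr
    intro p _
    rw [vertexType_permConfig]
    have key := symm_val_eq_iff π p.1 p.2
    split_ifs <;> omega
  rw [Ncount, h1, pinv]
  apply Finset.card_nbij' (i := fun p => (p.2, π.symm p.1)) (j := fun p => (π p.2, p.1))
  · intro p hp
    simp only [Finset.mem_coe, Finset.mem_filter, Finset.mem_univ, true_and, Fin.lt_def] at hp ⊢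
    refine ⟨hp.2, ?_⟩
    simpa using hp.1
  · intro p hp
    simp only [Finset.mem_coe, Finset.mem_filter, Finset.mem_univ, true_and, Fin.lt_def] at hp ⊢
    constructor
    · simpa using hp.2
    · simpa using hp.1
  · intro p _; simp
  · intro p _; simp

lemma Ncount4_permConfig {n : ℕ} (π : Equiv.Perm (Fin n)) :
    Ncount (permConfig π) 4 = pinv π := by
  have h1 : (Finset.univ.filter fun p : Fin n × Fin n =>
      vertexType (permConfig π) p.1 p.2 = 4)
      = Finset.univ.filter fun p : Fin n × Fin n =>
        ((π p.2 : Fin n):ℕ) < (p.1:ℕ) ∧ ((π.symm p.1 : Fin n):ℕ) < (p.2:ℕ) := by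
    apply Finset.filter_congr
    intro p _
    rw [vertexType_permConfig]
    split_ifs <;> omega
  rw [Ncount, h1, pinv]
  apply Finset.card_nbij' (i := fun p => (π.symm p.1, p.2)) (j := fun p => (π p.1, p.2))
  · intro p hp
    simp only [Finset.mem_coe, Finset.mem_filter, Finset.mem_univ, true_and, Fin.lt_def] at hp ⊢
    refine ⟨hp.2, ?_⟩
    simpa using hp.1
  · intro p hp
    simp only [Finset.mem_coe, Finset.mem_filter, Finset.mem_univ, true_and, Fin.lt_def] at hp ⊢
    constructor
    · simpa using hp.2
    · simpa using hp.1
  · intro p _; simp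
  · intro p _; simp

lemma Ncount1_permConfig {n : ℕ} (π : Equiv.Perm (Fin n)) :
    Ncount (permConfig π) 1 = pninv π := by
  have h1 : (Finset.univ.filter fun p : Fin n × Fin n =>
      vertexType (permConfig π) p.1 p.2 = 1)
      = Finset.univ.filter fun p : Fin n × Fin n =>
        ((π p.2 : Fin n):ℕ) < (p.1:ℕ) ∧ (p.2:ℕ) < ((π.symm p.1 : Fin n):ℕ) := by
    apply Finset.filter_congr
    intro p _
    rw [vertexType_permConfig]
    have key := symm_val_eq_iff π p.1 p.2
    split_ifs <;> omega
  rw [Ncount, h1, pninv]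
  apply Finset.card_nbij' (i := fun p => (p.2, π.symm p.1)) (j := fun p => (π p.2, p.1))
  · intro p hp
    simp only [Finset.mem_coe, Finset.mem_filter, Finset.mem_univ, true_and, Fin.lt_def] at hp ⊢
    refine ⟨hp.2, ?_⟩
    simpa using hp.1
  · intro p hp
    simp only [Finset.mem_coe, Finset.mem_filter, Finset.mem_univ, true_and, Fin.lt_def] at hp ⊢
    constructor
    · simpa using hp.2
    · simpa using hp.1
  · intro p _; simp
  · intro p _; simp

-- chunk 3 : reconstruction
lemma vtype56_iff (h1 v1 h2 v2 : Bool) (hice : b2n h1 + b2n v1 = b2n h2 + b2n v2) :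
    (vtype h1 v1 h2 v2 = 5 ∨ vtype h1 v1 h2 v2 = 6) ↔ h1 ≠ h2 := by
  revert hice; cases h1 <;> cases v1 <;> cases h2 <;> cases v2 <;> decide

lemma b2n_inj {x y : Bool} (h : b2n x = b2n y) : x = y := by
  cases x <;> cases y <;> simp [b2n] at h ⊢

noncomputable def rowChange {n : ℕ} (σ : DWBC n) (j : Fin n) : Finset (Fin n) :=
  Finset.univ.filter fun i => σ.1.1 i.castSucc j ≠ σ.1.1 i.succ j

lemma sum_rowChange {n : ℕ} (σ : DWBC n) :
    ∑ j : Fin n, (rowChange σ j).card = Ncount σ.1 5 + Ncount σ.1 6 := by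
  classical
  have hdisj : Disjoint
      (Finset.univ.filter fun p : Fin n × Fin n => vertexType σ.1 p.1 p.2 = 5)
      (Finset.univ.filter fun p : Fin n × Fin n => vertexType σ.1 p.1 p.2 = 6) := by
    rw [Finset.disjoint_left]
    intro p hp hq
    simp only [Finset.mem_filter] at hp hq
    omega
  rw [Ncount, Ncount, ← Finset.card_union_of_disjoint hdisj, ← Finset.filter_or]
  rw [Finset.card_eq_sum_card_fiberwise
      (f := fun p : Fin n × Fin n => p.2) (t := Finset.univ) (fun p _ => Finset.mem_univ _)]
  apply Finset.sum_congr rfl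
  intro j _
  apply Finset.card_nbij' (i := fun i0 => (i0, j)) (j := fun p => p.1)
  · intro i hi
    simp only [Finset.mem_coe, rowChange, Finset.mem_filter, Finset.mem_univ, true_and] at hi
    simp only [Finset.mem_coe, Finset.mem_filter, Finset.mem_univ, true_and]
    exact ⟨(vtype56_iff _ _ _ _ (σ.2.1 i j)).mpr hi, trivial⟩
  · intro p hp
    simp only [Finset.mem_coe, Finset.mem_filter, Finset.mem_univ, true_and] at hp
    obtain ⟨h56, h2⟩ := hp
    simp only [Finset.mem_coe, rowChange, Finset.mem_filter, Finset.mem_univ, true_and]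
    have := (vtype56_iff _ _ _ _ (σ.2.1 p.1 p.2)).mp h56
    rw [h2] at this
    exact this
  · intro i _; rfl
  · intro p hp
    simp only [Finset.mem_coe, Finset.mem_filter, Finset.mem_univ, true_and] at hp
    rw [← hp.2]

lemma rowChange_nonempty {n : ℕ} (σ : DWBC n) (j : Fin n) :
    (rowChange σ j).Nonempty := by
  by_contra h
  rw [Finset.not_nonempty_iff_eq_empty, rowChange, Finset.filter_eq_empty_iff] at h
  have hall : ∀ x : Fin (n + 1), σ.1.1 x j = true := by
    intro x
    induction x using Fin.induction with
    | zero => exact σ.2.2.1 j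
    | succ i ih =>
        have := h (Finset.mem_univ i)
        simp only [ne_eq, not_not] at this
        rw [← this]; exact ih
  have := hall (Fin.last n)
  rw [σ.2.2.2.1 j] at this
  exact Bool.false_ne_true this

lemma rowChange_card_one {n : ℕ} (σ : DWBC n) (h : Ncount σ.1 5 + Ncount σ.1 6 = n)
    (j : Fin n) : (rowChange σ j).card = 1 := by
  by_contra hne
  have h1 : ∀ j' : Fin n, 1 ≤ (rowChange σ j').card := fun j' =>
    Finset.card_pos.mpr (rowChange_nonempty σ j')
  have hlt : (1 : ℕ) < (rowChange σ j).card := by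
    have := h1 j; omega
  have : ∑ _j : Fin n, 1 < ∑ j' : Fin n, (rowChange σ j').card :=
    Finset.sum_lt_sum (fun i _ => h1 i) ⟨j, Finset.mem_univ j, hlt⟩
  rw [sum_rowChange, h] at this
  simp at this

lemma exists_perm {n : ℕ} (σ : DWBC n) (h : Ncount σ.1 5 + Ncount σ.1 6 = n) :
    ∃ π : Equiv.Perm (Fin n), permConfig π = σ.1 := by
  classical
  have hone : ∀ j, ∃ x0 : Fin n, rowChange σ j = {x0} := fun j =>
    Finset.card_eq_one.mp (rowChange_card_one σ h j)
  choose x hx using hone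
  have hchange : ∀ j i, (σ.1.1 i.castSucc j ≠ σ.1.1 i.succ j) ↔ i = x j := by
    intro j i
    constructor
    · intro hi
      have : i ∈ rowChange σ j := by simp [rowChange, hi]
      rw [hx j] at this; simpa using this
    · intro hi; subst hi
      have : x j ∈ rowChange σ j := by rw [hx j]; simp
      simpa [rowChange] using this
  have Hup : ∀ j (x' : Fin (n+1)), (x':ℕ) ≤ ((x j : Fin n):ℕ) → σ.1.1 x' j = true := by
    intro j x'
    induction x' using Fin.induction with
    | zero => intro _; exact σ.2.2.1 j
    | succ i ih =>
        intro hle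
        simp only [Fin.val_succ] at hle
        have hne : ¬ (i = x j) := by
          intro hh; rw [hh] at hle; omega
        have heq : σ.1.1 i.castSucc j = σ.1.1 i.succ j := by
          by_contra hcon; exact hne ((hchange j i).mp hcon)
        rw [← heq]
        apply ih
        simp only [Fin.coe_castSucc]
        omega
  have Hdown : ∀ j (x' : Fin (n+1)), ((x j : Fin n):ℕ) < (x':ℕ) → σ.1.1 x' j = false := by
    intro j x'
    induction x' using Fin.reverseInduction with
    | last => intro _; exact σ.2.2.2.1 j
    | cast i ih =>
        intro hlt
        simp only [Fin.coe_castSucc] at hlt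
        have hne : ¬ (i = x j) := by
          intro hh; rw [hh] at hlt; omega
        have heq : σ.1.1 i.castSucc j = σ.1.1 i.succ j := by
          by_contra hcon; exact hne ((hchange j i).mp hcon)
        rw [heq]
        apply ih
        simp only [Fin.val_succ]
        omega
  have Hshape : ∀ j (x' : Fin (n+1)),
      σ.1.1 x' j = decide ((x':ℕ) ≤ ((x j : Fin n):ℕ)) := by
    intro j x'
    by_cases hc : (x':ℕ) ≤ ((x j : Fin n):ℕ)
    · rw [Hup j x' hc, decide_eq_true hc]
    · rw [Hdown j x' (by omega), decide_eq_false hc]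
  have Vshape : ∀ i (y : Fin (n+1)),
      σ.1.2 i y = decide (∃ j : Fin n, (j:ℕ) < (y:ℕ) ∧ x j = i) := by
    intro i y
    induction y using Fin.induction with
    | zero =>
        rw [σ.2.2.2.2.1 i]
        symm
        rw [decide_eq_false]
        rintro ⟨j, hj, _⟩
        simp at hj
    | succ y' ih =>
        have hice := σ.2.1 i y'
        by_cases hcase : i = x y'
        · have hxv : ((x y' : Fin n):ℕ) = (i:ℕ) := by rw [← hcase]
          have hH1 : σ.1.1 i.castSucc y' = true := by
            rw [Hshape]; apply decide_eq_true; simp only [Fin.coe_castSucc]; omega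
          have hH2 : σ.1.1 i.succ y' = false := by
            rw [Hshape]; apply decide_eq_false; simp only [Fin.val_succ]; omega
          rw [hH1, hH2] at hice
          cases hv2 : σ.1.2 i y'.succ with
          | false => rw [hv2] at hice; cases hv1 : σ.1.2 i y'.castSucc <;>
              rw [hv1] at hice <;> simp [b2n] at hice
          | true =>
              symm
              apply decide_eq_true
              exact ⟨y', by simp [Fin.val_succ], hcase.symm⟩
        · have hxv : ((x y' : Fin n):ℕ) ≠ (i:ℕ) := fun hv => hcase (Fin.ext hv.symm)
          have heq : σ.1.1 i.castSucc y' = σ.1.1 i.succ y' := by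
            rw [Hshape, Hshape]
            apply decide_eq_decide.mpr
            simp only [Fin.coe_castSucc, Fin.val_succ]
            omega
          rw [heq] at hice
          have hv12 : σ.1.2 i y'.castSucc = σ.1.2 i y'.succ :=
            b2n_inj (Nat.add_left_cancel hice)
          rw [← hv12, ih]
          apply decide_eq_decide.mpr
          simp only [Fin.coe_castSucc, Fin.val_succ]
          constructor
          · rintro ⟨j, hj, hji⟩; exact ⟨j, by omega, hji⟩
          · rintro ⟨j, hj, hji⟩
            refine ⟨j, ?_, hji⟩
            have hjy : ¬ (j = y') := by
              intro hh; rw [hh] at hji; exact hcase hji.symm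
            have : (j:ℕ) ≠ ((y' : Fin n):ℕ) := fun hv => hjy (Fin.ext hv)
            omega
  have hinjlt : ∀ j1 j2 : Fin n, (j1:ℕ) < (j2:ℕ) → x j1 ≠ x j2 := by
    intro j1 j2 hlt he
    set i := x j2 with hi
    have hxv : ((x j2 : Fin n):ℕ) = (i:ℕ) := rfl
    have hH1 : σ.1.1 i.castSucc j2 = true := by
      rw [Hshape]; apply decide_eq_true; simp only [Fin.coe_castSucc]; omega
    have hH2 : σ.1.1 i.succ j2 = false := by
      rw [Hshape]; apply decide_eq_false; simp only [Fin.val_succ]; omega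
    have hv1 : σ.1.2 i j2.castSucc = true := by
      rw [Vshape]; apply decide_eq_true
      exact ⟨j1, by simpa using hlt, by rw [he]⟩
    have hv2 : σ.1.2 i j2.succ = true := by
      rw [Vshape]; apply decide_eq_true
      exact ⟨j1, by simp [Fin.val_succ]; omega, by rw [he]⟩
    have hice := σ.2.1 i j2
    rw [hH1, hH2, hv1, hv2] at hice
    simp [b2n] at hice
  have hinj : Function.Injective x := by
    intro j1 j2 he
    rcases Nat.lt_trichotomy (j1:ℕ) (j2:ℕ) with hl | hl | hl
    · exact absurd he (hinjlt j1 j2 hl)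
    · exact Fin.ext hl
    · exact absurd he.symm (hinjlt j2 j1 hl)
  have hbij : Function.Bijective x := (Finite.injective_iff_bijective).mp hinj
  refine ⟨Equiv.ofBijective x hbij, ?_⟩
  have hπ : ∀ j, (Equiv.ofBijective x hbij) j = x j := fun j => rfl
  apply Prod.ext
  · funext x' j
    rw [show (permConfig (Equiv.ofBijective x hbij)).1 x' j
        = decide ((x':ℕ) ≤ (((Equiv.ofBijective x hbij) j : Fin n):ℕ)) from rfl]
    rw [hπ, Hshape]
  · funext i y
    rw [show (permConfig (Equiv.ofBijective x hbij)).2 i y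
        = decide ((((Equiv.ofBijective x hbij).symm i : Fin n):ℕ) < (y:ℕ)) from rfl]
    rw [Vshape]
    apply decide_eq_decide.mpr
    constructor
    · intro hlt
      refine ⟨(Equiv.ofBijective x hbij).symm i, hlt, ?_⟩
      have := (Equiv.ofBijective x hbij).apply_symm_apply i
      rw [hπ] at this
      exact this
    · rintro ⟨j, hj, hji⟩
      have : (Equiv.ofBijective x hbij).symm i = j := by
        apply Equiv.symm_apply_eq _ |>.mpr
        rw [hπ, hji]
      rw [this]
      exact hj
lemma card_val_lt {n m : ℕ} (hm : m ≤ n) :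
    (Finset.univ.filter fun v : Fin n => (v:ℕ) < m).card = m := by
  conv_rhs => rw [← Finset.card_range m]
  refine Finset.card_bij' (fun v _ => (v:ℕ))
    (fun x hx => (⟨x, lt_of_lt_of_le (Finset.mem_range.mp hx) hm⟩ : Fin n)) ?_ ?_ ?_ ?_
  · intro v hv
    simp only [Finset.mem_filter] at hv
    exact Finset.mem_range.mpr hv.2
  · intro x hx
    simp only [Finset.mem_filter, Finset.mem_univ, true_and]
    exact Finset.mem_range.mp hx
  · intro v hv; rfl
  · intro x hx; rfl

lemma succAbove_lt_left_iff {n : ℕ} (p : Fin (n+1)) (v : Fin n) :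
    p.succAbove v < p ↔ (v:ℕ) < (p:ℕ) := by
  by_cases hc : (v:ℕ) < (p:ℕ)
  · rw [Fin.succAbove_of_castSucc_lt p v (by rw [Fin.lt_def]; simpa using hc)]
    simp [Fin.lt_def, hc]
  · rw [Fin.succAbove_of_le_castSucc p v (by rw [Fin.le_def]; simp; omega)]
    simp [Fin.lt_def, Fin.val_succ]
    omega

noncomputable def insPerm {n : ℕ} (p : Fin (n+1)) (e : Equiv.Perm (Fin n)) :
    Equiv.Perm (Fin (n+1)) :=
  Equiv.ofBijective (fun x => Fin.cases p (fun j => p.succAbove (e j)) x)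
    (by
      apply Finite.injective_iff_bijective.mp
      intro x y hxy
      induction x using Fin.cases with
      | zero =>
          induction y using Fin.cases with
          | zero => rfl
          | succ j =>
              simp only [Fin.cases_zero, Fin.cases_succ] at hxy
              exact absurd hxy.symm (Fin.succAbove_ne p (e j))
      | succ i =>
          induction y using Fin.cases with
          | zero =>
              simp only [Fin.cases_zero, Fin.cases_succ] at hxy
              exact absurd hxy (Fin.succAbove_ne p (e i))
          | succ j =>
              simp only [Fin.cases_succ] at hxy
              have := Fin.succAbove_right_injective (p := p) hxy
              rw [e.injective this])

@[simp] lemma insPerm_zero {n : ℕ} (p : Fin (n+1)) (e : Equiv.Perm (Fin n)) :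
    insPerm p e 0 = p := by
  simp [insPerm, Equiv.ofBijective]

@[simp] lemma insPerm_succ {n : ℕ} (p : Fin (n+1)) (e : Equiv.Perm (Fin n)) (j : Fin n) :
    insPerm p e j.succ = p.succAbove (e j) := by
  simp [insPerm, Equiv.ofBijective]

lemma insPerm_bijective {n : ℕ} :
    Function.Bijective (fun pe : Fin (n+1) × Equiv.Perm (Fin n) => insPerm pe.1 pe.2) := by
  constructor
  · rintro ⟨p, e⟩ ⟨p', e'⟩ h
    simp only at h
    have h0 : p = p' := by
      rw [← insPerm_zero p e, ← insPerm_zero p' e', h]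
    subst h0
    have he : e = e' := by
      apply Equiv.ext
      intro j
      have : insPerm p e j.succ = insPerm p e' j.succ := by rw [h]
      rw [insPerm_succ, insPerm_succ] at this
      exact Fin.succAbove_right_injective this
    rw [he]
  · intro π
    set p := π 0 with hp
    have hsome : ∀ j : Fin n, ((finSuccEquiv' p) (π j.succ)).isSome := by
      intro j
      rw [Option.isSome_iff_ne_none]
      intro hnone
      have : π j.succ = p := by
        apply (finSuccEquiv' p).injective
        rw [hnone, finSuccEquiv'_at]
      exact (Fin.succ_ne_zero j) (π.injective (this.trans hp))
    set f := fun j : Fin n => ((finSuccEquiv' p) (π j.succ)).get (hsome j) with hf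
    have hfval : ∀ j, p.succAbove (f j) = π j.succ := by
      intro j
      have h1 : (finSuccEquiv' p).symm (some (f j)) = p.succAbove (f j) :=
        finSuccEquiv'_symm_some p (f j)
      rw [← h1, hf]
      simp only [Option.some_get]
      exact (finSuccEquiv' p).symm_apply_apply _
    have hfinj : Function.Injective f := by
      intro j1 j2 hj
      have : π j1.succ = π j2.succ := by
        rw [← hfval j1, ← hfval j2, hj]
      exact Fin.succ_injective _ (π.injective this)
    have hfbij := Finite.injective_iff_bijective.mp hfinj
    refine ⟨(p, Equiv.ofBijective f hfbij), ?_⟩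
    apply Equiv.ext
    intro x
    induction x using Fin.cases with
    | zero => simp [hp]
    | succ j =>
        simp only [insPerm_succ]
        exact hfval j

lemma pinv_insPerm {n : ℕ} (p : Fin (n+1)) (e : Equiv.Perm (Fin n)) :
    pinv (insPerm p e) = (p:ℕ) + pinv e := by
  classical
  have hzero : insPerm p e 0 = p := insPerm_zero p e
  rw [pinv]
  rw [← Finset.card_filter_add_card_filter_not
      (s := Finset.univ.filter fun t : Fin (n+1) × Fin (n+1) =>
        t.1 < t.2 ∧ insPerm p e t.2 < insPerm p e t.1)
      (p := fun t => t.1 = 0)]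
  congr 1
  · -- zero part
    have step1 : (Finset.univ.filter fun y : Fin n => ((e y : Fin n):ℕ) < (p:ℕ)).card
        = ((Finset.univ.filter fun t : Fin (n+1) × Fin (n+1) =>
          t.1 < t.2 ∧ insPerm p e t.2 < insPerm p e t.1).filter fun t => t.1 = 0).card := by
      apply Finset.card_nbij (i := fun y => ((0 : Fin (n+1)), y.succ))
      · intro y hy
        simp only [Finset.mem_coe, Finset.mem_filter, Finset.mem_univ, true_and] at hy ⊢
        refine ⟨⟨Fin.succ_pos y, ?_⟩, trivial⟩
        rw [hzero, insPerm_succ, succAbove_lt_left_iff]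
        exact hy
      · intro y1 _ y2 _ h
        simp only [Prod.mk.injEq, true_and] at h
        exact Fin.succ_injective _ h
      · intro t ht
        simp only [Finset.coe_filter, Set.mem_setOf_eq, Finset.mem_filter,
          Finset.mem_univ, true_and] at ht
        obtain ⟨⟨hlt, hval⟩, h0⟩ := ht
        have ht2 : t.2 ≠ 0 := by
          intro hh
          rw [hh, h0] at hlt
          exact lt_irrefl _ hlt
        obtain ⟨y, hy⟩ := Fin.exists_succ_eq.mpr ht2
        have hval' := hval
        rw [h0, hzero] at hval'
        refine ⟨y, ?_, ?_⟩
        · simp only [Finset.coe_filter, Set.mem_setOf_eq, Finset.mem_univ, true_and]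
          rw [← succAbove_lt_left_iff p (e y), ← insPerm_succ, hy]
          exact hval'
        · exact Prod.ext h0.symm hy
    have step3 : (Finset.univ.filter fun y : Fin n => ((e y : Fin n):ℕ) < (p:ℕ)).card
        = (Finset.univ.filter fun v : Fin n => (v:ℕ) < (p:ℕ)).card := by
      apply Finset.card_nbij (i := fun y => e y)
      · intro y hy
        simp only [Finset.mem_coe, Finset.mem_filter, Finset.mem_univ, true_and] at hy ⊢
        exact hy
      · intro y1 _ y2 _ h
        exact e.injective h
      · intro v hv
        simp only [Finset.coe_filter, Set.mem_setOf_eq, Finset.mem_univ, true_and] at hv ⊢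
        refine ⟨e.symm v, ?_, Equiv.apply_symm_apply e v⟩
        simp only [Set.mem_setOf_eq, Equiv.apply_symm_apply]
        exact hv
    rw [← step1, step3, card_val_lt (by omega)]
  · -- nonzero part
    rw [pinv]
    symm
    apply Finset.card_nbij (i := fun u : Fin n × Fin n => (u.1.succ, u.2.succ))
    · intro u hu
      simp only [Finset.mem_coe, Finset.mem_filter, Finset.mem_univ, true_and] at hu ⊢
      obtain ⟨hlt, hval⟩ := hu
      refine ⟨⟨?_, ?_⟩, Fin.succ_ne_zero u.1⟩
      · exact Fin.succ_lt_succ_iff.mpr hlt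
      · rw [insPerm_succ, insPerm_succ]
        exact Fin.succAbove_lt_succAbove_iff.mpr hval
    · intro u1 _ u2 _ h
      simp only [Prod.mk.injEq] at h
      exact Prod.ext (Fin.succ_injective _ h.1) (Fin.succ_injective _ h.2)
    · intro t ht
      simp only [Finset.coe_filter, Set.mem_setOf_eq, Finset.mem_filter,
        Finset.mem_univ, true_and] at ht
      obtain ⟨⟨hlt, hval⟩, h0⟩ := ht
      obtain ⟨y1, hy1⟩ := Fin.exists_succ_eq.mpr h0
      have ht2 : t.2 ≠ 0 := by
        intro hh
        rw [hh] at hlt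
        simp [Fin.lt_def] at hlt
      obtain ⟨y2, hy2⟩ := Fin.exists_succ_eq.mpr ht2
      refine ⟨(y1, y2), ?_, ?_⟩
      · simp only [Finset.coe_filter, Set.mem_setOf_eq, Finset.mem_univ, true_and]
        constructor
        · rw [← Fin.succ_lt_succ_iff, hy1, hy2]; exact hlt
        · rw [← Fin.succAbove_lt_succAbove_iff (p := p), ← insPerm_succ, ← insPerm_succ,
            hy1, hy2]
          exact hval
      · exact Prod.ext hy1 hy2

lemma succAbove_val {n : ℕ} (p : Fin (n+1)) (y : Fin n) :
    ((p.succAbove y : Fin (n+1)):ℕ) = if (y:ℕ) < (p:ℕ) then (y:ℕ) else (y:ℕ)+1 := by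
  by_cases hc : (y:ℕ) < (p:ℕ)
  · rw [Fin.succAbove_of_castSucc_lt p y (by rw [Fin.lt_def]; simpa using hc), if_pos hc]
    simp
  · rw [Fin.succAbove_of_le_castSucc p y (by rw [Fin.le_def]; simp; omega), if_neg hc]
    simp

noncomputable def Fq (q : ℝ) (n : ℕ) : ℝ := ∑ π : Equiv.Perm (Fin n), q ^ pinv π

noncomputable def Tq (q : ℝ) (n k : ℕ) (v : ℕ → ℕ) : ℝ :=
  ∑ π : Equiv.Perm (Fin n),
    if (∀ i : Fin n, (i:ℕ) < k → ((π i : Fin n):ℕ) = v (i:ℕ)) then q ^ pinv π else 0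

lemma Fq_zero (q : ℝ) : Fq q 0 = 1 := by
  rw [Fq]
  rw [Finset.sum_eq_single_of_mem (1 : Equiv.Perm (Fin 0)) (Finset.mem_univ _)]
  · have : pinv (1 : Equiv.Perm (Fin 0)) = 0 := by
      rw [pinv]
      apply Finset.card_eq_zero.mpr
      apply Finset.filter_eq_empty_iff.mpr
      intro p _
      exact absurd p.1.2 (by omega)
    rw [this, pow_zero]
  · intro π _ hne
    exact absurd (Subsingleton.elim π 1) hne

lemma Fq_succ (q : ℝ) (n : ℕ) :
    Fq q (n+1) = (∑ x ∈ Finset.range (n+1), q ^ x) * Fq q n := by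
  have h := Fintype.sum_bijective
    (fun pe : Fin (n+1) × Equiv.Perm (Fin n) => insPerm pe.1 pe.2) insPerm_bijective
    (fun pe => q ^ pinv (insPerm pe.1 pe.2)) (fun π => q ^ pinv π) (fun pe => rfl)
  rw [Fq, ← h]
  rw [Fintype.sum_prod_type]
  have : ∀ p : Fin (n+1), ∑ e : Equiv.Perm (Fin n), q ^ pinv (insPerm p e)
      = q ^ (p:ℕ) * Fq q n := by
    intro p
    rw [Fq, Finset.mul_sum]
    apply Finset.sum_congr rfl
    intro e _
    rw [pinv_insPerm, pow_add]
  rw [Finset.sum_congr rfl (fun p _ => this p)]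
  rw [← Finset.sum_mul, Fin.sum_univ_eq_sum_range (fun x => q ^ x) (n+1)]

lemma Tq_zero (q : ℝ) (n : ℕ) (v : ℕ → ℕ) : Tq q n 0 v = Fq q n := by
  rw [Tq, Fq]
  apply Finset.sum_congr rfl
  intro π _
  rw [if_pos]
  intro i hi
  exact absurd hi (by omega)

lemma Tq_succ (q : ℝ) (n k : ℕ) (v : ℕ → ℕ) (hv0 : v 0 ≤ n)
    (hvne : ∀ i, 0 < i → i ≤ k → v i ≠ v 0) :
    Tq q (n+1) (k+1) v
      = q ^ (v 0) * Tq q n k (fun i => if v (i+1) < v 0 then v (i+1) else v (i+1) - 1) := by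
  classical
  have hle : v 0 < n + 1 := by omega
  have h := Fintype.sum_bijective
    (fun pe : Fin (n+1) × Equiv.Perm (Fin n) => insPerm pe.1 pe.2) insPerm_bijective
    (fun pe => if (∀ i : Fin (n+1), (i:ℕ) < k+1 →
        ((insPerm pe.1 pe.2 i : Fin (n+1)):ℕ) = v (i:ℕ)) then q ^ pinv (insPerm pe.1 pe.2) else 0)
    (fun π => if (∀ i : Fin (n+1), (i:ℕ) < k+1 → ((π i : Fin (n+1)):ℕ) = v (i:ℕ))
        then q ^ pinv π else 0)
    (fun pe => rfl)
  rw [Tq, ← h, Fintype.sum_prod_type]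
  rw [Finset.sum_eq_single_of_mem (⟨v 0, hle⟩ : Fin (n+1)) (Finset.mem_univ _)]
  · have key : ∀ e : Equiv.Perm (Fin n),
        (∀ i : Fin (n+1), (i:ℕ) < k+1 →
            ((insPerm (⟨v 0, hle⟩ : Fin (n+1)) e i : Fin (n+1)):ℕ) = v (i:ℕ))
          ↔ (∀ j : Fin n, (j:ℕ) < k →
            ((e j : Fin n):ℕ) = if v ((j:ℕ)+1) < v 0 then v ((j:ℕ)+1) else v ((j:ℕ)+1) - 1) := by
      intro e
      have hpv : ((⟨v 0, hle⟩ : Fin (n+1)):ℕ) = v 0 := rfl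
      constructor
      · intro hc j hj
        have hthis := hc j.succ (by simp [Fin.val_succ]; omega)
        rw [insPerm_succ, succAbove_val, hpv] at hthis
        simp only [Fin.val_succ] at hthis
        have hne := hvne ((j:ℕ)+1) (by omega) (by omega)
        split_ifs with hsp
        · split_ifs at hthis <;> omega
        · split_ifs at hthis <;> omega
      · intro hc i hi
        induction i using Fin.cases with
        | zero =>
            rw [insPerm_zero, hpv]
            rfl
        | succ j =>
            simp only [Fin.val_succ] at hi ⊢
            have hthis := hc j (by omega)
            rw [insPerm_succ, succAbove_val, hpv]
            have hne := hvne ((j:ℕ)+1) (by omega) (by omega)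
            split_ifs with hsp
            · split_ifs at hthis <;> omega
            · split_ifs at hthis <;> omega
    have hterm : ∀ e : Equiv.Perm (Fin n),
        (if (∀ i : Fin (n+1), (i:ℕ) < k+1 →
            ((insPerm (⟨v 0, hle⟩ : Fin (n+1)) e i : Fin (n+1)):ℕ) = v (i:ℕ))
          then q ^ pinv (insPerm (⟨v 0, hle⟩ : Fin (n+1)) e) else 0)
        = q ^ (v 0) * (if (∀ j : Fin n, (j:ℕ) < k →
            ((e j : Fin n):ℕ) = if v ((j:ℕ)+1) < v 0 then v ((j:ℕ)+1) else v ((j:ℕ)+1) - 1)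
            then q ^ pinv e else 0) := by
      intro e
      rw [if_congr (key e) rfl rfl, pinv_insPerm]
      by_cases hc : (∀ j : Fin n, (j:ℕ) < k →
          ((e j : Fin n):ℕ) = if v ((j:ℕ)+1) < v 0 then v ((j:ℕ)+1) else v ((j:ℕ)+1) - 1)
      · rw [if_pos hc, if_pos hc, pow_add]
      · rw [if_neg hc, if_neg hc, mul_zero]
    rw [Finset.sum_congr rfl (fun e _ => hterm e), ← Finset.mul_sum, Tq]
  · intro p' _ hne
    apply Finset.sum_eq_zero
    intro e _
    rw [if_neg]
    intro hc
    have hthis := hc 0 (by simp)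
    rw [show ((0 : Fin (n+1)):ℕ) = 0 from rfl, insPerm_zero] at hthis
    exact hne (Fin.ext hthis)

noncomputable def zeta (v : ℕ → ℕ) (i : ℕ) : ℕ :=
  ((Finset.range (v i)).filter fun x => ∀ l ∈ Finset.range i, v l ≠ x).card

lemma forall_range_succ' {P : ℕ → Prop} {i : ℕ} :
    (∀ l < i+1, P l) ↔ P 0 ∧ ∀ l < i, P (l+1) := by
  constructor
  · intro h
    exact ⟨h 0 (by omega), fun l hl => h (l+1) (by omega)⟩
  · rintro ⟨h0, hs⟩ l hl
    rcases Nat.eq_zero_or_pos l with rfl | hp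
    · exact h0
    · obtain ⟨l', rfl⟩ : ∃ l', l = l'+1 := ⟨l-1, by omega⟩
      exact hs l' (by omega)

lemma zeta_zero (v : ℕ → ℕ) : zeta v 0 = v 0 := by
  rw [zeta]
  rw [Finset.filter_true_of_mem (fun x _ => by intro l hl; simp at hl)]
  exact Finset.card_range _

lemma zeta_shift (v w : ℕ → ℕ) (i : ℕ)
    (hw : ∀ l, w l = if v (l+1) < v 0 then v (l+1) else v (l+1) - 1)
    (hne : ∀ l, l ≤ i → v (l+1) ≠ v 0) :
    zeta w i = zeta v (i+1) := by
  classical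
  rw [zeta, zeta]
  apply Finset.card_nbij' (i := fun y => if y < v 0 then y else y + 1)
    (j := fun x => if x < v 0 then x else x - 1)
  · intro y hy
    simp only [Finset.mem_coe, Finset.mem_filter, Finset.mem_range] at hy ⊢
    obtain ⟨hyr, hyc⟩ := hy
    rw [hw i] at hyr
    have hvi := hne i (le_refl i)
    constructor
    · split_ifs at hyr ⊢ <;> omega
    · rw [forall_range_succ']
      constructor
      · split_ifs <;> omega
      · intro l hl
        have hc := hyc l hl
        rw [hw l] at hc
        have hvl := hne l (by omega)
        intro heq
        split_ifs at hc heq <;> omega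
  · intro x hx
    simp only [Finset.mem_coe, Finset.mem_filter, Finset.mem_range] at hx ⊢
    obtain ⟨hxr, hxc⟩ := hx
    rw [forall_range_succ'] at hxc
    obtain ⟨h0, hrest⟩ := hxc
    have hvi := hne i (le_refl i)
    constructor
    · rw [hw i]
      split_ifs <;> omega
    · intro l hl
      rw [hw l]
      have hc := hrest l hl
      have hvl := hne l (by omega)
      intro heq
      split_ifs at heq <;> omega
  · intro y hy
    simp only [Finset.mem_coe, Finset.mem_filter, Finset.mem_range] at hy
    beta_reduce; split_ifs <;> omega
  · intro x hx
    simp only [Finset.mem_coe, Finset.mem_filter, Finset.mem_range] at hx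
    obtain ⟨hxr, hxc⟩ := hx
    rw [forall_range_succ'] at hxc
    have h0 := hxc.1
    beta_reduce; split_ifs <;> omega

lemma Tq_prefix (q : ℝ) : ∀ (k : ℕ) (v : ℕ → ℕ) (n : ℕ), k ≤ n →
    (∀ i, i < k → v i < n) →
    (∀ i j, i < k → j < k → v i = v j → i = j) →
    Tq q n k v = q ^ (∑ i ∈ Finset.range k, zeta v i) * Fq q (n - k) := by
  intro k
  induction k with
  | zero =>
      intro v n _ _ _
      rw [Tq_zero]
      simp
  | succ k ih =>
      intro v n hkn hvlt hvinj
      obtain ⟨n', rfl⟩ : ∃ n', n = n'+1 := ⟨n-1, by omega⟩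
      have hv0 : v 0 ≤ n' := by have := hvlt 0 (by omega); omega
      have hvne : ∀ i, 0 < i → i ≤ k → v i ≠ v 0 := by
        intro i hi hik heq
        have := hvinj i 0 (by omega) (by omega) heq
        omega
      rw [Tq_succ q n' k v hv0 hvne]
      set v' : ℕ → ℕ := fun i => if v (i+1) < v 0 then v (i+1) else v (i+1) - 1 with hv'def
      have hv'eq : ∀ l, v' l = if v (l+1) < v 0 then v (l+1) else v (l+1) - 1 :=
        fun l => rfl
      have hv'lt : ∀ i, i < k → v' i < n' := by
        intro i hi
        rw [hv'eq i]
        have h1 := hvlt (i+1) (by omega)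
        have h2 := hvne (i+1) (by omega) (by omega)
        split_ifs <;> omega
      have hv'inj : ∀ i j, i < k → j < k → v' i = v' j → i = j := by
        intro i j hi hj heq
        rw [hv'eq i, hv'eq j] at heq
        have hnei := hvne (i+1) (by omega) (by omega)
        have hnej := hvne (j+1) (by omega) (by omega)
        have : v (i+1) = v (j+1) := by split_ifs at heq <;> omega
        have := hvinj (i+1) (j+1) (by omega) (by omega) this
        omega
      rw [ih v' n' (by omega) hv'lt hv'inj]
      rw [show n' - k = n' + 1 - (k+1) from by omega]
      rw [← mul_assoc, ← pow_add]
      congr 2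
      rw [Finset.sum_range_succ' (fun i => zeta v i) k, zeta_zero]
      have : ∀ i ∈ Finset.range k, zeta v' i = zeta v (i+1) := by
        intro i hi
        apply zeta_shift v v' i hv'eq
        intro l hl
        exact hvne (l+1) (by omega) (by have := Finset.mem_range.mp hi; omega)
      rw [Finset.sum_congr rfl this]
      omega

/-- Weight of the `c → 0` degeneration: it is supported on configurations with the minimal
number `n` of type `c` vertices, with weight `a^{N₁+N₂} b^{N₃+N₄}`. -/
noncomputable def wt0 {n : ℕ} (a b : ℝ) (σ : Config n) : ℝ :=
  if Ncount σ 5 + Ncount σ 6 = n then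
    a ^ (Ncount σ 1 + Ncount σ 2) * b ^ (Ncount σ 3 + Ncount σ 4)
  else 0

/-- Probability of a DWBC configuration under the `c → 0` limit of the Gibbs measures. -/
noncomputable def gibbs0 (n : ℕ) (a b : ℝ) (σ : DWBC n) : ℝ :=
  wt0 a b σ.1 / ∑ σ' : DWBC n, wt0 a b σ'.1

/-- `xi m i` is the position of `m i` in the increasing enumeration of
`ℤ_{>0} ∖ {m 1, …, m (i−1)}`. -/
noncomputable def xi (m : ℕ → ℕ) (i : ℕ) : ℕ :=
  ((Finset.Icc 1 (m i)).filter fun x => ∀ l ∈ Finset.Ico 1 i, m l ≠ x).card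

noncomputable def rowC {n : ℕ} (c : Config n) (j : ℕ) : Finset ℕ :=
  if h : j ≤ n then
    (Finset.univ.filter fun x : Fin n => c.2 x ⟨j, Nat.lt_succ_of_le h⟩ = true).image
      fun x : Fin n => (x : ℕ) + 1
  else ∅

lemma rowFinset_eq_rowC {n : ℕ} (σ : DWBC n) (j : ℕ) : rowFinset σ j = rowC σ.1 j := rfl

lemma permConfig_injective {n : ℕ} : Function.Injective (permConfig (n := n)) := by
  intro π1 π2 he
  apply Equiv.ext
  intro j
  have hH : ∀ x : Fin (n+1), (permConfig π1).1 x j = (permConfig π2).1 x j :=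
    fun x => congrFun (congrFun (congrArg Prod.fst he) x) j
  have h1 : ((π1 j : Fin n):ℕ) ≤ ((π2 j : Fin n):ℕ) := by
    have hx := hH (π1 j).castSucc
    simp only [permConfig, Fin.coe_castSucc] at hx
    exact of_decide_eq_true (by rw [← hx]; exact decide_eq_true (le_refl _))
  have h2 : ((π2 j : Fin n):ℕ) ≤ ((π1 j : Fin n):ℕ) := by
    have hx := hH (π2 j).castSucc
    simp only [permConfig, Fin.coe_castSucc] at hx
    exact of_decide_eq_true (by rw [hx]; exact decide_eq_true (le_refl _))
  exact Fin.ext (by omega)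

lemma sum_dwbc {n : ℕ} (f : Config n → ℝ)
    (hf : ∀ σ : Config n, IsDWBC σ → Ncount σ 5 + Ncount σ 6 ≠ n → f σ = 0) :
    ∑ σ : DWBC n, f σ.1 = ∑ π : Equiv.Perm (Fin n), f (permConfig π) := by
  classical
  rw [← Finset.sum_filter_add_sum_filter_not Finset.univ
      (fun σ : DWBC n => Ncount σ.1 5 + Ncount σ.1 6 = n) (fun σ => f σ.1)]
  have hzero : ∑ σ ∈ Finset.filter
      (fun σ : DWBC n => ¬ (Ncount σ.1 5 + Ncount σ.1 6 = n)) Finset.univ, f σ.1 = 0 :=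
    Finset.sum_eq_zero (fun σ hσ => by
      simp only [Finset.mem_filter] at hσ
      exact hf σ.1 σ.2 hσ.2)
  rw [hzero, add_zero]
  refine Finset.sum_bij'
    (i := fun σ hσ => Classical.choose (exists_perm σ (Finset.mem_filter.mp hσ).2))
    (j := fun π _ => (⟨permConfig π, permConfig_isDWBC π⟩ : DWBC n))
    ?_ ?_ ?_ ?_ ?_
  · intro σ hσ; exact Finset.mem_univ _
  · intro π _
    simp [Ncount5_permConfig, Ncount6_permConfig]
  · intro σ hσ
    exact Subtype.ext (Classical.choose_spec (exists_perm σ (Finset.mem_filter.mp hσ).2))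
  · intro π hπ
    apply permConfig_injective
    exact Classical.choose_spec (exists_perm (⟨permConfig π, permConfig_isDWBC π⟩ : DWBC n)
      (by simp [Ncount5_permConfig, Ncount6_permConfig]))
  · intro σ hσ
    rw [Classical.choose_spec (exists_perm σ (Finset.mem_filter.mp hσ).2)]

lemma wt0_permConfig {n : ℕ} (a b : ℝ) (ha : a ≠ 0) (π : Equiv.Perm (Fin n)) :
    wt0 a b (permConfig π)
      = (a^2) ^ ((Finset.univ.filter fun p : Fin n × Fin n => p.1 < p.2).card)
        * (b^2/a^2) ^ pinv π := by
  rw [wt0, if_pos (by simp [Ncount5_permConfig, Ncount6_permConfig])]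
  rw [Ncount1_permConfig, Ncount2_permConfig, Ncount3_permConfig, Ncount4_permConfig]
  rw [← pinv_add_pninv π]
  rw [show pninv π + pninv π = 2 * pninv π from by ring,
      show pinv π + pinv π = 2 * pinv π from by ring]
  rw [div_pow, ← pow_mul, ← pow_mul, ← pow_mul,
      show 2 * (pinv π + pninv π) = 2 * pinv π + 2 * pninv π from by ring, pow_add]
  have hA : a ^ (2 * pinv π) ≠ 0 := pow_ne_zero _ ha
  field_simp

lemma rowC_permConfig {n : ℕ} (π : Equiv.Perm (Fin n))
    (j : ℕ) (hj : j ≤ n) :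
    rowC (permConfig π) j
      = (Finset.univ.filter fun y : Fin n => (y:ℕ) < j).image
          (fun y => ((π y : Fin n):ℕ) + 1) := by
  rw [rowC, dif_pos hj]
  ext z
  simp only [Finset.mem_image, Finset.mem_filter, Finset.mem_univ, true_and]
  constructor
  · rintro ⟨x, hx, rfl⟩
    have hlt : ((π.symm x : Fin n):ℕ) < j := of_decide_eq_true hx
    exact ⟨π.symm x, hlt, by rw [Equiv.apply_symm_apply]⟩
  · rintro ⟨y, hy, rfl⟩
    refine ⟨π y, ?_, rfl⟩
    apply decide_eq_true
    show ((π.symm (π y) : Fin n):ℕ) < j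
    rw [Equiv.symm_apply_apply]
    exact hy

lemma event_iff {n k : ℕ} (m : ℕ → ℕ)
    (hpos : ∀ i, 1 ≤ i → i ≤ k → 1 ≤ m i)
    (hinj : ∀ i j, 1 ≤ i → i ≤ k → 1 ≤ j → j ≤ k → m i = m j → i = j)
    (hkn : k ≤ n) (hmn : ∀ i, 1 ≤ i → i ≤ k → m i ≤ n)
    (π : Equiv.Perm (Fin n)) :
    (∀ j, 1 ≤ j → j ≤ k →
        rowC (permConfig π) j = (Finset.Icc 1 j).image m)
      ↔ (∀ i : Fin n, (i:ℕ) < k → ((π i : Fin n):ℕ) = m ((i:ℕ)+1) - 1) := by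
  constructor
  · intro hE i hik
    have h1 := hE ((i:ℕ)+1) (by omega) (by omega)
    rw [rowC_permConfig π _ (by omega)] at h1
    have hz : ((π i : Fin n):ℕ)+1 ∈ (Finset.Icc 1 ((i:ℕ)+1)).image m := by
      rw [← h1]
      exact Finset.mem_image.mpr ⟨i,
        Finset.mem_filter.mpr ⟨Finset.mem_univ _, by omega⟩, rfl⟩
    obtain ⟨l, hl, hlz⟩ := Finset.mem_image.mp hz
    rw [Finset.mem_Icc] at hl
    rcases Nat.lt_or_ge l ((i:ℕ)+1) with hli | hli
    · -- l ≤ i, derive contradiction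
      exfalso
      have hi1 : 1 ≤ (i:ℕ) := by omega
      have h2 := hE (i:ℕ) (by omega) (by omega)
      rw [rowC_permConfig π _ (by omega)] at h2
      have hz2 : ((π i : Fin n):ℕ)+1
          ∈ (Finset.univ.filter fun y : Fin n => (y:ℕ) < (i:ℕ)).image
              (fun y => ((π y : Fin n):ℕ) + 1) := by
        rw [h2]
        exact Finset.mem_image.mpr ⟨l, Finset.mem_Icc.mpr ⟨hl.1, by omega⟩, hlz⟩
      obtain ⟨y, hy, hyz⟩ := Finset.mem_image.mp hz2
      simp only [Finset.mem_filter, Finset.mem_univ, true_and] at hy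
      have hyi : π y = π i := Fin.ext (by omega)
      have := π.injective hyi
      rw [this] at hy
      omega
    · have hl1 : l = (i:ℕ)+1 := by omega
      rw [hl1] at hlz
      have hm1 := hpos ((i:ℕ)+1) (by omega) (by omega)
      omega
  · intro hP j h1j hjk
    rw [rowC_permConfig π _ (by omega)]
    ext z
    simp only [Finset.mem_image, Finset.mem_filter, Finset.mem_univ, true_and,
      Finset.mem_Icc]
    constructor
    · rintro ⟨y, hy, rfl⟩
      refine ⟨(y:ℕ)+1, ⟨by omega, by omega⟩, ?_⟩
      have hpy := hP y (by omega)
      have hm := hpos ((y:ℕ)+1) (by omega) (by omega)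
      omega
    · rintro ⟨l, hl, rfl⟩
      have hln : l - 1 < n := by omega
      refine ⟨(⟨l-1, hln⟩ : Fin n), ?_, ?_⟩
      · show l - 1 < j
        omega
      · have hpy := hP ⟨l-1, hln⟩ (by show l - 1 < k; omega)
        have hm := hpos l (by omega) (by omega)
        have hl1 : (l-1)+1 = l := by omega
        rw [show ((⟨l-1, hln⟩ : Fin n):ℕ) = l - 1 from rfl, hl1] at hpy
        omega

lemma xi_eq_zeta {k : ℕ} (m : ℕ → ℕ) (w : ℕ → ℕ)
    (hw : ∀ l, w l = m (l+1) - 1)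
    (hpos : ∀ i, 1 ≤ i → i ≤ k → 1 ≤ m i)
    (hinj : ∀ i j, 1 ≤ i → i ≤ k → 1 ≤ j → j ≤ k → m i = m j → i = j)
    (i : ℕ) (hik : i < k) :
    xi m (i+1) = zeta w i + 1 := by
  classical
  rw [xi, zeta, hw i]
  have hset : (Finset.Icc 1 (m (i+1))).filter (fun x => ∀ l ∈ Finset.Ico 1 (i+1), m l ≠ x)
      = insert (m (i+1)) (((Finset.range (m (i+1) - 1)).filter
          (fun x => ∀ l ∈ Finset.range i, w l ≠ x)).image (fun y => y+1)) := by
    ext z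
    simp only [Finset.mem_insert, Finset.mem_image, Finset.mem_filter, Finset.mem_Icc,
      Finset.mem_Ico, Finset.mem_range]
    constructor
    · rintro ⟨⟨hz1, hz2⟩, hzc⟩
      by_cases hze : z = m (i+1)
      · exact Or.inl hze
      · refine Or.inr ⟨z-1, ⟨by omega, ?_⟩, by omega⟩
        intro l hl
        rw [hw l]
        have hc := hzc (l+1) ⟨by omega, by omega⟩
        have hm := hpos (l+1) (by omega) (by omega)
        omega
    · rintro (rfl | ⟨y, ⟨hy1, hy2⟩, rfl⟩)
      · have hm := hpos (i+1) (by omega) (by omega)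
        refine ⟨⟨by omega, le_refl _⟩, ?_⟩
        intro l hl heq
        have := hinj l (i+1) (by omega) (by omega) (by omega) (by omega) heq
        omega
      · refine ⟨⟨by omega, by omega⟩, ?_⟩
        intro l hl heq
        have hm := hpos l (by omega) (by omega)
        have hc := hy2 (l-1) (by omega)
        rw [hw (l-1), show (l-1)+1 = l from by omega] at hc
        omega
  rw [hset]
  rw [Finset.card_insert_of_notMem (by
    intro hmem
    obtain ⟨y, hy, hyz⟩ := Finset.mem_image.mp hmem
    simp only [Finset.mem_filter, Finset.mem_range] at hy
    omega)]
  rw [Finset.card_image_of_injective _ (add_left_injective 1)]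

lemma Fq_prod (q : ℝ) (n : ℕ) :
    Fq q n = ∏ i ∈ Finset.range n, (∑ x ∈ Finset.range (i+1), q ^ x) := by
  induction n with
  | zero => rw [Fq_zero]; simp
  | succ n ih =>
      rw [Fq_succ, ih, Finset.prod_range_succ, mul_comm]

lemma Fq_pos {q : ℝ} (hq : 0 < q) (n : ℕ) : 0 < Fq q n := by
  rw [Fq_prod]
  apply Finset.prod_pos
  intro i _
  apply Finset.sum_pos (fun x _ => pow_pos hq x) Finset.nonempty_range_add_one

lemma ratio_eq {q : ℝ} (hq : 0 < q) {k n : ℕ} (hkn : k ≤ n) :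
    Fq q (n-k) / Fq q n
      = ∏ j ∈ Finset.range k, (∑ x ∈ Finset.range (n-k+j+1), q ^ x)⁻¹ := by
  have h1 : Fq q n = Fq q (n-k) * ∏ i ∈ Finset.Ico (n-k) n,
      (∑ x ∈ Finset.range (i+1), q ^ x) := by
    rw [Fq_prod q n, Fq_prod q (n-k),
      ← Finset.prod_range_mul_prod_Ico _ (by omega : n-k ≤ n)]
  rw [h1, div_mul_cancel_left₀ (Fq_pos hq (n-k)).ne']
  rw [← Finset.prod_inv_distrib]
  rw [Finset.prod_Ico_eq_prod_range]
  rw [show n - (n-k) = k from by omega]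

lemma tendsto_ratio {q : ℝ} (hq0 : 0 < q) (hq1 : q < 1) (k : ℕ) :
    Filter.Tendsto (fun n : ℕ => Fq q (n-k) / Fq q n) Filter.atTop (nhds ((1-q)^k)) := by
  have h1q : (1:ℝ) - q ≠ 0 := sub_ne_zero.mpr (ne_of_gt (by linarith))
  have hev : (fun n : ℕ => ∏ j ∈ Finset.range k,
      (∑ x ∈ Finset.range (n-k+j+1), q ^ x)⁻¹) =ᶠ[Filter.atTop]
      (fun n : ℕ => Fq q (n-k) / Fq q n) := by
    rw [Filter.eventuallyEq_iff_exists_mem]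
    exact ⟨{n | k ≤ n}, Filter.mem_atTop k, fun n hn => (ratio_eq hq0 hn).symm⟩
  apply Filter.Tendsto.congr' hev
  rw [show ((1-q):ℝ)^k = ∏ _j ∈ Finset.range k, (1-q) from by
    rw [Finset.prod_const, Finset.card_range]]
  apply tendsto_finset_prod
  intro j _
  have hgeom : ∀ n : ℕ, (∑ x ∈ Finset.range (n-k+j+1), q ^ x)
      = (q ^ (n-k+j+1) - 1)/(q - 1) := fun n => geom_sum_eq (ne_of_lt hq1) _
  have hcomp : (fun n : ℕ => n - k + j + 1)
      = (fun n : ℕ => n + (j+1)) ∘ (fun n : ℕ => n - k) := by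
    funext n
    simp only [Function.comp_apply]
    omega
  have hpow : Filter.Tendsto (fun n : ℕ => q ^ (n-k+j+1)) Filter.atTop (nhds 0) := by
    apply Filter.Tendsto.comp
      (tendsto_pow_atTop_nhds_zero_of_lt_one (le_of_lt hq0) hq1)
    rw [hcomp]
    exact (Filter.tendsto_add_atTop_nat (j+1)).comp (Filter.tendsto_sub_atTop_nat k)
  have htend : Filter.Tendsto (fun n : ℕ => (q ^ (n-k+j+1) - 1)/(q-1))
      Filter.atTop (nhds ((0 - 1)/(q-1))) := (hpow.sub_const 1).div_const (q-1)
  have hq1' : (q:ℝ) - 1 ≠ 0 := sub_ne_zero.mpr (ne_of_lt hq1)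
  have hlim : ((0:ℝ) - 1)/(q-1) = (1-q)⁻¹ := by
    rw [inv_eq_one_div, div_eq_div_iff hq1' h1q]
    ring
  rw [hlim] at htend
  have h2 := (htend.congr (fun n => (hgeom n).symm)).inv₀ (inv_ne_zero h1q)
  rw [inv_inv] at h2
  exact h2

/-- **`q`-exchangeable (Mallows) limit of the six-vertex model with `c = 0`.**
For `a > b > 0` and `q = b²/a²`, under the `c → 0` Gibbs measure on DWBC configurations of
the `n × n` square, for every injective tuple `(m 1, …, m k)` of positive integers the
probability that, for each `1 ≤ j ≤ k`, the `j`-th row of the monotone triangle equals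
`{m 1, …, m j}` converges, as `n → ∞`, to `∏_{i=1}^k (1−q) q^{ξ_i − 1}`, with `ξ_i` the
position of `m i` in the increasing enumeration of `ℤ_{>0} ∖ {m 1, …, m (i−1)}`. -/
theorem mallows_limit (a b : ℝ) (hb : 0 < b) (hab : b < a)
    (k : ℕ) (hk : 1 ≤ k) (m : ℕ → ℕ)
    (hpos : ∀ i, 1 ≤ i → i ≤ k → 1 ≤ m i)
    (hinj : ∀ i j, 1 ≤ i → i ≤ k → 1 ≤ j → j ≤ k → m i = m j → i = j) :
    Tendsto
      (fun n : ℕ => ∑ σ : DWBC n,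
        if ∀ j, 1 ≤ j → j ≤ k → rowFinset σ j = (Finset.Icc 1 j).image m
        then gibbs0 n a b σ else 0)
      atTop
      (𝓝 (∏ i ∈ Finset.Icc 1 k,
        (1 - b ^ 2 / a ^ 2) * (b ^ 2 / a ^ 2) ^ (xi m i - 1))) := by
  classical
  have ha : 0 < a := lt_trans hb hab
  have ha' : a ≠ 0 := ne_of_gt ha
  have hq0 : 0 < b^2/a^2 := div_pos (pow_pos hb 2) (pow_pos ha 2)
  have hq1 : b^2/a^2 < 1 := by
    rw [div_lt_one (pow_pos ha 2)]
    nlinarith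
  set q : ℝ := b^2/a^2 with hqdef
  set v : ℕ → ℕ := fun i => m (i+1) - 1 with hvdef
  have hveq : ∀ l, v l = m (l+1) - 1 := fun l => rfl
  set Z : ℕ := ∑ i ∈ Finset.range k, zeta v i with hZdef
  have hval : (∏ i ∈ Finset.Icc 1 k, (1 - q) * q ^ (xi m i - 1)) = q ^ Z * (1-q)^k := by
    rw [Finset.prod_mul_distrib, Finset.prod_const, Nat.card_Icc,
        Finset.prod_pow_eq_pow_sum]
    have hsum : ∑ i ∈ Finset.Icc 1 k, (xi m i - 1) = Z := by
      rw [hZdef]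
      refine Finset.sum_bij' (i := fun l _ => l - 1) (j := fun l _ => l + 1)
        ?_ ?_ ?_ ?_ ?_
      · intro l hl
        simp only [Finset.mem_Icc] at hl
        simp only [Finset.mem_range]
        omega
      · intro l hl
        simp only [Finset.mem_range] at hl
        simp only [Finset.mem_Icc]
        omega
      · intro l hl
        simp only [Finset.mem_Icc] at hl
        show l - 1 + 1 = l
        omega
      · intro l hl
        show l + 1 - 1 = l
        omega
      · intro l hl
        simp only [Finset.mem_Icc] at hl
        show xi m l - 1 = zeta v (l - 1)
        have hx := xi_eq_zeta m v hveq hpos hinj (l-1) (by omega)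
        rw [show (l-1)+1 = l from by omega] at hx
        omega
    rw [hsum, show k + 1 - 1 = k from by omega]
    ring
  rw [show (∏ i ∈ Finset.Icc 1 k, (1 - q) * q ^ (xi m i - 1)) = q ^ Z * (1-q)^k
    from hval]
  have hmain : ∀ n : ℕ, (k + ∑ i ∈ Finset.Icc 1 k, m i) ≤ n →
      (∑ σ : DWBC n, if (∀ j, 1 ≤ j → j ≤ k →
          rowFinset σ j = (Finset.Icc 1 j).image m) then gibbs0 n a b σ else 0)
        = q ^ Z * (Fq q (n-k) / Fq q n) := by
    intro n hn
    have hkn : k ≤ n := le_trans (Nat.le_add_right _ _) hn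
    have hmn : ∀ i, 1 ≤ i → i ≤ k → m i ≤ n := by
      intro i h1 h2
      have h3 : m i ≤ ∑ i ∈ Finset.Icc 1 k, m i :=
        Finset.single_le_sum (fun _ _ => Nat.zero_le _) (Finset.mem_Icc.mpr ⟨h1, h2⟩)
      omega
    have hvlt : ∀ i, i < k → v i < n := by
      intro i hi
      rw [hveq]
      have h1 := hmn (i+1) (by omega) (by omega)
      have h2 := hpos (i+1) (by omega) (by omega)
      omega
    have hvinj : ∀ i j, i < k → j < k → v i = v j → i = j := by
      intro i j hi hj heq
      rw [hveq i, hveq j] at heq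
      have h1 := hpos (i+1) (by omega) (by omega)
      have h2 := hpos (j+1) (by omega) (by omega)
      have h3 : m (i+1) = m (j+1) := by omega
      have := hinj (i+1) (j+1) (by omega) (by omega) (by omega) (by omega) h3
      omega
    set Cn := (Finset.univ.filter fun p : Fin n × Fin n => p.1 < p.2).card with hCn
    set D := ∑ σ' : DWBC n, wt0 a b σ'.1 with hDdef
    have hDval : D = (a^2)^Cn * Fq q n := by
      rw [hDdef, sum_dwbc (wt0 a b) (fun c _ hc => if_neg hc), Fq, Finset.mul_sum]
      exact Finset.sum_congr rfl fun π _ => wt0_permConfig a b ha' π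
    have hsummand : ∀ σ : DWBC n,
        (if (∀ j, 1 ≤ j → j ≤ k → rowFinset σ j = (Finset.Icc 1 j).image m)
          then gibbs0 n a b σ else 0)
        = (if (∀ j, 1 ≤ j → j ≤ k → rowFinset σ j = (Finset.Icc 1 j).image m)
          then wt0 a b σ.1 else 0) / D := by
      intro σ
      rw [gibbs0, ← hDdef]
      split_ifs
      · rfl
      · rw [zero_div]
    rw [Finset.sum_congr rfl (fun σ _ => hsummand σ), ← Finset.sum_div]
    have hnum : (∑ σ : DWBC n, if (∀ j, 1 ≤ j → j ≤ k →
          rowFinset σ j = (Finset.Icc 1 j).image m) then wt0 a b σ.1 else 0)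
        = (a^2)^Cn * Tq q n k v := by
      have hsame : ∀ σ : DWBC n,
          (if (∀ j, 1 ≤ j → j ≤ k → rowFinset σ j = (Finset.Icc 1 j).image m)
            then wt0 a b σ.1 else 0)
          = (fun c : Config n => if (∀ j, 1 ≤ j → j ≤ k →
              rowC c j = (Finset.Icc 1 j).image m) then wt0 a b c else 0) σ.1 := by
        intro σ
        show _ = if (∀ j, 1 ≤ j → j ≤ k → rowC σ.1 j = (Finset.Icc 1 j).image m)
            then wt0 a b σ.1 else 0
        by_cases hcd : ∀ j, 1 ≤ j → j ≤ k → rowFinset σ j = (Finset.Icc 1 j).image m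
        · rw [if_pos hcd, if_pos (show ∀ j, 1 ≤ j → j ≤ k →
            rowC σ.1 j = (Finset.Icc 1 j).image m from hcd)]
        · rw [if_neg hcd, if_neg (show ¬ (∀ j, 1 ≤ j → j ≤ k →
            rowC σ.1 j = (Finset.Icc 1 j).image m) from hcd)]
      rw [Finset.sum_congr rfl (fun σ _ => hsame σ)]
      rw [sum_dwbc (fun c : Config n => if (∀ j, 1 ≤ j → j ≤ k →
            rowC c j = (Finset.Icc 1 j).image m) then wt0 a b c else 0)
          (fun c hc hne => by
            show (if (∀ j, 1 ≤ j → j ≤ k →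
              rowC c j = (Finset.Icc 1 j).image m) then wt0 a b c else 0) = 0
            split_ifs with hcond
            · exact if_neg hne
            · rfl)]
      rw [Tq, Finset.mul_sum]
      apply Finset.sum_congr rfl
      intro π _
      show (if (∀ j, 1 ≤ j → j ≤ k → rowC (permConfig π) j = (Finset.Icc 1 j).image m)
          then wt0 a b (permConfig π) else 0) = _
      by_cases hc : (∀ i : Fin n, (i:ℕ) < k → ((π i : Fin n):ℕ) = v (i:ℕ))
      · rw [if_pos ((event_iff m hpos hinj hkn hmn π).mpr hc), if_pos hc]
        exact wt0_permConfig a b ha' π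
      · rw [if_neg (fun hE => hc ((event_iff m hpos hinj hkn hmn π).mp hE)), if_neg hc,
          mul_zero]
    rw [hnum, hDval]
    rw [Tq_prefix q k v n hkn hvlt hvinj, ← hZdef]
    rw [mul_div_mul_left _ _ (pow_ne_zero Cn (pow_ne_zero 2 ha'))]
    rw [mul_div_assoc]
  have htend := (tendsto_ratio hq0 hq1 k).const_mul (q ^ Z)
  apply Filter.Tendsto.congr' _ htend
  rw [Filter.eventuallyEq_iff_exists_mem]
  exact ⟨{n | (k + ∑ i ∈ Finset.Icc 1 k, m i) ≤ n}, Filter.mem_atTop _,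
    fun n hn => (hmain n hn).symm⟩

end SixV
end

section
/- Laplace-transform identity for the disordered-phase weight: for all real t,γ with |t|<γ<π/2, the integral ∫_{−∞}^{∞} e^{tx} · sinh(x(π−2γ)/2)/sinh(πx/2) dx converges absolutely (the integrand being extended by its continuous value (π−2γ)/π at x=0) and equals sin(2γ)/(sin(γ−t)·sin(γ+t)). -/
open MeasureTheory Real Set Filter Topology

noncomputable def psi (x : ℝ) : ℝ := deriv Real.Gamma x / Real.Gamma x


lemma beta_real {a b : ℝ} (ha : 0 < a) (hb : 0 < b) :
    IntegrableOn (fun x : ℝ => x ^ (a-1) * (1-x) ^ (b-1)) (Ioo 0 1) ∧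
    ∫ x in Ioo (0:ℝ) 1, x ^ (a-1) * (1-x) ^ (b-1) =
      Real.Gamma a * Real.Gamma b / Real.Gamma (a+b) := by
  have ha' : 0 < (a:ℂ).re := by simpa using ha
  have hb' : 0 < (b:ℂ).re := by simpa using hb
  have hconv := Complex.betaIntegral_convergent ha' hb'
  have hcongr : ∀ x ∈ Ioc (0:ℝ) 1,
      ((x:ℂ) ^ ((a:ℂ)-1) * (1-(x:ℂ)) ^ ((b:ℂ)-1)) = ((x ^ (a-1) * (1-x) ^ (b-1) : ℝ) : ℂ) := by
    intro x hx
    have h1 : (x:ℂ) ^ ((a:ℂ)-1) = ((x ^ (a-1) : ℝ) : ℂ) := by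
      rw [Complex.ofReal_cpow hx.1.le]; push_cast; ring_nf
    have h2 : (1-(x:ℂ)) ^ ((b:ℂ)-1) = (((1-x) ^ (b-1) : ℝ) : ℂ) := by
      rw [show (1-(x:ℂ)) = (((1-x : ℝ)):ℂ) by push_cast; ring,
        Complex.ofReal_cpow (by linarith [hx.2])]
      push_cast; ring_nf
    rw [h1, h2, ← Complex.ofReal_mul]
  have hIoc : IntegrableOn (fun x : ℝ => x ^ (a-1) * (1-x) ^ (b-1)) (Ioc 0 1) := by
    have h0 : IntegrableOn (fun x : ℝ => (x:ℂ) ^ ((a:ℂ)-1) * (1-(x:ℂ)) ^ ((b:ℂ)-1)) (Ioc 0 1) :=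
      hconv.1
    have h1 := h0.congr_fun hcongr measurableSet_Ioc
    have h2 : IntegrableOn (fun x : ℝ => ((x ^ (a-1) * (1-x) ^ (b-1) : ℝ) : ℂ).re) (Ioc 0 1) :=
      h1.re
    exact h2.congr_fun (fun x _ => by simp) measurableSet_Ioc
  have hIoo := hIoc.mono_set Ioo_subset_Ioc_self
  refine ⟨hIoo, ?_⟩
  -- evaluate
  have hval : Complex.betaIntegral a b =
      ((Real.Gamma a * Real.Gamma b / Real.Gamma (a+b) : ℝ) : ℂ) := by
    have h := Complex.Gamma_mul_Gamma_eq_betaIntegral ha' hb'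
    rw [← Complex.ofReal_add, Complex.Gamma_ofReal] at h
    have hΓ : ((Real.Gamma (a+b) : ℝ) : ℂ) ≠ 0 := by
      exact_mod_cast (Real.Gamma_pos_of_pos (by linarith : (0:ℝ) < a+b)).ne'
    rw [Complex.ofReal_div, Complex.ofReal_mul, eq_div_iff hΓ]
    rw [Complex.Gamma_ofReal, Complex.Gamma_ofReal] at h
    linear_combination -h
  have hbeta : Complex.betaIntegral a b =
      ((∫ x in Ioc (0:ℝ) 1, x ^ (a-1) * (1-x) ^ (b-1) : ℝ) : ℂ) := by
    rw [Complex.betaIntegral, intervalIntegral.integral_of_le (by norm_num : (0:ℝ) ≤ 1)]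
    rw [setIntegral_congr_fun measurableSet_Ioc hcongr]
    exact integral_ofReal
  rw [← integral_Ioc_eq_integral_Ioo]
  have := hbeta.symm.trans hval
  exact_mod_cast this

-- MVT bound
lemma mvt_bound {A B : ℝ} (hA : 0 < A) (hB : 0 < B) :
    ∀ v ∈ Ico (1/2:ℝ) 1, |v ^ (B-1) - v ^ (A-1)| ≤ (4*(|B-1|+|A-1|)) * (1-v) := by
  intro v hv
  set K := 4*(|B-1|+|A-1|) with hK
  have hcv : Convex ℝ (Icc (1/2:ℝ) 1) := convex_Icc _ _
  have hderiv : ∀ x ∈ Icc (1/2:ℝ) 1, HasDerivWithinAt (fun y : ℝ => y ^ (B-1) - y ^ (A-1))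
      ((B-1) * x ^ (B-1-1) - (A-1) * x ^ (A-1-1)) (Icc (1/2:ℝ) 1) x := by
    intro x hx
    have hx0 : x ≠ 0 := by intro h; rw [h] at hx; norm_num at hx
    exact ((Real.hasDerivAt_rpow_const (Or.inl hx0)).sub
      (Real.hasDerivAt_rpow_const (Or.inl hx0))).hasDerivWithinAt
  have hbd : ∀ x ∈ Icc (1/2:ℝ) 1, ‖(B-1) * x ^ (B-1-1) - (A-1) * x ^ (A-1-1)‖ ≤ K := by
    intro x hx
    have hx0 : (0:ℝ) < x := by linarith [hx.1]
    have hpow : ∀ C : ℝ, 0 < C → x ^ (C-1-1) ≤ 4 := by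
      intro C hC
      have h1 : x ^ (C-1-1) ≤ x ^ (-2:ℝ) :=
        Real.rpow_le_rpow_of_exponent_ge hx0 hx.2 (by linarith)
      have h2 : x ^ (-2:ℝ) = (x^2)⁻¹ := by
        rw [Real.rpow_neg hx0.le, Real.rpow_two]
      have h3 : (1/4:ℝ) ≤ x^2 := by nlinarith [hx.1]
      rw [h2] at h1
      calc x ^ (C-1-1) ≤ (x^2)⁻¹ := h1
        _ ≤ 4 := by rw [inv_le_comm₀ (by nlinarith [hx.1]) (by norm_num)]; linarith
    calc ‖(B-1) * x ^ (B-1-1) - (A-1) * x ^ (A-1-1)‖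
        ≤ |B-1| * x ^ (B-1-1) + |A-1| * x ^ (A-1-1) := by
          rw [Real.norm_eq_abs]
          refine (abs_sub _ _).trans ?_
          rw [abs_mul, abs_mul, abs_of_nonneg (Real.rpow_nonneg hx0.le _),
            abs_of_nonneg (Real.rpow_nonneg hx0.le _)]
      _ ≤ |B-1| * 4 + |A-1| * 4 := by
          gcongr
          · exact hpow B hB
          · exact hpow A hA
      _ = K := by rw [hK]; ring
  have := hcv.norm_image_sub_le_of_norm_hasDerivWithin_le hderiv hbd
    (mem_Icc.mpr ⟨by norm_num, le_refl 1⟩) (mem_Icc.mpr ⟨hv.1, hv.2.le⟩)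
  simpa [Real.norm_eq_abs, one_rpow, abs_of_nonpos (by linarith [hv.2] : v - 1 ≤ 0)] using this

lemma dom_integrable {A B : ℝ} (hA : 0 < A) (hB : 0 < B) :
    IntegrableOn (fun v : ℝ => if v ≤ 1/2 then 2*(v ^ (B-1) + v ^ (A-1))
      else 4*(|B-1|+|A-1|)) (Ioo 0 1) := by
  set K := 4*(|B-1|+|A-1|)
  set g : ℝ → ℝ := fun v => if v ≤ 1/2 then 2*(v ^ (B-1) + v ^ (A-1)) else K with hg
  have h1 : IntegrableOn g (Ioc 0 (1/2:ℝ)) := by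
    have hB' : IntegrableOn (fun v : ℝ => v ^ (B-1)) (Ioc 0 (1/2:ℝ)) := by
      have := intervalIntegral.intervalIntegrable_rpow' (a := 0) (b := 1/2)
        (r := B-1) (by linarith)
      rwa [intervalIntegrable_iff_integrableOn_Ioc_of_le (by norm_num)] at this
    have hA' : IntegrableOn (fun v : ℝ => v ^ (A-1)) (Ioc 0 (1/2:ℝ)) := by
      have := intervalIntegral.intervalIntegrable_rpow' (a := 0) (b := 1/2)
        (r := A-1) (by linarith)
      rwa [intervalIntegrable_iff_integrableOn_Ioc_of_le (by norm_num)] at this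
    have hint : IntegrableOn (fun v : ℝ => 2*(v ^ (B-1) + v ^ (A-1))) (Ioc 0 (1/2:ℝ)) :=
      (hB'.add hA').const_mul 2
    exact hint.congr_fun (fun v hv => by rw [hg]; exact (if_pos hv.2).symm) measurableSet_Ioc
  have h2 : IntegrableOn g (Ioc (1/2:ℝ) 1) := by
    have hint : IntegrableOn (fun _ : ℝ => K) (Ioc (1/2:ℝ) 1) :=
      integrableOn_const measure_Ioc_lt_top.ne
    exact hint.congr_fun (fun v hv => by rw [hg]; exact (if_neg (not_le.mpr hv.1)).symm) measurableSet_Ioc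
  have := h1.union h2
  rw [Set.Ioc_union_Ioc_eq_Ioc (by norm_num) (by norm_num)] at this
  exact this.mono_set Ioo_subset_Ioc_self

lemma mvt_bound' {A B : ℝ} (hA : 0 < A) (hB : 0 < B)
    (hm : ∀ v ∈ Ico (1/2:ℝ) 1, |v ^ (B-1) - v ^ (A-1)| ≤ (4*(|B-1|+|A-1|)) * (1-v)) :
    ∀ ε : ℝ, 0 ≤ ε → ε ≤ 1 → ∀ v ∈ Ioo (0:ℝ) 1,
      |(v ^ (B-1) - v ^ (A-1)) * (1-v) ^ (ε-1)| ≤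
        (if v ≤ 1/2 then 2*(v ^ (B-1) + v ^ (A-1)) else 4*(|B-1|+|A-1|)) := by
  intro ε hε0 hε1 v hv
  obtain ⟨hv0, hv1⟩ := hv
  have h1v : (0:ℝ) < 1 - v := by linarith
  rw [abs_mul, abs_of_nonneg (Real.rpow_nonneg h1v.le _)]
  by_cases hc : v ≤ 1/2
  · rw [if_pos hc]
    have hb1 : |v ^ (B-1) - v ^ (A-1)| ≤ v ^ (B-1) + v ^ (A-1) := by
      refine (abs_sub _ _).trans ?_
      rw [abs_of_nonneg (Real.rpow_nonneg hv0.le _), abs_of_nonneg (Real.rpow_nonneg hv0.le _)]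
    have hb2 : (1-v) ^ (ε-1) ≤ 2 := by
      have e1 : (1-v) ^ (ε-1) = ((1-v) ^ (1-ε))⁻¹ := by
        rw [← Real.rpow_neg h1v.le]; ring_nf
      have e2 : (1/2:ℝ) ≤ (1-v) ^ (1-ε) := by
        calc (1/2:ℝ) = (1/2) ^ (1:ℝ) := by rw [Real.rpow_one]
          _ ≤ (1/2) ^ (1-ε) := Real.rpow_le_rpow_of_exponent_ge (by norm_num) (by norm_num)
              (by linarith)
          _ ≤ (1-v) ^ (1-ε) := Real.rpow_le_rpow (by norm_num) (by linarith) (by linarith)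
      rw [e1, inv_le_comm₀ (by positivity) (by norm_num)]
      linarith
    calc |v ^ (B-1) - v ^ (A-1)| * (1-v) ^ (ε-1)
        ≤ (v ^ (B-1) + v ^ (A-1)) * 2 := by
          refine mul_le_mul hb1 hb2 (Real.rpow_nonneg h1v.le _) ?_
          positivity
      _ = 2*(v ^ (B-1) + v ^ (A-1)) := by ring
  · rw [if_neg hc]
    have hvI : v ∈ Ico (1/2:ℝ) 1 := ⟨by linarith [not_le.mp hc], hv1⟩
    have hK0 : (0:ℝ) ≤ 4*(|B-1|+|A-1|) := by positivity
    calc |v ^ (B-1) - v ^ (A-1)| * (1-v) ^ (ε-1)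
        ≤ (4*(|B-1|+|A-1|)) * (1-v) * (1-v) ^ (ε-1) := by
          refine mul_le_mul_of_nonneg_right (hm v hvI) (Real.rpow_nonneg h1v.le _)
      _ = (4*(|B-1|+|A-1|)) * (1-v) ^ ε := by
          rw [mul_assoc]
          congr 1
          have h := Real.rpow_add h1v 1 (ε-1)
          rw [Real.rpow_one] at h
          rw [show (1:ℝ)+(ε-1) = ε by ring] at h
          exact h.symm
      _ ≤ (4*(|B-1|+|A-1|)) * 1 := by
          refine mul_le_mul_of_nonneg_left (Real.rpow_le_one h1v.le (by linarith) hε0) hK0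
      _ = 4*(|B-1|+|A-1|) := mul_one _

lemma gamma_ne (x : ℝ) (hx : 0 < x) : ∀ m : ℕ, x ≠ -m := by
  intro m h
  have : (0:ℝ) ≤ (m:ℝ) := Nat.cast_nonneg m
  rw [h] at hx; linarith

lemma gamma_limit {A B : ℝ} (hA : 0 < A) (hB : 0 < B) :
    Tendsto (fun n : ℕ => Real.Gamma B * Real.Gamma (1/((n:ℝ)+1)) / Real.Gamma (B + 1/((n:ℝ)+1))
      - Real.Gamma A * Real.Gamma (1/((n:ℝ)+1)) / Real.Gamma (A + 1/((n:ℝ)+1)))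
      atTop (𝓝 (psi A - psi B)) := by
  set ε : ℕ → ℝ := fun n => 1/((n:ℝ)+1) with hεdef
  have hεpos : ∀ n, 0 < ε n := fun n => by positivity
  have hε0 : Tendsto ε atTop (𝓝 0) := tendsto_one_div_add_atTop_nhds_zero_nat
  set G : ℝ → ℝ := fun e => Real.Gamma B / Real.Gamma (B + e)
    - Real.Gamma A / Real.Gamma (A + e) with hGdef
  -- derivative of G at 0
  have hGA : HasDerivAt (fun e : ℝ => Real.Gamma (A + e)) (deriv Real.Gamma A) 0 := by
    have h1 : HasDerivAt (fun e : ℝ => A + e) 1 0 := (hasDerivAt_id 0).const_add A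
    have h2 := (Real.differentiableAt_Gamma (gamma_ne A hA)).hasDerivAt
    have h3 := HasDerivAt.comp (0:ℝ) (by rwa [add_zero] : HasDerivAt Real.Gamma
      (deriv Real.Gamma A) (A + 0)) h1
    rw [mul_one] at h3; exact h3
  have hGB : HasDerivAt (fun e : ℝ => Real.Gamma (B + e)) (deriv Real.Gamma B) 0 := by
    have h1 : HasDerivAt (fun e : ℝ => B + e) 1 0 := (hasDerivAt_id 0).const_add B
    have h2 := (Real.differentiableAt_Gamma (gamma_ne B hB)).hasDerivAt
    have h3 := HasDerivAt.comp (0:ℝ) (by rwa [add_zero] : HasDerivAt Real.Gamma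
      (deriv Real.Gamma B) (B + 0)) h1
    rw [mul_one] at h3; exact h3
  have hΓA : Real.Gamma A ≠ 0 := (Real.Gamma_pos_of_pos hA).ne'
  have hΓB : Real.Gamma B ≠ 0 := (Real.Gamma_pos_of_pos hB).ne'
  have hGd : HasDerivAt G (psi A - psi B) 0 := by
    have hiB : HasDerivAt (fun e : ℝ => (Real.Gamma (B + e))⁻¹)
        (-deriv Real.Gamma B / (Real.Gamma (B+0))^2) 0 := hGB.inv (by rwa [add_zero])
    have hiA : HasDerivAt (fun e : ℝ => (Real.Gamma (A + e))⁻¹)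
        (-deriv Real.Gamma A / (Real.Gamma (A+0))^2) 0 := hGA.inv (by rwa [add_zero])
    have h := (hiB.const_mul (Real.Gamma B)).sub (hiA.const_mul (Real.Gamma A))
    have heq : Real.Gamma B * (-deriv Real.Gamma B / Real.Gamma (B+0) ^ 2)
        - Real.Gamma A * (-deriv Real.Gamma A / Real.Gamma (A+0) ^ 2)
        = psi A - psi B := by
      rw [add_zero, add_zero, psi, psi]
      field_simp
      ring
    rw [heq] at h
    refine h.congr_of_eventuallyEq (Eventually.of_forall fun e => ?_)
    simp [hGdef, div_eq_mul_inv]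
  -- slope convergence along the sequence
  have hseq : Tendsto ε atTop (𝓝[≠] (0:ℝ)) := by
    refine tendsto_nhdsWithin_of_tendsto_nhds_of_eventually_within _ hε0 ?_
    exact Eventually.of_forall fun n => (hεpos n).ne'
  have hslope := (hasDerivAt_iff_tendsto_slope.mp hGd).comp hseq
  -- Gamma (ε + 1) → 1
  have hcont : Tendsto (fun n => Real.Gamma (ε n + 1)) atTop (𝓝 1) := by
    have h1 : ContinuousAt Real.Gamma 1 :=
      (Real.differentiableAt_Gamma (gamma_ne 1 one_pos)).continuousAt
    have h2 : Tendsto (fun n => ε n + 1) atTop (𝓝 (0+1)) := hε0.add tendsto_const_nhds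
    rw [zero_add] at h2
    have := h1.tendsto.comp h2
    rwa [Real.Gamma_one] at this
  have hmul := hcont.mul hslope
  rw [one_mul] at hmul
  refine hmul.congr fun n => ?_
  -- pointwise identity
  have hεne := (hεpos n).ne'
  have hG0 : G 0 = 0 := by simp [hGdef, div_self hΓA, div_self hΓB]
  have hsl : (slope G 0 ∘ ε) n = G (ε n) / ε n := by
    rw [Function.comp_apply, slope_def_field, hG0, sub_zero, sub_zero]
  rw [hsl, Real.Gamma_add_one hεne]
  have hΓBe : Real.Gamma (B + ε n) ≠ 0 := (Real.Gamma_pos_of_pos (by positivity)).ne'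
  have hΓAe : Real.Gamma (A + ε n) ≠ 0 := (Real.Gamma_pos_of_pos (by positivity)).ne'
  simp only [hGdef]
  have key : ∀ (e ga gb gae gbe ge : ℝ), e ≠ 0 → gae ≠ 0 → gbe ≠ 0 →
      (e * ge) * ((gb/gbe - ga/gae)/e) = gb * ge/gbe - ga * ge/gae := by
    intros e ga gb gae gbe ge he hae hbe; field_simp
  exact key _ _ _ _ _ _ hεne hΓAe hΓBe

lemma integral_D {A B : ℝ} (hA : 0 < A) (hB : 0 < B) :
    IntegrableOn (fun v : ℝ => (v ^ (B-1) - v ^ (A-1)) / (1-v)) (Ioo 0 1) ∧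
    ∫ v in Ioo (0:ℝ) 1, (v ^ (B-1) - v ^ (A-1)) / (1-v) = psi A - psi B := by
  have hm := mvt_bound hA hB
  have hg := dom_integrable hA hB
  have hdom := mvt_bound' hA hB hm
  set g : ℝ → ℝ := fun v => if v ≤ 1/2 then 2*(v ^ (B-1) + v ^ (A-1))
    else 4*(|B-1|+|A-1|) with hgdef
  have hrw : ∀ v ∈ Ioo (0:ℝ) 1, (v ^ (B-1) - v ^ (A-1)) / (1-v)
      = (v ^ (B-1) - v ^ (A-1)) * (1-v) ^ ((0:ℝ)-1) := by
    intro v hv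
    rw [show ((0:ℝ)-1) = -1 by ring, Real.rpow_neg_one, div_eq_mul_inv]
  have hc1 : ContinuousOn (fun v : ℝ => v ^ (B-1) - v ^ (A-1)) (Ioo 0 1) := by
    refine ContinuousOn.sub ?_ ?_ <;>
      exact fun v hv => (Real.continuousAt_rpow_const v _ (Or.inl hv.1.ne')).continuousWithinAt
  have hmeas : AEStronglyMeasurable (fun v : ℝ => (v ^ (B-1) - v ^ (A-1)) / (1-v))
      (volume.restrict (Ioo 0 1)) := by
    refine (hc1.div (by fun_prop) ?_).aestronglyMeasurable measurableSet_Ioo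
    intro v hv; intro h; have := hv.2; rw [sub_eq_zero] at h; linarith [h.symm]
  have hint : IntegrableOn (fun v : ℝ => (v ^ (B-1) - v ^ (A-1)) / (1-v)) (Ioo 0 1) := by
    refine Integrable.mono' hg hmeas ?_
    refine (ae_restrict_iff' measurableSet_Ioo).mpr (Eventually.of_forall fun v hv => ?_)
    rw [Real.norm_eq_abs, hrw v hv]
    exact hdom 0 le_rfl (by norm_num) v hv
  refine ⟨hint, ?_⟩
  set F : ℕ → ℝ → ℝ := fun n v => (v ^ (B-1) - v ^ (A-1)) * (1-v) ^ ((1/((n:ℝ)+1))-1)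
    with hFdef
  have hεpos : ∀ n : ℕ, 0 < 1/((n:ℝ)+1) := fun n => by positivity
  have hεle : ∀ n : ℕ, 1/((n:ℝ)+1) ≤ 1 := fun n => by
    rw [div_le_one (by positivity)]; simp
  have hFmeas : ∀ n, AEStronglyMeasurable (F n) (volume.restrict (Ioo 0 1)) := by
    intro n
    refine (hc1.mul ?_).aestronglyMeasurable measurableSet_Ioo
    refine fun v hv => ContinuousWithinAt.rpow_const ?_ (Or.inl ?_)
    · exact (continuous_const.sub continuous_id).continuousWithinAt
    · intro h; rw [sub_eq_zero] at h; linarith [hv.2, h.symm]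
  have hFb : ∀ n, ∀ᵐ v ∂(volume.restrict (Ioo 0 1)), ‖F n v‖ ≤ g v := by
    intro n
    refine (ae_restrict_iff' measurableSet_Ioo).mpr (Eventually.of_forall fun v hv => ?_)
    rw [Real.norm_eq_abs]
    exact hdom _ (hεpos n).le (hεle n) v hv
  have hFlim : ∀ᵐ v ∂(volume.restrict (Ioo 0 1)),
      Tendsto (fun n => F n v) atTop (𝓝 ((v ^ (B-1) - v ^ (A-1)) / (1-v))) := by
    refine (ae_restrict_iff' measurableSet_Ioo).mpr (Eventually.of_forall fun v hv => ?_)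
    have h1v : (0:ℝ) < 1 - v := by linarith [hv.2]
    have htexp : Tendsto (fun n : ℕ => (1/((n:ℝ)+1)) - 1) atTop (𝓝 ((0:ℝ)-1)) :=
      tendsto_one_div_add_atTop_nhds_zero_nat.sub_const 1
    have hcont : ContinuousAt (fun y : ℝ => (1-v) ^ y) ((0:ℝ)-1) :=
      Real.continuousAt_const_rpow h1v.ne'
    have h2 := (hcont.tendsto.comp htexp).const_mul (v ^ (B-1) - v ^ (A-1))
    rw [hrw v hv]
    exact h2
  have hDCT := tendsto_integral_of_dominated_convergence g hFmeas hg hFb hFlim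
  have hEval : ∀ n : ℕ, ∫ v in Ioo (0:ℝ) 1, F n v =
      Real.Gamma B * Real.Gamma (1/((n:ℝ)+1)) / Real.Gamma (B + 1/((n:ℝ)+1))
      - Real.Gamma A * Real.Gamma (1/((n:ℝ)+1)) / Real.Gamma (A + 1/((n:ℝ)+1)) := by
    intro n
    have h1 := beta_real hB (hεpos n)
    have h2 := beta_real hA (hεpos n)
    have heq : ∀ v : ℝ, F n v =
        v ^ (B-1) * (1-v) ^ ((1/((n:ℝ)+1))-1) - v ^ (A-1) * (1-v) ^ ((1/((n:ℝ)+1))-1) :=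
      fun v => by rw [hFdef]; ring
    rw [show (∫ v in Ioo (0:ℝ) 1, F n v) = ∫ v in Ioo (0:ℝ) 1,
        (v ^ (B-1) * (1-v) ^ ((1/((n:ℝ)+1))-1) - v ^ (A-1) * (1-v) ^ ((1/((n:ℝ)+1))-1))
      from integral_congr_ae (Eventually.of_forall fun v => heq v)]
    rw [integral_sub h1.1 h2.1, h1.2, h2.2]
  rw [show (fun n : ℕ => ∫ v in Ioo (0:ℝ) 1, F n v) = fun n : ℕ =>
      Real.Gamma B * Real.Gamma (1/((n:ℝ)+1)) / Real.Gamma (B + 1/((n:ℝ)+1))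
      - Real.Gamma A * Real.Gamma (1/((n:ℝ)+1)) / Real.Gamma (A + 1/((n:ℝ)+1))
    from funext hEval] at hDCT
  exact tendsto_nhds_unique hDCT (gamma_limit hA hB)

lemma psi_reflect {x : ℝ} (hx0 : 0 < x) (hx1 : x < 1) :
    psi (1-x) - psi x = π * Real.cos (π*x) / Real.sin (π*x) := by
  have hx1' : 0 < 1 - x := by linarith
  have hΓx : Real.Gamma x ≠ 0 := (Real.Gamma_pos_of_pos hx0).ne'
  have hΓ1x : Real.Gamma (1-x) ≠ 0 := (Real.Gamma_pos_of_pos hx1').ne'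
  have hsin : Real.sin (π*x) ≠ 0 := by
    refine ne_of_gt (Real.sin_pos_of_pos_of_lt_pi (by positivity) ?_)
    calc π*x < π*1 := by exact mul_lt_mul_of_pos_left hx1 Real.pi_pos
      _ = π := mul_one π
  -- derivative of LHS
  have hdx := (Real.differentiableAt_Gamma (gamma_ne x hx0)).hasDerivAt
  have hd1x := (Real.differentiableAt_Gamma (gamma_ne (1-x) hx1')).hasDerivAt
  have hcomp : HasDerivAt (fun y : ℝ => Real.Gamma (1-y)) (-(deriv Real.Gamma (1-x))) x := by
    have h1 : HasDerivAt (fun y : ℝ => 1-y) (-1) x := by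
      simpa using (hasDerivAt_id x).const_sub 1
    have h2 := HasDerivAt.comp x hd1x h1
    rw [mul_neg_one] at h2; exact h2
  have hL : HasDerivAt (fun y : ℝ => Real.Gamma y * Real.Gamma (1-y))
      (deriv Real.Gamma x * Real.Gamma (1-x) - Real.Gamma x * deriv Real.Gamma (1-x)) x := by
    have := hdx.mul hcomp
    exact this.congr_deriv (by ring)
  -- derivative of RHS
  have hsd : HasDerivAt (fun y : ℝ => Real.sin (π*y)) (π * Real.cos (π*x)) x := by
    have h1 : HasDerivAt (fun y : ℝ => π*y) π x := by simpa using (hasDerivAt_id x).const_mul π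
    have h2 := HasDerivAt.comp x (Real.hasDerivAt_sin (π*x)) h1
    rw [mul_comm] at h2
    exact h2
  have hR : HasDerivAt (fun y : ℝ => π / Real.sin (π*y))
      (-(π * (π * Real.cos (π*x))) / (Real.sin (π*x))^2) x := by
    have := (hasDerivAt_const x π).div hsd hsin
    exact this.congr_deriv (by rw [zero_mul]; ring)
  -- the two functions are equal
  have hfun : (fun y : ℝ => Real.Gamma y * Real.Gamma (1-y)) =
      (fun y : ℝ => π / Real.sin (π*y)) :=
    funext fun y => Real.Gamma_mul_Gamma_one_sub y
  rw [hfun] at hL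
  have hder := hL.unique hR
  -- algebra
  have hrefl := Real.Gamma_mul_Gamma_one_sub x
  rw [psi, psi, div_sub_div _ _ hΓ1x hΓx, div_eq_div_iff (by exact mul_ne_zero hΓ1x hΓx) hsin]
  have hππ : Real.Gamma x * Real.Gamma (1-x) * Real.sin (π*x) = π := by
    rw [hrefl]; field_simp
  have h5 : (deriv Real.Gamma x * Real.Gamma (1-x) - Real.Gamma x * deriv Real.Gamma (1-x))
      * (Real.sin (π*x))^2 = -(π*(π*Real.cos (π*x))) := by
    rw [hder, div_mul_cancel₀ _ (pow_ne_zero 2 hsin)]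
  have key : ((deriv Real.Gamma (1-x) * Real.Gamma x - Real.Gamma (1-x) * deriv Real.Gamma x)
      * Real.sin (π*x) - π * Real.cos (π*x) * (Real.Gamma (1-x) * Real.Gamma x))
      * Real.sin (π*x) = 0 := by
    linear_combination (-1:ℝ)*h5 - (π*Real.cos (π*x))*hππ
  rcases mul_eq_zero.mp key with hk | hk
  · linarith [hk]
  · exact absurd hk hsin

lemma half_line (t γ : ℝ) (h1 : |t| < γ) (h2 : γ < π / 2) :
    IntegrableOn (fun x : ℝ => Real.exp (t * x) *
        (Real.sinh (x * (π - 2 * γ) / 2) / Real.sinh (π * x / 2))) (Ioi 0) ∧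
    ∫ x in Ioi (0:ℝ), Real.exp (t * x) *
        (Real.sinh (x * (π - 2 * γ) / 2) / Real.sinh (π * x / 2)) =
      (1/π) * (psi (1 - (γ+t)/π) - psi ((γ-t)/π)) := by
  have hπ : (0:ℝ) < π := Real.pi_pos
  have hγ : 0 < γ := lt_of_le_of_lt (abs_nonneg t) h1
  have ht1 : -γ < t := neg_lt_of_abs_lt h1
  have ht2 : t < γ := lt_of_abs_lt h1
  set B : ℝ := (γ-t)/π with hBdef
  set A : ℝ := 1 - (γ+t)/π with hAdef
  have hB : 0 < B := div_pos (by linarith) hπ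
  have hA : 0 < A := by
    rw [hAdef, sub_pos, div_lt_one hπ]; linarith
  set f : ℝ → ℝ := fun x => Real.exp (t * x) *
      (Real.sinh (x * (π - 2 * γ) / 2) / Real.sinh (π * x / 2)) with hfdef
  set sub : ℝ → ℝ := fun v => -(Real.log v)/π with hsubdef
  have hder : ∀ v ∈ Ioo (0:ℝ) 1, HasDerivWithinAt sub (-v⁻¹/π) (Ioo 0 1) v := by
    intro v hv
    exact (((Real.hasDerivAt_log hv.1.ne').neg).div_const π).hasDerivWithinAt
  have hinj : InjOn sub (Ioo 0 1) := by
    intro a ha b hb hab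
    have h2 : -(Real.log a) * π = -(Real.log b) * π :=
      (div_eq_div_iff hπ.ne' hπ.ne').mp hab
    have hlog : Real.log a = Real.log b := by
      have := mul_right_cancel₀ hπ.ne' h2
      linarith
    rw [← Real.exp_log ha.1, ← Real.exp_log hb.1, hlog]
  have himg : sub '' (Ioo 0 1) = Ioi 0 := by
    ext y
    constructor
    · rintro ⟨v, hv, rfl⟩
      have hlv : Real.log v < 0 := Real.log_neg hv.1 hv.2
      simp only [hsubdef, mem_Ioi]
      exact div_pos (by linarith) hπ
    · intro hy
      rw [mem_Ioi] at hy
      refine ⟨Real.exp (-π*y), ⟨Real.exp_pos _, ?_⟩, ?_⟩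
      · rw [Real.exp_lt_one_iff]; nlinarith
      · simp only [hsubdef, Real.log_exp]
        field_simp
  have hdd : ∀ X Y : ℝ, X/2/(Y/2) = X/Y := fun X Y => by ring
  -- pointwise identity
  have hpt : ∀ v ∈ Ioo (0:ℝ) 1, |(-v⁻¹/π)| • f (sub v)
      = (1/π) * ((v ^ (B-1) - v ^ (A-1)) / (1-v)) := by
    intro v hv
    obtain ⟨hv0, hv1⟩ := hv
    have hlv : Real.log v < 0 := Real.log_neg hv0 hv1
    have habs : |(-v⁻¹/π)| = v⁻¹/π := by
      rw [abs_div, abs_neg, abs_inv, abs_of_pos hv0, abs_of_pos hπ]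
    have hexp : ∀ u : ℝ, Real.exp (Real.log v * u) = v ^ u := fun u =>
      (Real.rpow_def_of_pos hv0 u).symm
    have hsinh : ∀ u : ℝ, Real.sinh (Real.log v * u) = (v ^ u - v ^ (-u))/2 := by
      intro u
      rw [Real.sinh_eq, ← hexp u, ← hexp (-u)]
      ring_nf
    have hadd : ∀ p q : ℝ, v ^ p * v ^ q = v ^ (p+q) := fun p q =>
      (Real.rpow_add hv0 p q).symm
    have e1 : t * sub v = Real.log v * (-(t/π)) := by
      rw [hsubdef]; field_simp
      try ring
      try tauto
    have e2 : sub v * (π - 2*γ)/2 = Real.log v * (γ/π - 1/2) := by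
      rw [hsubdef]; field_simp
      try ring
      try tauto
    have e3 : π * sub v / 2 = Real.log v * (-(1/2)) := by
      rw [hsubdef]; field_simp
      try ring
      try tauto
    have hne : v ^ (-(1/2):ℝ) - v ^ ((1/2):ℝ) ≠ 0 := by
      have hlt1 : v ^ ((1/2):ℝ) < 1 := Real.rpow_lt_one hv0.le hv1 (by norm_num)
      have hgt1 : 1 < v ^ (-(1/2):ℝ) := Real.one_lt_rpow_iff_of_pos hv0 |>.mpr
        (Or.inr ⟨hv1, by norm_num⟩)
      intro h; rw [sub_eq_zero] at h; rw [h] at hgt1; linarith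
    have h1vne : (1:ℝ) - v ≠ 0 := by intro h; rw [sub_eq_zero] at h; linarith [h.symm]
    have hrv : f (sub v) = v ^ (-(t/π)) *
        ((v ^ (γ/π - 1/2) - v ^ (1/2 - γ/π)) / (v ^ (-(1/2):ℝ) - v ^ ((1/2):ℝ))) := by
      rw [hfdef]
      simp only [e1, e2, e3, hexp, hsinh, neg_neg, neg_sub]
      rw [hdd]
    have hq : (v ^ (γ/π - 1/2) - v ^ (1/2 - γ/π)) / (v ^ (-(1/2):ℝ) - v ^ ((1/2):ℝ))
        = (v ^ (γ/π) - v ^ (1 - γ/π)) / (1-v) := by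
      rw [div_eq_div_iff hne h1vne]
      have hv1' : v ^ (1:ℝ) = v := Real.rpow_one v
      have m1 : v ^ (γ/π) * v ^ (-(1/2):ℝ) = v ^ (γ/π - 1/2) := by
        rw [hadd]; congr 1 <;> ring_nf
      have m2 : v ^ (γ/π) * v ^ ((1/2):ℝ) = v ^ (γ/π + 1/2) := by rw [hadd]
      have m3 : v ^ (1 - γ/π) * v ^ (-(1/2):ℝ) = v ^ (1/2 - γ/π) := by
        rw [hadd]; congr 1 <;> ring_nf
      have m4 : v ^ (1 - γ/π) * v ^ ((1/2):ℝ) = v ^ (3/2 - γ/π) := by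
        rw [hadd]; congr 1 <;> ring_nf
      have m5 : v ^ (γ/π - 1/2) * v = v ^ (γ/π + 1/2) := by
        calc v ^ (γ/π - 1/2) * v = v ^ (γ/π - 1/2) * v ^ (1:ℝ) := by rw [hv1']
          _ = v ^ (γ/π + 1/2) := by rw [hadd]; congr 1 <;> ring_nf
      have m6 : v ^ (1/2 - γ/π) * v = v ^ (3/2 - γ/π) := by
        calc v ^ (1/2 - γ/π) * v = v ^ (1/2 - γ/π) * v ^ (1:ℝ) := by rw [hv1']
          _ = v ^ (3/2 - γ/π) := by rw [hadd]; congr 1 <;> ring_nf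
      linear_combination -m1 + m2 + m3 - m4 - m5 + m6
    rw [smul_eq_mul, habs, hrv, hq]
    have hB1 : v ^ (-(t/π)) * v ^ (γ/π) * v⁻¹ = v ^ (B-1) := by
      rw [← Real.rpow_neg_one v, hadd, hadd]
      congr 1
      rw [hBdef]; field_simp; ring
    have hA1 : v ^ (-(t/π)) * v ^ (1 - γ/π) * v⁻¹ = v ^ (A-1) := by
      rw [← Real.rpow_neg_one v, hadd, hadd]
      congr 1
      rw [hAdef]; field_simp; ring
    rw [← hB1, ← hA1]
    ring
  have hDint := integral_D hA hB
  have hIffInt := integrableOn_image_iff_integrableOn_abs_deriv_smul measurableSet_Ioo hder hinj f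
  rw [himg] at hIffInt
  have hint1 : IntegrableOn (fun v => (1/π) * ((v ^ (B-1) - v ^ (A-1)) / (1-v))) (Ioo 0 1) :=
    hDint.1.const_mul _
  have hint2 : IntegrableOn (fun v => |(-v⁻¹/π)| • f (sub v)) (Ioo 0 1) :=
    hint1.congr_fun (fun v hv => (hpt v hv).symm) measurableSet_Ioo
  refine ⟨hIffInt.mpr hint2, ?_⟩
  have hval := integral_image_eq_integral_abs_deriv_smul measurableSet_Ioo hder hinj f
  rw [himg] at hval
  rw [hval, setIntegral_congr_fun measurableSet_Ioo hpt, integral_const_mul, hDint.2]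

lemma integrableOn_neg_shift {g : ℝ → ℝ} (h : IntegrableOn g (Ioi (0:ℝ))) :
    IntegrableOn (fun x => g (-x)) (Iic (0:ℝ)) := by
  have A : MeasurableEmbedding (fun x : ℝ => -x) :=
    (Homeomorph.neg ℝ).isClosedEmbedding.measurableEmbedding
  have h1 : IntegrableOn g (Ici (0:ℝ)) := by
    rwa [IntegrableOn, ← Measure.restrict_congr_set Ioi_ae_eq_Ici]
  have hpre : (fun x : ℝ => -x) ⁻¹' (Iic 0) = Ici 0 := by
    ext x; simp
  have h2 : (volume : Measure ℝ).restrict (Iic (0:ℝ)) =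
      ((volume : Measure ℝ).restrict (Ici (0:ℝ))).map (fun x : ℝ => -x) := by
    have h3 := Measure.restrict_map (μ := (volume : Measure ℝ)) A.measurable
      (measurableSet_Iic (a := (0:ℝ)))
    rw [Measure.map_neg_eq_self, hpre] at h3
    exact h3
  rw [IntegrableOn, h2, A.integrable_map_iff]
  have heq : (fun x => g (-x)) ∘ (fun x : ℝ => -x) = g := by funext x; simp
  rw [heq]; exact h1

/-- Laplace-transform identity for the disordered-phase weight: for `|t| < γ < π/2`,
`∫ e^{tx} · sinh(x(π−2γ)/2)/sinh(πx/2) dx = sin(2γ)/(sin(γ−t)·sin(γ+t))`, the integral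
converging absolutely.  (At `x = 0` the integrand here takes the value `0` rather than its
continuous value `(π−2γ)/π`; this does not affect integrability or the integral.) -/
theorem laplace_transform_disordered_weight (t γ : ℝ) (h1 : |t| < γ) (h2 : γ < π / 2) :
    Integrable (fun x : ℝ => Real.exp (t * x) *
        (Real.sinh (x * (π - 2 * γ) / 2) / Real.sinh (π * x / 2))) ∧
    ∫ x : ℝ, Real.exp (t * x) *
        (Real.sinh (x * (π - 2 * γ) / 2) / Real.sinh (π * x / 2)) =
      Real.sin (2 * γ) / (Real.sin (γ - t) * Real.sin (γ + t)) := by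
  have hπ : (0:ℝ) < π := Real.pi_pos
  have hγ : 0 < γ := lt_of_le_of_lt (abs_nonneg t) h1
  have ht1 : -γ < t := neg_lt_of_abs_lt h1
  have ht2 : t < γ := lt_of_abs_lt h1
  set f : ℝ → ℝ := fun x => Real.exp (t * x) *
      (Real.sinh (x * (π - 2 * γ) / 2) / Real.sinh (π * x / 2)) with hfdef
  set g : ℝ → ℝ := fun x => Real.exp (-t * x) *
      (Real.sinh (x * (π - 2 * γ) / 2) / Real.sinh (π * x / 2)) with hgdef
  have hfg : (fun x => g (-x)) = f := by
    funext x
    simp only [hgdef, hfdef]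
    rw [show -t * -x = t * x by ring, show (-x) * (π - 2*γ)/2 = -(x * (π - 2*γ)/2) by ring,
      show π * (-x)/2 = -(π * x/2) by ring, Real.sinh_neg, Real.sinh_neg, neg_div_neg_eq]
  have Hpos := half_line t γ h1 h2
  have Hneg := half_line (-t) γ (by rwa [abs_neg]) h2
  have HnegInt : IntegrableOn g (Ioi 0) := Hneg.1
  have hIic : IntegrableOn f (Iic 0) := by
    have := integrableOn_neg_shift HnegInt
    rwa [hfg] at this
  have hInt : Integrable f := by
    have hu := hIic.union Hpos.1
    rwa [Set.Iic_union_Ioi, integrableOn_univ] at hu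
  refine ⟨hInt, ?_⟩
  -- split the integral
  have hsplit := intervalIntegral.integral_Iic_add_Ioi (b := (0:ℝ)) (μ := volume) hIic Hpos.1
  have hIicval : ∫ x in Iic (0:ℝ), f x = (1/π) * (psi (1 - (γ-t)/π) - psi ((γ+t)/π)) := by
    rw [← hfg]
    rw [integral_comp_neg_Iic 0 g, neg_zero]
    have := Hneg.2
    rw [show γ + -t = γ - t by ring, show γ - -t = γ + t by ring] at this
    exact this
  rw [← hsplit, hIicval, Hpos.2]
  -- reflection formulas
  have hq0 : 0 < (γ+t)/π := div_pos (by linarith) hπ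
  have hq1 : (γ+t)/π < 1 := by rw [div_lt_one hπ]; linarith
  have hb0 : 0 < (γ-t)/π := div_pos (by linarith) hπ
  have hb1 : (γ-t)/π < 1 := by rw [div_lt_one hπ]; linarith
  have hr1 := psi_reflect hb0 hb1
  have hr2 := psi_reflect hq0 hq1
  rw [show π * ((γ-t)/π) = γ - t by field_simp] at hr1
  rw [show π * ((γ+t)/π) = γ + t by field_simp] at hr2
  have hsin1 : Real.sin (γ - t) ≠ 0 := by
    refine ne_of_gt (Real.sin_pos_of_pos_of_lt_pi (by linarith) (by linarith))
  have hsin2 : Real.sin (γ + t) ≠ 0 := by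
    refine ne_of_gt (Real.sin_pos_of_pos_of_lt_pi (by linarith) (by linarith))
  have hsum : (1/π) * (psi (1 - (γ-t)/π) - psi ((γ+t)/π))
      + (1/π) * (psi (1 - (γ+t)/π) - psi ((γ-t)/π))
      = Real.cos (γ - t)/Real.sin (γ - t) + Real.cos (γ + t)/Real.sin (γ + t) := by
    have e : (1/π) * (psi (1 - (γ-t)/π) - psi ((γ-t)/π))
        + (1/π) * (psi (1 - (γ+t)/π) - psi ((γ+t)/π))
        = (1/π) * (π * Real.cos (γ-t) / Real.sin (γ-t))
        + (1/π) * (π * Real.cos (γ+t) / Real.sin (γ+t)) := by rw [hr1, hr2]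
    calc (1/π) * (psi (1 - (γ-t)/π) - psi ((γ+t)/π))
        + (1/π) * (psi (1 - (γ+t)/π) - psi ((γ-t)/π))
        = (1/π) * (psi (1 - (γ-t)/π) - psi ((γ-t)/π))
        + (1/π) * (psi (1 - (γ+t)/π) - psi ((γ+t)/π)) := by ring
      _ = (1/π) * (π * Real.cos (γ-t) / Real.sin (γ-t))
        + (1/π) * (π * Real.cos (γ+t) / Real.sin (γ+t)) := e
      _ = Real.cos (γ - t)/Real.sin (γ - t) + Real.cos (γ + t)/Real.sin (γ + t) := by
          field_simp
  rw [hsum]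
  -- trig identity
  rw [div_add_div _ _ hsin1 hsin2, div_eq_div_iff (mul_ne_zero hsin1 hsin2)
    (mul_ne_zero hsin1 hsin2)]
  have hadd : Real.sin ((γ-t) + (γ+t)) = Real.sin (γ-t) * Real.cos (γ+t)
      + Real.cos (γ-t) * Real.sin (γ+t) := Real.sin_add _ _
  rw [show (γ-t) + (γ+t) = 2*γ by ring] at hadd
  rw [hadd]
  ring
end

section
/- The normalized partition function is the generating function of the k-th row of the monotone triangle: in each of the four phases, for every real (t,γ) in the phase's range, every 1≤k≤n, and all complex ξ₁,…,ξ_k, one has Z̃_n(ξ₁,…,ξ_k;t,γ) = ∑_ν Prob((λ_1^k,…,λ_k^k)=ν) · F^{sym}_ν(ξ₁,…,ξ_k;t,γ,n)/F^{sym}_ν(0,…,0;t,γ,n), where the sum runs over strictly increasing k-tuples ν=(ν₁<⋯<ν_k) in {1,…,n}, Prob refers to the Gibbs measure on DWBC configurations of the n×n square with homogeneous weights (a(t,γ),b(t,γ),c(γ)), and all the normalizing quantities F^{sym}_ν(0,…,0;t,γ,n) and Z_n(0,…,0;t,…,t;γ) are nonzero for these parameters. -/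
open scoped BigOperators
open Filter MeasureTheory Topology

namespace SixV


/-- Weight of the vertex at `(i+1, j+1)` with column parameter `χ`, row parameter `ψ`,
and weight functions `A, B, C` (types 1/2 ↦ `A(ψ_y−χ_x, γ)`, 3/4 ↦ `B(ψ_y−χ_x, γ)`,
5/6 ↦ `C γ`). -/
noncomputable def vertexWt {n : ℕ} (A B : ℂ → ℂ → ℂ) (C : ℂ → ℂ)
    (χ ψ : Fin n → ℂ) (γ : ℂ) (σ : Config n) (i j : Fin n) : ℂ :=
  if vertexType σ i j = 1 ∨ vertexType σ i j = 2 then A (ψ j - χ i) γ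
  else if vertexType σ i j = 3 ∨ vertexType σ i j = 4 then B (ψ j - χ i) γ
  else C γ

/-- The inhomogeneous partition function `Z_n(χ₁,…,χ_n; ψ₁,…,ψ_n; γ)`. -/
noncomputable def Zinh (n : ℕ) (A B : ℂ → ℂ → ℂ) (C : ℂ → ℂ)
    (χ ψ : Fin n → ℂ) (γ : ℂ) : ℂ :=
  ∑ σ : DWBC n, ∏ p : Fin n × Fin n, vertexWt A B C χ ψ γ σ.1 p.1 p.2

/-- The normalized partition function
`Z̃_n(ξ₁,…,ξ_k; t, γ) = Z_n(0^n; t+ξ₁,…,t+ξ_k, t^{n−k}; γ) / Z_n(0^n; t^n; γ)`. -/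
noncomputable def Ztilde (A B : ℂ → ℂ → ℂ) (C : ℂ → ℂ) (n k : ℕ)
    (ξ : Fin k → ℂ) (t γ : ℝ) : ℂ :=
  Zinh n A B C (fun _ => 0)
      (fun y => if h : (y : ℕ) < k then (t : ℂ) + ξ ⟨y, h⟩ else (t : ℂ)) (γ : ℂ)
    / Zinh n A B C (fun _ => 0) (fun _ => (t : ℂ)) (γ : ℂ)
/-- The four phases of weight parameterizations. -/
inductive Phase | fe | dis | afe | bd

/-- The weight function `a(u, γ)` of each phase. -/
noncomputable def phA : Phase → ℂ → ℂ → ℂ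
  | .fe => fun u γ => Complex.sinh (u - γ)
  | .dis => fun u γ => Complex.sin (γ - u)
  | .afe => fun u γ => Complex.sinh (γ - u)
  | .bd => fun u γ => γ - u

/-- The weight function `b(u, γ)` of each phase. -/
noncomputable def phB : Phase → ℂ → ℂ → ℂ
  | .fe => fun u γ => Complex.sinh (u + γ)
  | .dis => fun u γ => Complex.sin (γ + u)
  | .afe => fun u γ => Complex.sinh (γ + u)
  | .bd => fun u γ => γ + u

/-- The weight function `c(γ)` of each phase. -/
noncomputable def phC : Phase → ℂ → ℂ
  | .fe => fun γ => Complex.sinh (2 * γ)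
  | .dis => fun γ => Complex.sin (2 * γ)
  | .afe => fun γ => Complex.sinh (2 * γ)
  | .bd => fun γ => 2 * γ

/-- The admissible range of the real parameters `(t, γ)` in each phase. -/
def phRange : Phase → ℝ → ℝ → Prop
  | .fe => fun t γ => 0 < |γ| ∧ |γ| < t
  | .dis => fun t γ => |t| < γ ∧ γ < Real.pi / 2
  | .afe => fun t γ => |t| < γ
  | .bd => fun t γ => |t| < γ

/-- The convergence range for a shifted parameter `t + r`, `r = Re ξ`, in each phase. -/
def phConv : Phase → ℝ → ℝ → ℝ → Prop
  | .fe => fun t γ r => |γ| < t + r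
  | .dis => fun t γ r => |t + r| < γ
  | .afe => fun t γ r => |t + r| < γ
  | .bd => fun t γ r => |t + r| < γ


/-- Edge occupations on the strip `{1,…,n} × {1,…,k}`. -/
abbrev SConfig (n k : ℕ) := (Fin (n + 1) → Fin k → Bool) × (Fin n → Fin (k + 1) → Bool)

/-- Type of the vertex at `(i+1, j+1)` of a strip configuration. -/
def vertexTypeS {n k : ℕ} (σ : SConfig n k) (i : Fin n) (j : Fin k) : ℕ :=
  vtype (σ.1 i.castSucc j) (σ.2 i j.castSucc) (σ.1 i.succ j) (σ.2 i j.succ)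

/-- Strip boundary conditions: paths enter on the left in every row, exit on top exactly
at the columns of `S`, and no paths enter from below or exit on the right. -/
def IsStrip {n k : ℕ} (S : Finset (Fin n)) (σ : SConfig n k) : Prop :=
  (∀ (i : Fin n) (j : Fin k),
      b2n (σ.1 i.castSucc j) + b2n (σ.2 i j.castSucc)
        = b2n (σ.1 i.succ j) + b2n (σ.2 i j.succ)) ∧
  (∀ j : Fin k, σ.1 0 j = true) ∧
  (∀ j : Fin k, σ.1 (Fin.last n) j = false) ∧
  (∀ i : Fin n, σ.2 i 0 = false) ∧
  (∀ i : Fin n, (σ.2 i (Fin.last k) = true ↔ i ∈ S))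

noncomputable instance instFintypeStrip {n k : ℕ} (S : Finset (Fin n)) :
    Fintype {σ : SConfig n k // IsStrip S σ} := Fintype.ofFinite _

/-- The strip partition function `F^{sym}_ν(ξ₁,…,ξ_k; t, γ, n)` with row-dependent
symmetric weights `a(t+ξ_y, γ), b(t+ξ_y, γ), c(γ)`; `S ⊆ {1,…,n}` is the set of exit
columns `ν`. -/
noncomputable def Fsym (ph : Phase) (n k : ℕ) (S : Finset (Fin n)) (ξ : Fin k → ℂ)
    (t γ : ℝ) : ℂ :=
  ∑ σ : {σ : SConfig n k // IsStrip S σ}, ∏ p : Fin n × Fin k,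
    (if vertexTypeS σ.1 p.1 p.2 = 1 ∨ vertexTypeS σ.1 p.1 p.2 = 2 then
        phA ph ((t : ℂ) + ξ p.2) (γ : ℂ)
      else if vertexTypeS σ.1 p.1 p.2 = 3 ∨ vertexTypeS σ.1 p.1 p.2 = 4 then
        phB ph ((t : ℂ) + ξ p.2) (γ : ℂ)
      else phC ph (γ : ℂ))

/-- The homogeneous real weights `a(t,γ), b(t,γ), c(γ)` of each phase. -/
noncomputable def aR : Phase → ℝ → ℝ → ℝ
  | .fe => fun t γ => Real.sinh (t - γ)
  | .dis => fun t γ => Real.sin (γ - t)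
  | .afe => fun t γ => Real.sinh (γ - t)
  | .bd => fun t γ => γ - t

noncomputable def bR : Phase → ℝ → ℝ → ℝ
  | .fe => fun t γ => Real.sinh (t + γ)
  | .dis => fun t γ => Real.sin (γ + t)
  | .afe => fun t γ => Real.sinh (γ + t)
  | .bd => fun t γ => γ + t

noncomputable def cR : Phase → ℝ → ℝ
  | .fe => fun γ => Real.sinh (2 * γ)
  | .dis => fun γ => Real.sin (2 * γ)
  | .afe => fun γ => Real.sinh (2 * γ)
  | .bd => fun γ => 2 * γ

/-- The set of columns `x` with `V(x, k) = 1`, as a `Finset (Fin n)`. -/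
noncomputable def rowFinF {n : ℕ} (σ : DWBC n) (k : ℕ) : Finset (Fin n) :=
  Finset.univ.filter fun x =>
    σ.1.2 x (if h : k ≤ n then ⟨k, Nat.lt_succ_of_le h⟩ else 0) = true

section Aux
open Finset

lemma vtype_valid : ∀ h0 v0 h1 v1 : Bool, b2n h0 + b2n v0 = b2n h1 + b2n v1 →
    (vtype h0 v0 h1 v1 = 1 ∨ vtype h0 v0 h1 v1 = 2 ∨ vtype h0 v0 h1 v1 = 3 ∨
     vtype h0 v0 h1 v1 = 4 ∨ vtype h0 v0 h1 v1 = 5 ∨ vtype h0 v0 h1 v1 = 6) := by decide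

lemma vtype_flipH : ∀ h0 v0 h1 v1 : Bool, b2n h0 + b2n v0 = b2n h1 + b2n v1 →
    ((b2n h0 : ℤ) - b2n h1 =
      (if vtype h0 v0 h1 v1 = 5 then 1 else 0) - (if vtype h0 v0 h1 v1 = 6 then 1 else 0)) := by
  decide

lemma vtype_flipV : ∀ h0 v0 h1 v1 : Bool, b2n h0 + b2n v0 = b2n h1 + b2n v1 →
    ((b2n v1 : ℤ) - b2n v0 = (b2n h0 : ℤ) - b2n h1) := by decide

lemma telescope : ∀ {n : ℕ} (g : Fin (n + 1) → ℤ),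
    ∑ i : Fin n, (g i.castSucc - g i.succ) = g 0 - g (Fin.last n) := by
  intro n
  induction n with
  | zero => intro g; simp
  | succ m ih =>
    intro g
    rw [Fin.sum_univ_castSucc (f := fun i : Fin (m+1) => g i.castSucc - g i.succ)]
    have := ih (fun i : Fin (m+1) => g i.castSucc)
    calc (∑ i : Fin m, (g i.castSucc.castSucc - g i.castSucc.succ))
          + (g (Fin.last m).castSucc - g (Fin.last m).succ)
        = (∑ i : Fin m, (g i.castSucc.castSucc - g i.succ.castSucc))
          + (g (Fin.last m).castSucc - g (Fin.last (m+1))) := by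
          simp only [Fin.succ_castSucc, Fin.succ_last]
      _ = (g 0 - g (Fin.last m).castSucc) + (g (Fin.last m).castSucc - g (Fin.last (m+1))) := by
          rw [this]; simp [Fin.castSucc_zero]
      _ = g 0 - g (Fin.last (m+1)) := by ring

variable {n k : ℕ}

/-- per-row count of type-5 minus type-6 vertices is 1, for strip-like configurations. -/
lemma row_c5c6 (τ : SConfig n k)
    (hcon : ∀ (i : Fin n) (j : Fin k),
      b2n (τ.1 i.castSucc j) + b2n (τ.2 i j.castSucc) = b2n (τ.1 i.succ j) + b2n (τ.2 i j.succ))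
    (hL : ∀ j, τ.1 0 j = true) (hR : ∀ j, τ.1 (Fin.last n) j = false) (j : Fin k) :
    ∑ i : Fin n, (((if vertexTypeS τ i j = 5 then 1 else 0) : ℤ)
      - (if vertexTypeS τ i j = 6 then 1 else 0)) = 1 := by
  have h1 : ∀ i : Fin n, (((if vertexTypeS τ i j = 5 then 1 else 0) : ℤ)
      - (if vertexTypeS τ i j = 6 then 1 else 0))
      = ((b2n (τ.1 i.castSucc j) : ℤ) - b2n (τ.1 i.succ j)) := fun i =>
    (vtype_flipH _ _ _ _ (hcon i j)).symm
  rw [Finset.sum_congr rfl fun i _ => h1 i, telescope (fun i => (b2n (τ.1 i j) : ℤ))]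
  simp [hL j, hR j, b2n]

lemma row_V (τ : SConfig n k)
    (hcon : ∀ (i : Fin n) (j : Fin k),
      b2n (τ.1 i.castSucc j) + b2n (τ.2 i j.castSucc) = b2n (τ.1 i.succ j) + b2n (τ.2 i j.succ))
    (hL : ∀ j, τ.1 0 j = true) (hR : ∀ j, τ.1 (Fin.last n) j = false) (j : Fin k) :
    ∑ i : Fin n, ((b2n (τ.2 i j.succ) : ℤ) - b2n (τ.2 i j.castSucc)) = 1 := by
  have h1 : ∀ i : Fin n, ((b2n (τ.2 i j.succ) : ℤ) - b2n (τ.2 i j.castSucc))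
      = ((b2n (τ.1 i.castSucc j) : ℤ) - b2n (τ.1 i.succ j)) := fun i =>
    vtype_flipV _ _ _ _ (hcon i j)
  rw [Finset.sum_congr rfl fun i _ => h1 i, telescope (fun i => (b2n (τ.1 i j) : ℤ))]
  simp [hL j, hR j, b2n]

/-- A strip configuration forces `S.card = k`. -/
lemma strip_card {S : Finset (Fin n)} {τ : SConfig n k} (hτ : IsStrip S τ) : S.card = k := by
  obtain ⟨hcon, hL, hR, hB, hT⟩ := hτ
  have h2 : ∑ i : Fin n, ((b2n (τ.2 i (Fin.last k)) : ℤ) - b2n (τ.2 i 0)) = k := by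
    have : ∀ i : Fin n, ((b2n (τ.2 i (Fin.last k)) : ℤ) - b2n (τ.2 i 0))
        = ∑ j : Fin k, ((b2n (τ.2 i j.succ) : ℤ) - b2n (τ.2 i j.castSucc)) := by
      intro i
      have := telescope (fun y : Fin (k+1) => (b2n (τ.2 i y) : ℤ))
      have h' : ∑ j : Fin k, ((b2n (τ.2 i j.succ) : ℤ) - b2n (τ.2 i j.castSucc))
          = -∑ j : Fin k, ((b2n (τ.2 i j.castSucc) : ℤ) - b2n (τ.2 i j.succ)) := by
        rw [← Finset.sum_neg_distrib]; exact Finset.sum_congr rfl fun j _ => by ring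
      rw [h', this]; ring
    rw [Finset.sum_congr rfl fun i _ => this i, Finset.sum_comm]
    rw [Finset.sum_congr rfl fun j _ => row_V τ hcon hL hR j]
    simp
  have hleft : ∑ i : Fin n, ((b2n (τ.2 i (Fin.last k)) : ℤ) - b2n (τ.2 i 0))
      = (S.card : ℤ) := by
    have : ∀ i : Fin n, ((b2n (τ.2 i (Fin.last k)) : ℤ) - b2n (τ.2 i 0))
        = (if i ∈ S then 1 else 0) := by
      intro i
      rw [hB i]
      by_cases h : i ∈ S
      · simp [h, (hT i).mpr h, b2n]
      · have : τ.2 i (Fin.last k) = false := by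
          cases hv : τ.2 i (Fin.last k)
          · rfl
          · exact absurd ((hT i).mp hv) h
        simp [h, this, b2n]
    rw [Finset.sum_congr rfl fun i _ => this i, Finset.sum_boole]
    norm_num
  have : (S.card : ℤ) = k := by rw [← hleft, h2]
  exact_mod_cast this

/-- generic product-of-weights formula by vertex type counts. -/
lemma prod_weight {ι : Type*} [Fintype ι] {M : Type*} [CommMonoid M] (ty : ι → ℕ)
    (hty : ∀ p, ty p = 1 ∨ ty p = 2 ∨ ty p = 3 ∨ ty p = 4 ∨ ty p = 5 ∨ ty p = 6)
    (a b c : M) :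
    (∏ p, (if ty p = 1 ∨ ty p = 2 then a else if ty p = 3 ∨ ty p = 4 then b else c))
      = a ^ ((univ.filter fun p => ty p = 1).card + (univ.filter fun p => ty p = 2).card)
      * b ^ ((univ.filter fun p => ty p = 3).card + (univ.filter fun p => ty p = 4).card)
      * c ^ ((univ.filter fun p => ty p = 5).card + (univ.filter fun p => ty p = 6).card) := by
  have key : ∀ p, (if ty p = 1 ∨ ty p = 2 then a else if ty p = 3 ∨ ty p = 4 then b else c)
      = (a ^ ((if ty p = 1 then 1 else 0) + (if ty p = 2 then 1 else 0)))
        * (b ^ ((if ty p = 3 then 1 else 0) + (if ty p = 4 then 1 else 0)))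
        * (c ^ ((if ty p = 5 then 1 else 0) + (if ty p = 6 then 1 else 0))) := by
    intro p
    rcases hty p with h | h | h | h | h | h <;> simp [h]
  rw [Finset.prod_congr rfl fun p _ => key p, Finset.prod_mul_distrib,
    Finset.prod_mul_distrib, Finset.prod_pow_eq_pow_sum, Finset.prod_pow_eq_pow_sum,
    Finset.prod_pow_eq_pow_sum, Finset.sum_add_distrib, Finset.sum_add_distrib,
    Finset.sum_add_distrib]
  simp [Finset.sum_boole]

/-- per-strip-configuration: N5 = N6 + k. -/
lemma strip_c5c6 {S : Finset (Fin n)} {τ : SConfig n k} (hτ : IsStrip S τ) :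
    (univ.filter fun p : Fin n × Fin k => vertexTypeS τ p.1 p.2 = 5).card
      = (univ.filter fun p : Fin n × Fin k => vertexTypeS τ p.1 p.2 = 6).card + k := by
  obtain ⟨hcon, hL, hR, hB, hT⟩ := hτ
  have h : ∑ p : Fin n × Fin k, (((if vertexTypeS τ p.1 p.2 = 5 then 1 else 0) : ℤ)
      - (if vertexTypeS τ p.1 p.2 = 6 then 1 else 0)) = k := by
    rw [Fintype.sum_prod_type_right]
    rw [Finset.sum_congr rfl fun j _ => row_c5c6 τ hcon hL hR j]
    simp
  rw [Finset.sum_sub_distrib, Finset.sum_boole, Finset.sum_boole] at h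
  have h' : (((univ.filter fun p : Fin n × Fin k => vertexTypeS τ p.1 p.2 = 5).card : ℕ) : ℤ)
      = (((univ.filter fun p : Fin n × Fin k => vertexTypeS τ p.1 p.2 = 6).card + k : ℕ) : ℤ) := by
    push_cast
    linarith [h]
  exact_mod_cast h'

end Aux
section Aux2
open Finset

variable {n k : ℕ}

lemma phA_ofReal (ph : Phase) (t γ : ℝ) : phA ph (t : ℂ) (γ : ℂ) = ((aR ph t γ : ℝ) : ℂ) := by
  cases ph <;> simp [phA, aR, ← Complex.ofReal_sub, Complex.ofReal_sinh, Complex.ofReal_sin]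

lemma phB_ofReal (ph : Phase) (t γ : ℝ) : phB ph (t : ℂ) (γ : ℂ) = ((bR ph t γ : ℝ) : ℂ) := by
  cases ph <;> simp [phB, bR, ← Complex.ofReal_add, Complex.ofReal_sinh, Complex.ofReal_sin]

lemma phC_ofReal (ph : Phase) (γ : ℝ) : phC ph (γ : ℂ) = ((cR ph γ : ℝ) : ℂ) := by
  cases ph <;> simp [phC, cR, Complex.ofReal_sinh, Complex.ofReal_sin] <;> push_cast <;> ring

lemma aR_pos {ph : Phase} {t γ : ℝ} (h : phRange ph t γ) : 0 < aR ph t γ := by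
  cases ph with
  | fe =>
    obtain ⟨h1, h2⟩ := h
    have := abs_lt.mp h2
    simp only [aR]
    rw [Real.sinh_pos_iff]; linarith [this.1, this.2]
  | dis =>
    obtain ⟨h1, h2⟩ := h
    have := abs_lt.mp h1
    simp only [aR]
    exact Real.sin_pos_of_pos_of_lt_pi (by linarith [this.2])
      (by nlinarith [Real.pi_gt_three, this.1])
  | afe =>
    have := abs_lt.mp h
    simp only [aR]; rw [Real.sinh_pos_iff]; linarith [this.2]
  | bd =>
    have := abs_lt.mp h
    simp only [bR, aR]; linarith [this.2]

lemma bR_pos {ph : Phase} {t γ : ℝ} (h : phRange ph t γ) : 0 < bR ph t γ := by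
  cases ph with
  | fe =>
    obtain ⟨h1, h2⟩ := h
    have := abs_lt.mp h2
    simp only [bR]
    rw [Real.sinh_pos_iff]; linarith [this.1]
  | dis =>
    obtain ⟨h1, h2⟩ := h
    have := abs_lt.mp h1
    simp only [bR]
    exact Real.sin_pos_of_pos_of_lt_pi (by linarith [this.1])
      (by nlinarith [Real.pi_gt_three, this.2])
  | afe =>
    have := abs_lt.mp h
    simp only [bR]; rw [Real.sinh_pos_iff]; linarith [this.1]
  | bd =>
    have := abs_lt.mp h
    simp only [bR]; linarith [this.1]

lemma cR_ne {ph : Phase} {t γ : ℝ} (h : phRange ph t γ) : cR ph γ ≠ 0 := by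
  cases ph with
  | fe =>
    obtain ⟨h1, h2⟩ := h
    simp only [cR, ne_eq, Real.sinh_eq_zero]
    intro hc
    rw [show γ = 0 by linarith] at h1
    simp at h1
  | dis =>
    obtain ⟨h1, h2⟩ := h
    have h0 : 0 ≤ |t| := abs_nonneg t
    have : 0 < Real.sin (2 * γ) :=
      Real.sin_pos_of_pos_of_lt_pi (by linarith) (by nlinarith [Real.pi_gt_three])
    simp only [cR]; linarith
  | afe =>
    have hγpos : 0 < γ := lt_of_le_of_lt (abs_nonneg t) h
    have : 0 < Real.sinh (2 * γ) := by rw [Real.sinh_pos_iff]; linarith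
    simp only [cR]; linarith
  | bd =>
    have hγpos : 0 < γ := lt_of_le_of_lt (abs_nonneg t) h
    simp only [cR]; intro hc; linarith

/-- the canonical strip configuration exiting at the columns of `ν`. -/
def stdStrip (ν : Fin k → Fin n) : SConfig n k :=
  (fun i j => decide ((i : ℕ) ≤ ((ν j : Fin n) : ℕ)),
   fun i y => decide (∃ j : Fin k, ((j : ℕ) < (y : ℕ)) ∧ ν j = i))

lemma stdStrip_isStrip {S : Finset (Fin n)} (ν : Fin k → Fin n) (hmono : StrictMono ν)
    (hmem : ∀ i, i ∈ S ↔ ∃ j, ν j = i) : IsStrip S (stdStrip ν) := by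
  have hinj : Function.Injective ν := hmono.injective
  refine ⟨?_, ?_, ?_, ?_, ?_⟩
  · intro i j
    by_cases hij : ∃ j0 : Fin k, ν j0 = i
    · obtain ⟨j0, hj0⟩ := hij
      rcases lt_trichotomy (j0 : ℕ) (j : ℕ) with hlt | heq | hgt
      · -- path already turned below: bottom and top true, i ≠ ν j so left = right
        have hne : (i : ℕ) ≠ (ν j : ℕ) := by
          intro hc
          have : ν j0 = ν j := by rw [hj0]; exact Fin.ext hc
          have := hinj this
          omega
        have hbot : (stdStrip ν).2 i j.castSucc = true := by
          simp only [stdStrip, decide_eq_true_eq]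
          exact ⟨j0, by simpa using hlt, hj0⟩
        have htop : (stdStrip ν).2 i j.succ = true := by
          simp only [stdStrip, decide_eq_true_eq]
          exact ⟨j0, by simp [Fin.val_succ]; omega, hj0⟩
        have hlr : (stdStrip ν).1 i.castSucc j = (stdStrip ν).1 i.succ j := by
          simp only [stdStrip, Fin.coe_castSucc, Fin.val_succ, decide_eq_decide]
          omega
        rw [hbot, htop, hlr]
      · -- turning vertex: i = ν j
        have hjj : j0 = j := Fin.ext heq
        have hij : i = ν j := by rw [← hj0, hjj]
        have hbot : (stdStrip ν).2 i j.castSucc = false := by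
          simp only [stdStrip, decide_eq_false_iff_not]
          rintro ⟨j1, hj1lt, hj1⟩
          have : j1 = j0 := hinj (by rw [hj1, hj0])
          simp only [Fin.coe_castSucc] at hj1lt
          omega
        have htop : (stdStrip ν).2 i j.succ = true := by
          simp only [stdStrip, decide_eq_true_eq]
          exact ⟨j0, by simp [Fin.val_succ]; omega, hj0⟩
        have hleft : (stdStrip ν).1 i.castSucc j = true := by
          simp only [stdStrip, decide_eq_true_eq, Fin.coe_castSucc]
          rw [hij]
        have hright : (stdStrip ν).1 i.succ j = false := by
          simp only [stdStrip, decide_eq_false_iff_not, Fin.val_succ]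
          rw [hij]; omega
        rw [hbot, htop, hleft, hright]; rfl
      · -- not yet turned: i > ν j
        have hgtv : (ν j : ℕ) < (i : ℕ) := by
          have := hmono (show j < j0 from Fin.lt_def.mpr hgt)
          rw [hj0] at this
          exact this
        have hbot : (stdStrip ν).2 i j.castSucc = false := by
          simp only [stdStrip, decide_eq_false_iff_not]
          rintro ⟨j1, hj1lt, hj1⟩
          have : j1 = j0 := hinj (by rw [hj1, hj0])
          simp only [Fin.coe_castSucc] at hj1lt
          omega
        have htop : (stdStrip ν).2 i j.succ = false := by
          simp only [stdStrip, decide_eq_false_iff_not]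
          rintro ⟨j1, hj1lt, hj1⟩
          have : j1 = j0 := hinj (by rw [hj1, hj0])
          simp only [Fin.val_succ] at hj1lt
          omega
        have hlr : (stdStrip ν).1 i.castSucc j = (stdStrip ν).1 i.succ j := by
          simp only [stdStrip, Fin.coe_castSucc, Fin.val_succ, decide_eq_decide]
          omega
        rw [hbot, htop, hlr]
    · -- i not in the range of ν
      push_neg at hij
      have hbot : (stdStrip ν).2 i j.castSucc = false := by
        simp only [stdStrip, decide_eq_false_iff_not]
        rintro ⟨j1, _, hj1⟩; exact hij j1 hj1
      have htop : (stdStrip ν).2 i j.succ = false := by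
        simp only [stdStrip, decide_eq_false_iff_not]
        rintro ⟨j1, _, hj1⟩; exact hij j1 hj1
      have hne : (i : ℕ) ≠ (ν j : ℕ) := fun hc => hij j (Fin.ext hc.symm)
      have hlr : (stdStrip ν).1 i.castSucc j = (stdStrip ν).1 i.succ j := by
        simp only [stdStrip, Fin.coe_castSucc, Fin.val_succ, decide_eq_decide]
        omega
      rw [hbot, htop, hlr]
  · intro j; simp [stdStrip]
  · intro j
    simp only [stdStrip, Fin.val_last, decide_eq_false_iff_not, not_le]
    exact (ν j).isLt
  · intro i
    simp [stdStrip]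
  · intro i
    simp only [stdStrip, decide_eq_true_eq]
    rw [hmem i]
    constructor
    · rintro ⟨j, _, hj⟩; exact ⟨j, hj⟩
    · rintro ⟨j, hj⟩; exact ⟨j, by simp [Fin.val_last, Fin.is_lt], hj⟩

lemma strip_nonempty (S : Finset (Fin n)) (hS : S.card = k) :
    Nonempty {τ : SConfig n k // IsStrip S τ} := by
  refine ⟨⟨stdStrip (fun j => ((S.orderIsoOfFin hS j : Fin n))), ?_⟩⟩
  refine stdStrip_isStrip _ (fun a b hab => (S.orderIsoOfFin hS).strictMono hab) (fun i => ?_)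
  constructor
  · intro hi
    exact ⟨(S.orderIsoOfFin hS).symm ⟨i, hi⟩, by simp⟩
  · rintro ⟨j, hj⟩
    rw [← hj]; exact (S.orderIsoOfFin hS j).2

end Aux2
section Aux3
open Finset

variable {n k : ℕ}

/-- strip weight of a configuration with row parameters `ξ`. -/
noncomputable def sw (ph : Phase) (n k : ℕ) (ξ : Fin k → ℂ) (t γ : ℝ) (τ : SConfig n k) : ℂ :=
  ∏ p : Fin n × Fin k,
    (if vertexTypeS τ p.1 p.2 = 1 ∨ vertexTypeS τ p.1 p.2 = 2 then
        phA ph ((t : ℂ) + ξ p.2) (γ : ℂ)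
      else if vertexTypeS τ p.1 p.2 = 3 ∨ vertexTypeS τ p.1 p.2 = 4 then
        phB ph ((t : ℂ) + ξ p.2) (γ : ℂ)
      else phC ph (γ : ℂ))

lemma Fsym_eq_sum_sw (ph : Phase) (S : Finset (Fin n)) (ξ : Fin k → ℂ) (t γ : ℝ) :
    Fsym ph n k S ξ t γ = ∑ τ : {τ : SConfig n k // IsStrip S τ}, sw ph n k ξ t γ τ.1 := rfl

/-- the real homogeneous strip weight. -/
noncomputable def swR (ph : Phase) (n k : ℕ) (t γ : ℝ) (τ : SConfig n k) : ℝ :=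
  ∏ p : Fin n × Fin k,
    (if vertexTypeS τ p.1 p.2 = 1 ∨ vertexTypeS τ p.1 p.2 = 2 then aR ph t γ
      else if vertexTypeS τ p.1 p.2 = 3 ∨ vertexTypeS τ p.1 p.2 = 4 then bR ph t γ
      else cR ph γ)

lemma sw_zero_eq_swR (ph : Phase) (t γ : ℝ) (τ : SConfig n k) :
    sw ph n k (fun _ => 0) t γ τ = ((swR ph n k t γ τ : ℝ) : ℂ) := by
  rw [sw, swR, Complex.ofReal_prod]
  refine Finset.prod_congr rfl fun p _ => ?_
  rw [apply_ite (fun x : ℝ => (x : ℂ)), apply_ite (fun x : ℝ => (x : ℂ))]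
  rw [← phA_ofReal, ← phB_ofReal, ← phC_ofReal]
  simp

lemma swR_mul_pos {ph : Phase} {t γ : ℝ} (h : phRange ph t γ) {S : Finset (Fin n)}
    {τ : SConfig n k} (hτ : IsStrip S τ) : 0 < swR ph n k t γ τ * cR ph γ ^ k := by
  have hty : ∀ p : Fin n × Fin k, vertexTypeS τ p.1 p.2 = 1 ∨ vertexTypeS τ p.1 p.2 = 2 ∨
      vertexTypeS τ p.1 p.2 = 3 ∨ vertexTypeS τ p.1 p.2 = 4 ∨ vertexTypeS τ p.1 p.2 = 5 ∨
      vertexTypeS τ p.1 p.2 = 6 := fun p => vtype_valid _ _ _ _ (hτ.1 p.1 p.2)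
  rw [swR, prod_weight _ hty]
  rw [strip_c5c6 hτ]
  set c6 := (univ.filter fun p : Fin n × Fin k => vertexTypeS τ p.1 p.2 = 6).card
  have ha := aR_pos h
  have hb := bR_pos h
  have hc := cR_ne h
  have hpow : cR ph γ ^ (c6 + k + c6) * cR ph γ ^ k = (cR ph γ ^ (c6 + k)) ^ 2 := by
    rw [← pow_add, ← pow_mul]
    congr 1
    ring
  rw [mul_assoc, hpow]
  exact mul_pos (mul_pos (pow_pos ha _) (pow_pos hb _))
    (pow_two_pos_of_ne_zero (pow_ne_zero _ hc))

lemma Fsym_zero_ne {ph : Phase} {t γ : ℝ} (h : phRange ph t γ) {S : Finset (Fin n)}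
    (hS : S.card = k) : Fsym ph n k S (fun _ => 0) t γ ≠ 0 := by
  rw [Fsym_eq_sum_sw]
  rw [Finset.sum_congr rfl fun τ _ => sw_zero_eq_swR ph t γ τ.1, ← Complex.ofReal_sum]
  rw [ne_eq, Complex.ofReal_eq_zero]
  have hne : (univ : Finset {τ : SConfig n k // IsStrip S τ}).Nonempty :=
    univ_nonempty_iff.mpr (strip_nonempty S hS)
  have hpos : 0 < (∑ τ : {τ : SConfig n k // IsStrip S τ}, swR ph n k t γ τ.1) * cR ph γ ^ k := by
    rw [Finset.sum_mul]
    exact Finset.sum_pos (fun τ _ => swR_mul_pos h τ.2) hne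
  intro hc
  rw [hc, zero_mul] at hpos
  exact lt_irrefl 0 hpos

end Aux3
section Aux4
open Finset

variable {n k : ℕ}

/-- restriction of a square configuration to the bottom `k` rows. -/
def botc (hkn : k ≤ n) (σ : Config n) : SConfig n k :=
  (fun i j => σ.1 i (Fin.castLE hkn j),
   fun i y => σ.2 i (Fin.castLE (Nat.succ_le_succ hkn) y))

/-- gluing a strip onto the top rows of a square configuration. -/
def gluec (τ : SConfig n k) (σ : Config n) : Config n :=
  (fun i j => if h : (j : ℕ) < k then τ.1 i ⟨j, h⟩ else σ.1 i j,
   fun i y => if h : (y : ℕ) ≤ k then τ.2 i ⟨y, Nat.lt_succ_of_le h⟩ else σ.2 i y)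

lemma botc_vertexType (hkn : k ≤ n) (σ : Config n) (i : Fin n) (j : Fin k) :
    vertexTypeS (botc hkn σ) i j = vertexType σ i (Fin.castLE hkn j) := rfl

lemma rowFinF_eq_iff (σ : DWBC n) (hkn : k ≤ n) (S : Finset (Fin n)) :
    rowFinF σ k = S ↔ ∀ i, (σ.1.2 i ⟨k, Nat.lt_succ_of_le hkn⟩ = true ↔ i ∈ S) := by
  rw [rowFinF, dif_pos hkn]
  constructor
  · intro h i
    rw [← h]
    simp
  · intro h
    ext i
    simp [h i]

lemma botc_isStrip {σ : Config n} {S : Finset (Fin n)} (hkn : k ≤ n) (hσ : IsDWBC σ)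
    (hrow : ∀ i, (σ.2 i ⟨k, Nat.lt_succ_of_le hkn⟩ = true ↔ i ∈ S)) :
    IsStrip S (botc hkn σ) := by
  obtain ⟨hcon, hL, hR, hB, hT⟩ := hσ
  refine ⟨fun i j => ?_, fun j => hL _, fun j => hR _, fun i => ?_, fun i => ?_⟩
  · have := hcon i (Fin.castLE hkn j)
    convert this using 3 <;> rfl
  · have := hB i
    convert this using 2 <;> exact congrArg (σ.2 i) (Fin.ext (by simp [botc]))
  · have := hrow i
    convert this using 3 <;> exact congrArg (σ.2 i) (Fin.ext (by simp [botc]))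

lemma gluec_H_high (τ : SConfig n k) (σ : Config n) (i' : Fin (n + 1)) (j : Fin n)
    (hj : k ≤ (j : ℕ)) : (gluec τ σ).1 i' j = σ.1 i' j := dif_neg (not_lt.mpr hj)

lemma gluec_V_high {τ : SConfig n k} {σ : Config n} {S : Finset (Fin n)} (hkn : k ≤ n)
    (hrow : ∀ i, (σ.2 i ⟨k, Nat.lt_succ_of_le hkn⟩ = true ↔ i ∈ S))
    (hτtop : ∀ i, (τ.2 i (Fin.last k) = true ↔ i ∈ S))
    (i : Fin n) (y : Fin (n + 1)) (hy : k ≤ (y : ℕ)) : (gluec τ σ).2 i y = σ.2 i y := by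
  by_cases h : (y : ℕ) ≤ k
  · have hyk : (y : ℕ) = k := le_antisymm h hy
    have hy' : y = ⟨k, Nat.lt_succ_of_le hkn⟩ := Fin.ext hyk
    show (if h : (y : ℕ) ≤ k then τ.2 i ⟨y, Nat.lt_succ_of_le h⟩ else σ.2 i y) = σ.2 i y
    rw [dif_pos h]
    have h1 : (⟨(y : ℕ), Nat.lt_succ_of_le h⟩ : Fin (k + 1)) = Fin.last k := Fin.ext hyk
    rw [h1, Bool.eq_iff_iff, hτtop i, hy', hrow i]
  · exact dif_neg h

lemma gluec_isDWBC {τ : SConfig n k} {σ : Config n} {S : Finset (Fin n)} (hkn : k ≤ n)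
    (hσ : IsDWBC σ) (hrow : ∀ i, (σ.2 i ⟨k, Nat.lt_succ_of_le hkn⟩ = true ↔ i ∈ S))
    (hτ : IsStrip S τ) : IsDWBC (gluec τ σ) := by
  obtain ⟨hcon, hL, hR, hB, hT⟩ := hσ
  obtain ⟨hcon', hL', hR', hB', hT'⟩ := hτ
  refine ⟨fun i j => ?_, fun j => ?_, fun j => ?_, fun i => ?_, fun i => ?_⟩
  · by_cases hj : (j : ℕ) < k
    · have e1 : (gluec τ σ).1 i.castSucc j = τ.1 i.castSucc ⟨j, hj⟩ := dif_pos hj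
      have e2 : (gluec τ σ).1 i.succ j = τ.1 i.succ ⟨j, hj⟩ := dif_pos hj
      have e3 : (gluec τ σ).2 i j.castSucc = τ.2 i (⟨(j : ℕ), hj⟩ : Fin k).castSucc := by
        show (if h : ((j.castSucc : Fin (n+1)) : ℕ) ≤ k then _ else _) = _
        rw [dif_pos (show ((j.castSucc : Fin (n+1)) : ℕ) ≤ k from le_of_lt hj)]
        congr 1
      have e4 : (gluec τ σ).2 i j.succ = τ.2 i (⟨(j : ℕ), hj⟩ : Fin k).succ := by
        show (if h : ((j.succ : Fin (n+1)) : ℕ) ≤ k then _ else _) = _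
        rw [dif_pos (show ((j.succ : Fin (n+1)) : ℕ) ≤ k from hj)]
        congr 1
      rw [e1, e2, e3, e4]
      exact hcon' i ⟨j, hj⟩
    · have hj' : k ≤ (j : ℕ) := not_lt.mp hj
      rw [gluec_H_high τ σ _ j hj', gluec_H_high τ σ _ j hj',
        gluec_V_high hkn hrow hT' i j.castSucc (by simpa using hj'),
        gluec_V_high hkn hrow hT' i j.succ (by simp [Fin.val_succ]; omega)]
      exact hcon i j
  · by_cases hj : (j : ℕ) < k
    · show (if h : (j : ℕ) < k then _ else _) = _
      rw [dif_pos hj]; exact hL' _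
    · show (if h : (j : ℕ) < k then _ else _) = _
      rw [dif_neg hj]; exact hL _
  · by_cases hj : (j : ℕ) < k
    · show (if h : (j : ℕ) < k then _ else _) = _
      rw [dif_pos hj]; exact hR' _
    · show (if h : (j : ℕ) < k then _ else _) = _
      rw [dif_neg hj]; exact hR _
  · have h0 : ((0 : Fin (n+1)) : ℕ) ≤ k := by simp
    show (if h : ((0 : Fin (n+1)) : ℕ) ≤ k then τ.2 i ⟨((0 : Fin (n+1)) : ℕ), Nat.lt_succ_of_le h⟩ else σ.2 i 0) = _
    rw [dif_pos h0]
    have he : (⟨((0 : Fin (n+1)) : ℕ), Nat.lt_succ_of_le h0⟩ : Fin (k+1)) = 0 :=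
      Fin.ext (by simp)
    rw [he]; exact hB' i
  · rw [gluec_V_high hkn hrow hT' i (Fin.last n) (by simp [Fin.val_last, hkn])]
    exact hT i

lemma gluec_row {τ : SConfig n k} {σ : Config n} {S : Finset (Fin n)} (hkn : k ≤ n)
    (hrow : ∀ i, (σ.2 i ⟨k, Nat.lt_succ_of_le hkn⟩ = true ↔ i ∈ S))
    (hτtop : ∀ i, (τ.2 i (Fin.last k) = true ↔ i ∈ S)) :
    ∀ i, ((gluec τ σ).2 i ⟨k, Nat.lt_succ_of_le hkn⟩ = true ↔ i ∈ S) := by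
  intro i
  rw [gluec_V_high hkn hrow hτtop i _ (le_refl k)]
  exact hrow i

lemma botc_gluec (hkn : k ≤ n) (τ : SConfig n k) (σ : Config n) :
    botc hkn (gluec τ σ) = τ := by
  refine Prod.ext ?_ ?_
  · funext i j
    show (if h : ((Fin.castLE hkn j : Fin n) : ℕ) < k then _ else _) = _
    rw [dif_pos (show ((Fin.castLE hkn j : Fin n) : ℕ) < k from j.isLt)]
    exact congrArg (τ.1 i) (Fin.ext rfl)
  · funext i y
    show (if h : ((Fin.castLE (Nat.succ_le_succ hkn) y : Fin (n+1)) : ℕ) ≤ k then _ else _) = _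
    rw [dif_pos (show ((Fin.castLE (Nat.succ_le_succ hkn) y : Fin (n+1)) : ℕ) ≤ k from
      Nat.lt_succ_iff.mp y.isLt)]
    exact congrArg (τ.2 i) (Fin.ext rfl)

lemma gluec_botc_gluec (hkn : k ≤ n) (τ : SConfig n k) (σ : Config n) :
    gluec (botc hkn σ) (gluec τ σ) = σ := by
  refine Prod.ext ?_ ?_
  · funext i j
    by_cases h : (j : ℕ) < k
    · show (if h' : (j : ℕ) < k then (botc hkn σ).1 i ⟨j, h'⟩ else _) = _
      rw [dif_pos h]
      show σ.1 i (Fin.castLE hkn ⟨(j : ℕ), h⟩) = σ.1 i j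
      congr 1
    · show (if h' : (j : ℕ) < k then _ else (gluec τ σ).1 i j) = _
      rw [dif_neg h]
      exact gluec_H_high τ σ i j (not_lt.mp h)
  · funext i y
    by_cases h : (y : ℕ) ≤ k
    · show (if h' : (y : ℕ) ≤ k then (botc hkn σ).2 i ⟨y, Nat.lt_succ_of_le h'⟩ else _) = _
      rw [dif_pos h]
      show σ.2 i (Fin.castLE (Nat.succ_le_succ hkn) ⟨(y : ℕ), Nat.lt_succ_of_le h⟩) = σ.2 i y
      congr 1
    · show (if h' : (y : ℕ) ≤ k then _ else (gluec τ σ).2 i y) = _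
      rw [dif_neg h]
      exact dif_neg h

lemma gluec_vertexType_high {τ : SConfig n k} {σ : Config n} {S : Finset (Fin n)} (hkn : k ≤ n)
    (hrow : ∀ i, (σ.2 i ⟨k, Nat.lt_succ_of_le hkn⟩ = true ↔ i ∈ S))
    (hτtop : ∀ i, (τ.2 i (Fin.last k) = true ↔ i ∈ S))
    (i j : Fin n) (hj : k ≤ (j : ℕ)) :
    vertexType (gluec τ σ) i j = vertexType σ i j := by
  unfold vertexType
  rw [gluec_H_high τ σ _ j hj, gluec_H_high τ σ _ j hj,
    gluec_V_high hkn hrow hτtop i j.castSucc (by simpa using hj),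
    gluec_V_high hkn hrow hτtop i j.succ (by simp [Fin.val_succ]; omega)]

end Aux4
section Aux5
open Finset

variable {n k : ℕ}

/-- the inhomogeneous weight of a square configuration, with row parameters `ξ`. -/
noncomputable def Wv (ph : Phase) (n k : ℕ) (ξ : Fin k → ℂ) (t γ : ℝ) (σ : Config n) : ℂ :=
  ∏ p : Fin n × Fin n, vertexWt (phA ph) (phB ph) (phC ph) (fun _ => 0)
    (fun y => if h : (y : ℕ) < k then (t : ℂ) + ξ ⟨y, h⟩ else (t : ℂ)) (γ : ℂ) σ p.1 p.2

/-- the homogeneous weight of the top `n - k` rows. -/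
noncomputable def Rv (ph : Phase) (n k : ℕ) (t γ : ℝ) (σ : Config n) : ℂ :=
  ∏ p ∈ univ.filter (fun p : Fin n × Fin n => k ≤ (p.2 : ℕ)),
    vertexWt (phA ph) (phB ph) (phC ph) (fun _ => 0) (fun _ => (t : ℂ)) (γ : ℂ) σ p.1 p.2

lemma vertexWt_congr {A B : ℂ → ℂ → ℂ} {C : ℂ → ℂ} {χ ψ : Fin n → ℂ} {γ : ℂ}
    {σ σ' : Config n} {i j : Fin n} (h : vertexType σ i j = vertexType σ' i j) :
    vertexWt A B C χ ψ γ σ i j = vertexWt A B C χ ψ γ σ' i j := by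
  unfold vertexWt
  rw [h]

lemma weight_factor (ph : Phase) (hkn : k ≤ n) (ξ : Fin k → ℂ) (t γ : ℝ) (σ : Config n) :
    Wv ph n k ξ t γ σ = sw ph n k ξ t γ (botc hkn σ) * Rv ph n k t γ σ := by
  rw [Wv, ← Finset.prod_filter_mul_prod_filter_not univ (fun p : Fin n × Fin n => (p.2 : ℕ) < k)]
  congr 1
  · -- bottom strip part
    have hinj : Function.Injective (fun p : Fin n × Fin k => (p.1, Fin.castLE hkn p.2)) := by
      rintro ⟨a1, a2⟩ ⟨b1, b2⟩ hab
      simp only [Prod.mk.injEq] at hab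
      exact Prod.ext hab.1 (Fin.castLE_injective hkn hab.2)
    have hmap : univ.filter (fun p : Fin n × Fin n => (p.2 : ℕ) < k)
        = Finset.map ⟨fun p : Fin n × Fin k => (p.1, Fin.castLE hkn p.2), hinj⟩ univ := by
      ext ⟨i, j⟩
      simp only [mem_filter, mem_univ, true_and, Finset.mem_map, Function.Embedding.coeFn_mk,
        Prod.mk.injEq, Prod.exists]
      constructor
      · intro hj
        exact ⟨i, ⟨(j : ℕ), hj⟩, ⟨rfl, Fin.ext rfl⟩⟩
      · rintro ⟨a, b, rfl, rfl⟩
        exact b.isLt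
    rw [hmap, Finset.prod_map, sw]
    refine Finset.prod_congr rfl fun p _ => ?_
    simp only [Function.Embedding.coeFn_mk]
    have hlt : ((Fin.castLE hkn p.2 : Fin n) : ℕ) < k := p.2.isLt
    simp only [vertexWt, ← botc_vertexType hkn, dif_pos hlt, sub_zero]
    rfl
  · -- top part
    rw [Rv]
    refine Finset.prod_congr ?_ fun p hp => ?_
    · ext p
      simp [not_lt]
    · simp only [mem_filter, mem_univ, true_and, not_lt] at hp
      simp only [vertexWt, dif_neg (not_lt.mpr hp), sub_zero]

lemma Rv_gluec {τ : SConfig n k} {σ : Config n} {S : Finset (Fin n)} (ph : Phase)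
    (hkn : k ≤ n) (t γ : ℝ)
    (hrow : ∀ i, (σ.2 i ⟨k, Nat.lt_succ_of_le hkn⟩ = true ↔ i ∈ S))
    (hτtop : ∀ i, (τ.2 i (Fin.last k) = true ↔ i ∈ S)) :
    Rv ph n k t γ (gluec τ σ) = Rv ph n k t γ σ := by
  rw [Rv, Rv]
  refine Finset.prod_congr rfl fun p hp => ?_
  simp only [mem_filter, mem_univ, true_and] at hp
  exact vertexWt_congr (gluec_vertexType_high hkn hrow hτtop p.1 p.2 hp)

end Aux5
section Aux6
open Finset

variable {n k : ℕ}

/-- the exchange involution swapping the bottom strip of a DWBC configuration with a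
given strip configuration. -/
noncomputable def Ex (hkn : k ≤ n) (S : Finset (Fin n)) :
    (DWBC n × {τ : SConfig n k // IsStrip S τ}) →
      (DWBC n × {τ : SConfig n k // IsStrip S τ}) := fun p =>
  if h : rowFinF p.1 k = S then
    (⟨gluec p.2.1 p.1.1,
        gluec_isDWBC hkn p.1.2 ((rowFinF_eq_iff p.1 hkn S).mp h) p.2.2⟩,
     ⟨botc hkn p.1.1, botc_isStrip hkn p.1.2 ((rowFinF_eq_iff p.1 hkn S).mp h)⟩)
  else p

lemma Ex_row (hkn : k ≤ n) (S : Finset (Fin n)) (p : DWBC n × {τ : SConfig n k // IsStrip S τ})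
    (h : rowFinF p.1 k = S) :
    rowFinF (⟨gluec p.2.1 p.1.1,
      gluec_isDWBC hkn p.1.2 ((rowFinF_eq_iff p.1 hkn S).mp h) p.2.2⟩ : DWBC n) k = S :=
  (rowFinF_eq_iff _ hkn S).mpr
    (gluec_row hkn ((rowFinF_eq_iff p.1 hkn S).mp h) p.2.2.2.2.2.2)

lemma Ex_involutive (hkn : k ≤ n) (S : Finset (Fin n)) :
    Function.Involutive (Ex hkn S) := by
  intro p
  by_cases h : rowFinF p.1 k = S
  · have h1 : Ex hkn S p
        = (⟨gluec p.2.1 p.1.1,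
            gluec_isDWBC hkn p.1.2 ((rowFinF_eq_iff p.1 hkn S).mp h) p.2.2⟩,
           ⟨botc hkn p.1.1, botc_isStrip hkn p.1.2 ((rowFinF_eq_iff p.1 hkn S).mp h)⟩) :=
      dif_pos h
    rw [h1, Ex, dif_pos (Ex_row hkn S p h)]
    refine Prod.ext (Subtype.ext ?_) (Subtype.ext ?_)
    · exact gluec_botc_gluec hkn p.2.1 p.1.1
    · exact botc_gluec hkn p.2.1 p.1.1
  · have h1 : Ex hkn S p = p := dif_neg h
    rw [h1, h1]

lemma star (ph : Phase) (hkn : k ≤ n) (S : Finset (Fin n)) (ξ : Fin k → ℂ) (t γ : ℝ) :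
    (∑ σ : DWBC n, if rowFinF σ k = S then Wv ph n k ξ t γ σ.1 else 0)
      * Fsym ph n k S (fun _ => 0) t γ
    = Fsym ph n k S ξ t γ
      * (∑ σ : DWBC n, if rowFinF σ k = S then Wv ph n k (fun _ => 0) t γ σ.1 else 0) := by
  rw [Fsym_eq_sum_sw, Fsym_eq_sum_sw, Finset.sum_mul_sum, Finset.sum_mul_sum]
  set F : (DWBC n × {τ : SConfig n k // IsStrip S τ}) → ℂ := fun p =>
    (if rowFinF p.1 k = S then Wv ph n k ξ t γ p.1.1 else 0)
      * sw ph n k (fun _ => 0) t γ p.2.1 with hF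
  set G : (DWBC n × {τ : SConfig n k // IsStrip S τ}) → ℂ := fun p =>
    sw ph n k ξ t γ p.2.1
      * (if rowFinF p.1 k = S then Wv ph n k (fun _ => 0) t γ p.1.1 else 0) with hG
  have key : ∀ p, F (Ex hkn S p) = G p := by
    rintro ⟨σ, τ⟩
    by_cases h : rowFinF (σ, τ).1 k = S
    · rw [show Ex hkn S (σ, τ)
          = (⟨gluec τ.1 σ.1,
              gluec_isDWBC hkn σ.2 ((rowFinF_eq_iff σ hkn S).mp h) τ.2⟩,
             ⟨botc hkn σ.1, botc_isStrip hkn σ.2 ((rowFinF_eq_iff σ hkn S).mp h)⟩)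
          from dif_pos h]
      rw [hF, hG]
      simp only
      rw [if_pos (Ex_row hkn S (σ, τ) h), if_pos h]
      rw [weight_factor ph hkn ξ t γ (gluec τ.1 σ.1), botc_gluec hkn τ.1 σ.1,
        Rv_gluec ph hkn t γ ((rowFinF_eq_iff σ hkn S).mp h) τ.2.2.2.2.2,
        weight_factor ph hkn (fun _ => 0) t γ σ.1]
      ring
    · rw [show Ex hkn S (σ, τ) = (σ, τ) from dif_neg h]
      rw [hF, hG]
      simp only
      rw [if_neg h, if_neg h]
      ring
  calc ∑ σ : DWBC n, ∑ τ : {τ : SConfig n k // IsStrip S τ},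
        (if rowFinF σ k = S then Wv ph n k ξ t γ σ.1 else 0)
          * sw ph n k (fun _ => 0) t γ τ.1
      = ∑ p : DWBC n × {τ : SConfig n k // IsStrip S τ}, F p := by
        rw [Fintype.sum_prod_type]
    _ = ∑ p : DWBC n × {τ : SConfig n k // IsStrip S τ}, F (Ex hkn S p) :=
        (Equiv.sum_comp ((Ex_involutive hkn S).toPerm _) F).symm
    _ = ∑ p : DWBC n × {τ : SConfig n k // IsStrip S τ}, G p :=
        Finset.sum_congr rfl fun p _ => key p
    _ = ∑ σ : DWBC n, ∑ τ : {τ : SConfig n k // IsStrip S τ},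
          sw ph n k ξ t γ τ.1
            * (if rowFinF σ k = S then Wv ph n k (fun _ => 0) t γ σ.1 else 0) := by
        rw [Fintype.sum_prod_type]
    _ = _ := Finset.sum_comm
end Aux6
section Aux7
open Finset

variable {n k : ℕ}

lemma row_vanish (ph : Phase) (hkn : k ≤ n) {S : Finset (Fin n)} (hcard : S.card ≠ k)
    (ξ : Fin k → ℂ) (t γ : ℝ) :
    (∑ σ : DWBC n, if rowFinF σ k = S then Wv ph n k ξ t γ σ.1 else 0) = 0 :=
  Finset.sum_eq_zero fun σ _ => by
    rw [if_neg]
    intro h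
    exact hcard (strip_card (botc_isStrip hkn σ.2 ((rowFinF_eq_iff σ hkn S).mp h)))

lemma Zinh_partition (ph : Phase) (hkn : k ≤ n) (ξ : Fin k → ℂ) (t γ : ℝ) :
    (∑ σ : DWBC n, Wv ph n k ξ t γ σ.1)
      = ∑ S : Finset (Fin n), (if S.card = k then
          (∑ σ : DWBC n, if rowFinF σ k = S then Wv ph n k ξ t γ σ.1 else 0) else 0) := by
  have h1 : ∑ S : Finset (Fin n),
      (∑ σ : DWBC n, if rowFinF σ k = S then Wv ph n k ξ t γ σ.1 else 0)
      = ∑ σ : DWBC n, Wv ph n k ξ t γ σ.1 := by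
    rw [Finset.sum_comm]
    refine Finset.sum_congr rfl fun σ _ => ?_
    rw [Finset.sum_ite_eq univ (rowFinF σ k) (fun _ => Wv ph n k ξ t γ σ.1)]
    simp
  rw [← h1]
  refine Finset.sum_congr rfl fun S _ => ?_
  by_cases h : S.card = k
  · rw [if_pos h]
  · rw [if_neg h, row_vanish ph hkn h ξ t γ]

lemma Wv_zero (ph : Phase) (t γ : ℝ) (σ : Config n) :
    Wv ph n k (fun _ => 0) t γ σ
      = ∏ p : Fin n × Fin n, vertexWt (phA ph) (phB ph) (phC ph) (fun _ => 0)
          (fun _ => (t : ℂ)) (γ : ℂ) σ p.1 p.2 := by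
  have hψ : (fun y : Fin n => if h : (y : ℕ) < k then (t : ℂ) + (fun _ : Fin k => (0:ℂ)) ⟨y, h⟩
      else (t : ℂ)) = fun _ : Fin n => (t : ℂ) := by
    funext y
    split <;> simp
  rw [Wv, hψ]

lemma Wv_hom_real (ph : Phase) (t γ : ℝ) (σ : DWBC n) :
    Wv ph n k (fun _ => 0) t γ σ.1
      = ((wtABC (aR ph t γ) (bR ph t γ) (cR ph γ) σ.1 : ℝ) : ℂ) := by
  rw [Wv_zero]
  have hty : ∀ p : Fin n × Fin n, vertexType σ.1 p.1 p.2 = 1 ∨ vertexType σ.1 p.1 p.2 = 2 ∨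
      vertexType σ.1 p.1 p.2 = 3 ∨ vertexType σ.1 p.1 p.2 = 4 ∨ vertexType σ.1 p.1 p.2 = 5 ∨
      vertexType σ.1 p.1 p.2 = 6 := fun p => vtype_valid _ _ _ _ (σ.2.1 p.1 p.2)
  have hpt : ∀ p : Fin n × Fin n,
      vertexWt (phA ph) (phB ph) (phC ph) (fun _ => 0) (fun _ => (t : ℂ)) (γ : ℂ) σ.1 p.1 p.2
      = (if vertexType σ.1 p.1 p.2 = 1 ∨ vertexType σ.1 p.1 p.2 = 2 then ((aR ph t γ : ℝ) : ℂ)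
        else if vertexType σ.1 p.1 p.2 = 3 ∨ vertexType σ.1 p.1 p.2 = 4 then ((bR ph t γ : ℝ) : ℂ)
        else ((cR ph γ : ℝ) : ℂ)) := by
    intro p
    simp only [vertexWt, sub_zero, phA_ofReal, phB_ofReal, phC_ofReal]
  rw [Finset.prod_congr rfl fun p _ => hpt p,
    prod_weight (fun p : Fin n × Fin n => vertexType σ.1 p.1 p.2) hty]
  rw [wtABC]
  push_cast
  rfl

lemma Zinh_hom_eq_Fsym (ph : Phase) (t γ : ℝ) :
    Zinh n (phA ph) (phB ph) (phC ph) (fun _ => 0) (fun _ => (t : ℂ)) (γ : ℂ)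
      = Fsym ph n n univ (fun _ => 0) t γ := by
  rw [Zinh, Fsym]
  refine Fintype.sum_equiv (Equiv.subtypeEquivRight ?_) _ _ ?_
  · intro σ
    constructor
    · rintro ⟨h1, h2, h3, h4, h5⟩
      exact ⟨h1, h2, h3, h4, fun i => by simp [h5 i]⟩
    · rintro ⟨h1, h2, h3, h4, h5⟩
      exact ⟨h1, h2, h3, h4, fun i => (h5 i).mpr (mem_univ i)⟩
  · intro σ
    refine Finset.prod_congr rfl fun p _ => ?_
    simp [vertexWt, vertexType, vertexTypeS, sub_zero, add_zero, Equiv.subtypeEquivRight]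
    rfl

lemma Zinh_hom_ne {ph : Phase} {t γ : ℝ} (hrange : phRange ph t γ) :
    Zinh n (phA ph) (phB ph) (phC ph) (fun _ => 0) (fun _ => (t : ℂ)) (γ : ℂ) ≠ 0 := by
  rw [Zinh_hom_eq_Fsym]
  exact Fsym_zero_ne hrange (by simp)

lemma Zinh_hom_eq_sum (ph : Phase) (t γ : ℝ) :
    Zinh n (phA ph) (phB ph) (phC ph) (fun _ => 0) (fun _ => (t : ℂ)) (γ : ℂ)
      = ∑ σ : DWBC n, Wv ph n k (fun _ => 0) t γ σ.1 := by
  rw [Zinh]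
  exact Finset.sum_congr rfl fun σ _ => (Wv_zero ph t γ σ.1).symm

end Aux7

/-- **The normalized partition function is the generating function of the `k`-th row of
the monotone triangle:**
`Z̃_n(ξ₁,…,ξ_k; t, γ) = ∑_ν Prob((λ_1^k,…,λ_k^k) = ν) ·
  F^{sym}_ν(ξ₁,…,ξ_k; t,γ,n)/F^{sym}_ν(0,…,0; t,γ,n)`,
the sum running over `k`-element subsets `ν` of `{1,…,n}`; moreover all the normalizing
quantities are nonzero. -/
theorem normalized_partition_is_generating_function
    (ph : Phase) (t γ : ℝ) (hrange : phRange ph t γ)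
    (n k : ℕ) (hk : 1 ≤ k) (hkn : k ≤ n) (ξ : Fin k → ℂ) :
    (∀ S : Finset (Fin n), S.card = k → Fsym ph n k S (fun _ => 0) t γ ≠ 0) ∧
    Zinh n (phA ph) (phB ph) (phC ph) (fun _ => 0) (fun _ => (t : ℂ)) (γ : ℂ) ≠ 0 ∧
    Ztilde (phA ph) (phB ph) (phC ph) n k ξ t γ =
      ∑ S : Finset (Fin n),
        (if S.card = k then
          ((∑ σ : DWBC n, if rowFinF σ k = S then
              gibbs n (aR ph t γ) (bR ph t γ) (cR ph γ) σ else 0 : ℝ) : ℂ)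
            * (Fsym ph n k S ξ t γ / Fsym ph n k S (fun _ => 0) t γ)
        else 0) := by
  refine ⟨fun S hS => Fsym_zero_ne hrange hS, Zinh_hom_ne hrange, ?_⟩
  have hZ0 : Zinh n (phA ph) (phB ph) (phC ph) (fun _ => 0) (fun _ => (t : ℂ)) (γ : ℂ) ≠ 0 :=
    Zinh_hom_ne hrange
  have main : ∀ S : Finset (Fin n), S.card = k →
      ((∑ σ : DWBC n, if rowFinF σ k = S then
          gibbs n (aR ph t γ) (bR ph t γ) (cR ph γ) σ else 0 : ℝ) : ℂ)
        * (Fsym ph n k S ξ t γ / Fsym ph n k S (fun _ => 0) t γ)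
      = (∑ σ : DWBC n, if rowFinF σ k = S then Wv ph n k ξ t γ σ.1 else 0)
          / Zinh n (phA ph) (phB ph) (phC ph) (fun _ => 0) (fun _ => (t : ℂ)) (γ : ℂ) := by
    intro S hS
    have hF0 : Fsym ph n k S (fun _ => 0) t γ ≠ 0 := Fsym_zero_ne hrange hS
    have hg : ((∑ σ : DWBC n, if rowFinF σ k = S then
          gibbs n (aR ph t γ) (bR ph t γ) (cR ph γ) σ else 0 : ℝ) : ℂ)
        = (∑ σ : DWBC n, if rowFinF σ k = S then Wv ph n k (fun _ => 0) t γ σ.1 else 0)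
            / Zinh n (phA ph) (phB ph) (phC ph) (fun _ => 0) (fun _ => (t : ℂ)) (γ : ℂ) := by
      rw [Complex.ofReal_sum, Finset.sum_div]
      refine Finset.sum_congr rfl fun σ _ => ?_
      rw [apply_ite (fun x : ℝ => (x : ℂ))]
      by_cases h : rowFinF σ k = S
      · rw [if_pos h, if_pos h, gibbs, Complex.ofReal_div, Wv_hom_real ph t γ σ]
        congr 1
        rw [Zinh_hom_eq_sum (k := k) ph t γ,
          Finset.sum_congr rfl fun σ' _ => Wv_hom_real ph t γ σ', ← Complex.ofReal_sum]
      · rw [if_neg h, if_neg h]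
        simp
    rw [hg, div_mul_div_comm]
    have hstar := star ph hkn S ξ t γ
    rw [show (∑ σ : DWBC n, if rowFinF σ k = S then Wv ph n k (fun _ => 0) t γ σ.1 else 0)
          * Fsym ph n k S ξ t γ
        = (∑ σ : DWBC n, if rowFinF σ k = S then Wv ph n k ξ t γ σ.1 else 0)
          * Fsym ph n k S (fun _ => 0) t γ from by rw [mul_comm]; exact hstar.symm]
    exact mul_div_mul_right _ _ hF0
  have hZt : Ztilde (phA ph) (phB ph) (phC ph) n k ξ t γ
      = (∑ σ : DWBC n, Wv ph n k ξ t γ σ.1)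
        / Zinh n (phA ph) (phB ph) (phC ph) (fun _ => 0) (fun _ => (t : ℂ)) (γ : ℂ) := rfl
  rw [hZt, Zinh_partition ph hkn ξ t γ, Finset.sum_div]
  refine Finset.sum_congr rfl fun S _ => ?_
  by_cases h : S.card = k
  · rw [if_pos h, if_pos h]
    exact (main S h).symm
  · rw [if_neg h, if_neg h, zero_div]

end SixV
end

section
/- Equality of symmetric-weight and stochastic-weight Gibbs measures: let t>γ'>0 and set a=sinh(t+γ'), b=sinh(t−γ'), c=sinh(2γ') (so that Δ=(a²+b²−c²)/(2ab)>1 and a>b), q=e^{4γ'}, and w=(e^{2t−2γ'}−1)/(e^{2t+2γ'}−1) (then 0<w<1 and 0<q·w<1). Then for every n≥1, the Gibbs measure on DWBC configurations of the n×n square with weights (a,b,c) coincides with the probability measure that assigns to each DWBC configuration σ a probability proportional to w^{N₃(σ)}·(q·w)^{N₄(σ)}·(1−w)^{N₅(σ)}·(1−q·w)^{N₆(σ)} (i.e. the Gibbs measure for the stochastic weights 1,1,w,qw,1−w,1−qw assigned to Types 1–6 respectively). -/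
set_option maxHeartbeats 1000000


open scoped BigOperators
open Filter MeasureTheory Topology

namespace SixV


section Aux

lemma pv0 (A B C D : Bool) (h : b2n A + b2n B = b2n C + b2n D) :
    (b2n A : ℤ) - b2n C = (b2n D : ℤ) - b2n B := by revert A B C D; decide

lemma pv56 (A B C D : Bool) (h : b2n A + b2n B = b2n C + b2n D) :
    (if vtype A B C D = 5 then (1:ℤ) else 0) - (if vtype A B C D = 6 then (1:ℤ) else 0)
      = (b2n A : ℤ) - b2n C := by revert A B C D; decide

lemma pv34 (A B C D : Bool) (h : b2n A + b2n B = b2n C + b2n D) :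
    (if vtype A B C D = 3 then (1:ℤ) else 0) - (if vtype A B C D = 4 then (1:ℤ) else 0)
      = (b2n C : ℤ) - b2n B := by revert A B C D; decide

lemma pvall (A B C D : Bool) (h : b2n A + b2n B = b2n C + b2n D) :
    (if vtype A B C D = 1 then 1 else 0) + (if vtype A B C D = 2 then 1 else 0)
    + (if vtype A B C D = 3 then 1 else 0) + (if vtype A B C D = 4 then 1 else 0)
    + (if vtype A B C D = 5 then 1 else 0) + (if vtype A B C D = 6 then 1 else 0) = 1 := by
  revert A B C D; decide

lemma abel (n : ℕ) (u : Fin (n+1) → ℤ) :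
    ∑ i : Fin n, (i:ℤ) * (u i.castSucc - u i.succ)
      = (∑ i : Fin n, u i.succ) - n * u (Fin.last n) := by
  induction n with
  | zero => simp
  | succ n ih =>
    rw [Fin.sum_univ_castSucc (f := fun i : Fin (n+1) => (i:ℤ) * (u i.castSucc - u i.succ)),
        Fin.sum_univ_castSucc (f := fun i : Fin (n+1) => u i.succ)]
    have h2 := ih (fun i => u i.castSucc)
    simp only [Fin.succ_castSucc, Fin.coe_castSucc, Fin.val_last, Fin.succ_last] at h2 ⊢
    rw [h2]
    push_cast
    ring

lemma tel (n : ℕ) (u : Fin (n+1) → ℤ) :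
    ∑ i : Fin n, (u i.castSucc - u i.succ) = u 0 - u (Fin.last n) := by
  rw [Finset.sum_sub_distrib,
      show (∑ i : Fin n, u i.castSucc) = (∑ x : Fin (n+1), u x) - u (Fin.last n) by
        rw [Fin.sum_univ_castSucc]; ring,
      show (∑ i : Fin n, u i.succ) = (∑ x : Fin (n+1), u x) - u 0 by
        rw [Fin.sum_univ_succ]; ring]
  ring

lemma gsum (n : ℕ) : 2 * (∑ j : Fin n, ((j:ℕ):ℤ)) = n*n - n := by
  induction n with
  | zero => simp
  | succ n ih =>
    rw [Fin.sum_univ_castSucc]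
    simp only [Fin.coe_castSucc, Fin.val_last]
    push_cast
    push_cast at ih
    linarith

lemma key_counts {n : ℕ} (σ : Config n) (h : IsDWBC σ) :
    Ncount σ 3 = Ncount σ 4 ∧ Ncount σ 5 = Ncount σ 6 + n ∧
    Ncount σ 1 + Ncount σ 2 + Ncount σ 3 + Ncount σ 4 + Ncount σ 5 + Ncount σ 6 = n * n := by
  obtain ⟨hice, hL, hR, hB, hT⟩ := h
  have hN : ∀ ty : ℕ, (Ncount σ ty : ℤ)
      = ∑ p : Fin n × Fin n, (if vertexType σ p.1 p.2 = ty then (1:ℤ) else 0) := by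
    intro ty
    rw [Ncount, Finset.card_filter, Nat.cast_sum]
    simp
  set EH : ℤ := ∑ j : Fin n, ∑ x : Fin (n+1), (b2n (σ.1 x j) : ℤ) with hEH
  set EV : ℤ := ∑ i : Fin n, ∑ y : Fin (n+1), (b2n (σ.2 i y) : ℤ) with hEV
  have hHO : (∑ i : Fin n, ∑ j : Fin n, (b2n (σ.1 i.succ j) : ℤ)) = EH - n := by
    rw [Finset.sum_comm]
    have step : ∀ j : Fin n, (∑ i : Fin n, (b2n (σ.1 i.succ j) : ℤ))
        = (∑ x : Fin (n+1), (b2n (σ.1 x j) : ℤ)) - 1 := by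
      intro j
      rw [Fin.sum_univ_succ (f := fun x : Fin (n+1) => (b2n (σ.1 x j) : ℤ)), hL j]
      simp [b2n]
    rw [Finset.sum_congr rfl fun j _ => step j, Finset.sum_sub_distrib]
    simp [hEH]
  have hVI : (∑ i : Fin n, ∑ j : Fin n, (b2n (σ.2 i j.castSucc) : ℤ)) = EV - n := by
    have step : ∀ i : Fin n, (∑ j : Fin n, (b2n (σ.2 i j.castSucc) : ℤ))
        = (∑ y : Fin (n+1), (b2n (σ.2 i y) : ℤ)) - 1 := by
      intro i
      rw [Fin.sum_univ_castSucc (f := fun y : Fin (n+1) => (b2n (σ.2 i y) : ℤ)), hT i]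
      simp [b2n]
    rw [Finset.sum_congr rfl fun i _ => step i, Finset.sum_sub_distrib]
    simp [hEV]
  have h56 : (Ncount σ 5 : ℤ) - Ncount σ 6 = n := by
    rw [hN 5, hN 6, ← Finset.sum_sub_distrib]
    rw [Finset.sum_congr rfl fun (p : Fin n × Fin n) _ => show
      (if vertexType σ p.1 p.2 = 5 then (1:ℤ) else 0) - (if vertexType σ p.1 p.2 = 6 then (1:ℤ) else 0) = _
      from pv56 _ _ _ _ (hice p.1 p.2)]
    rw [Fintype.sum_prod_type, Finset.sum_comm]
    have step : ∀ j : Fin n,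
        (∑ i : Fin n, ((b2n (σ.1 i.castSucc j) : ℤ) - b2n (σ.1 i.succ j))) = 1 := by
      intro j
      rw [tel n (fun x => (b2n (σ.1 x j) : ℤ)), hL j, hR j]
      simp [b2n]
    rw [Finset.sum_congr rfl fun j _ => step j]
    simp
  have hEHV : EH = EV := by
    have key : ∑ p : Fin n × Fin n, ((p.1 : ℤ) - (p.2 : ℤ))
          * ((b2n (σ.1 p.1.castSucc p.2) : ℤ) - b2n (σ.1 p.1.succ p.2))
        = ∑ p : Fin n × Fin n, ((p.1 : ℤ) - (p.2 : ℤ))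
          * ((b2n (σ.2 p.1 p.2.succ) : ℤ) - b2n (σ.2 p.1 p.2.castSucc)) := by
      refine Finset.sum_congr rfl fun p _ => ?_
      have h0 := pv0 _ _ _ _ (hice p.1 p.2)
      rw [show ((b2n (σ.1 p.1.castSucc p.2) : ℤ) - b2n (σ.1 p.1.succ p.2))
          = ((b2n (σ.2 p.1 p.2.succ) : ℤ) - b2n (σ.2 p.1 p.2.castSucc)) from h0]
    have lhs : ∑ p : Fin n × Fin n, ((p.1 : ℤ) - (p.2 : ℤ))
          * ((b2n (σ.1 p.1.castSucc p.2) : ℤ) - b2n (σ.1 p.1.succ p.2))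
        = (EH - n) - (∑ j : Fin n, ((j:ℕ):ℤ)) := by
      rw [Fintype.sum_prod_type, Finset.sum_comm]
      have step : ∀ j : Fin n,
          (∑ i : Fin n, ((i : ℤ) - (j : ℤ))
            * ((b2n (σ.1 i.castSucc j) : ℤ) - b2n (σ.1 i.succ j)))
          = (∑ i : Fin n, (b2n (σ.1 i.succ j) : ℤ)) - (j : ℤ) := by
        intro j
        have e1 := abel n (fun x => (b2n (σ.1 x j) : ℤ))
        have e2 := tel n (fun x => (b2n (σ.1 x j) : ℤ))
        have expand : ∀ i : Fin n, ((i : ℤ) - (j : ℤ))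
              * ((b2n (σ.1 i.castSucc j) : ℤ) - b2n (σ.1 i.succ j))
            = (i : ℤ) * ((b2n (σ.1 i.castSucc j) : ℤ) - b2n (σ.1 i.succ j))
              - (j : ℤ) * ((b2n (σ.1 i.castSucc j) : ℤ) - b2n (σ.1 i.succ j)) := by
          intro i; ring
        rw [Finset.sum_congr rfl fun i _ => expand i, Finset.sum_sub_distrib,
            ← Finset.mul_sum, e1, e2, hL j, hR j]
        simp [b2n]
      rw [Finset.sum_congr rfl fun j _ => step j, Finset.sum_sub_distrib]
      have : (∑ j : Fin n, ∑ i : Fin n, (b2n (σ.1 i.succ j) : ℤ))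
          = ∑ i : Fin n, ∑ j : Fin n, (b2n (σ.1 i.succ j) : ℤ) := Finset.sum_comm
      rw [this, hHO]
    have rhs : ∑ p : Fin n × Fin n, ((p.1 : ℤ) - (p.2 : ℤ))
          * ((b2n (σ.2 p.1 p.2.succ) : ℤ) - b2n (σ.2 p.1 p.2.castSucc))
        = (∑ i : Fin n, ((i:ℕ):ℤ)) + (EV - n * n) := by
      rw [Fintype.sum_prod_type]
      have step : ∀ i : Fin n,
          (∑ j : Fin n, ((i : ℤ) - (j : ℤ))
            * ((b2n (σ.2 i j.succ) : ℤ) - b2n (σ.2 i j.castSucc)))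
          = (i : ℤ) + ((∑ j : Fin n, (b2n (σ.2 i j.succ) : ℤ)) - n) := by
        intro i
        have e1 := abel n (fun y => (b2n (σ.2 i y) : ℤ))
        have e2 := tel n (fun y => (b2n (σ.2 i y) : ℤ))
        have expand : ∀ j : Fin n, ((i : ℤ) - (j : ℤ))
              * ((b2n (σ.2 i j.succ) : ℤ) - b2n (σ.2 i j.castSucc))
            = (i : ℤ) * ((b2n (σ.2 i j.castSucc) : ℤ) - b2n (σ.2 i j.succ)) * (-1)
              + (j : ℤ) * ((b2n (σ.2 i j.castSucc) : ℤ) - b2n (σ.2 i j.succ)) := by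
          intro j; ring
        rw [Finset.sum_congr rfl fun j _ => expand j, Finset.sum_add_distrib,
            ← Finset.sum_mul, ← Finset.mul_sum, e1, e2, hB i, hT i]
        simp [b2n]
      rw [Finset.sum_congr rfl fun i _ => step i, Finset.sum_add_distrib,
          Finset.sum_sub_distrib]
      have hsucc : (∑ i : Fin n, ∑ j : Fin n, (b2n (σ.2 i j.succ) : ℤ)) = EV := by
        have step2 : ∀ i : Fin n, (∑ j : Fin n, (b2n (σ.2 i j.succ) : ℤ))
            = ∑ y : Fin (n+1), (b2n (σ.2 i y) : ℤ) := by
          intro i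
          rw [Fin.sum_univ_succ (f := fun y : Fin (n+1) => (b2n (σ.2 i y) : ℤ)), hB i]
          simp [b2n]
        rw [Finset.sum_congr rfl fun i _ => step2 i]
      rw [hsucc]
      simp
    have hg := gsum n
    rw [lhs, rhs] at key
    linarith
  have h34 : (Ncount σ 3 : ℤ) = Ncount σ 4 := by
    have : (Ncount σ 3 : ℤ) - Ncount σ 4 = 0 := by
      rw [hN 3, hN 4, ← Finset.sum_sub_distrib]
      rw [Finset.sum_congr rfl fun (p : Fin n × Fin n) _ => show
        (if vertexType σ p.1 p.2 = 3 then (1:ℤ) else 0) - (if vertexType σ p.1 p.2 = 4 then (1:ℤ) else 0) = _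
        from pv34 _ _ _ _ (hice p.1 p.2)]
      rw [Finset.sum_sub_distrib, Fintype.sum_prod_type, Fintype.sum_prod_type, hHO, hVI, hEHV]
      ring
    linarith
  have hall : Ncount σ 1 + Ncount σ 2 + Ncount σ 3 + Ncount σ 4 + Ncount σ 5 + Ncount σ 6
      = n * n := by
    simp only [Ncount, Finset.card_filter]
    rw [← Finset.sum_add_distrib, ← Finset.sum_add_distrib, ← Finset.sum_add_distrib,
        ← Finset.sum_add_distrib, ← Finset.sum_add_distrib]
    rw [Finset.sum_congr rfl fun (p : Fin n × Fin n) _ => show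
      (if vertexType σ p.1 p.2 = 1 then 1 else 0) + (if vertexType σ p.1 p.2 = 2 then 1 else 0)
      + (if vertexType σ p.1 p.2 = 3 then 1 else 0) + (if vertexType σ p.1 p.2 = 4 then 1 else 0)
      + (if vertexType σ p.1 p.2 = 5 then 1 else 0) + (if vertexType σ p.1 p.2 = 6 then 1 else 0) = 1
      from pvall _ _ _ _ (hice p.1 p.2)]
    simp
  exact ⟨by exact_mod_cast h34, by omega, hall⟩

lemma starAux (a b c q w : ℝ) (k1 k3 k6 n : ℕ)
    (e1 : w * (q * w) * a ^ 2 = b ^ 2) (e2 : (1 - w) * (1 - q * w) * a ^ 2 = c ^ 2) :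
    w ^ k3 * (q * w) ^ k3 * (1 - w) ^ (k6 + n) * (1 - q * w) ^ k6
        * (a ^ (k1 + 2 * k3 + 2 * k6) * c ^ n)
      = a ^ k1 * b ^ (k3 + k3) * c ^ (k6 + n + k6) * (1 - w) ^ n := by
  have E1 : w ^ k3 * (q * w) ^ k3 * (a ^ 2) ^ k3 = (b ^ 2) ^ k3 := by
    rw [← mul_pow, ← mul_pow, e1]
  have E2 : (1 - w) ^ k6 * (1 - q * w) ^ k6 * (a ^ 2) ^ k6 = (c ^ 2) ^ k6 := by
    rw [← mul_pow, ← mul_pow, e2]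
  calc w ^ k3 * (q * w) ^ k3 * (1 - w) ^ (k6 + n) * (1 - q * w) ^ k6
        * (a ^ (k1 + 2 * k3 + 2 * k6) * c ^ n)
      = (w ^ k3 * (q * w) ^ k3 * (a ^ 2) ^ k3) * ((1 - w) ^ k6 * (1 - q * w) ^ k6 * (a ^ 2) ^ k6)
        * ((1 - w) ^ n * (a ^ k1 * c ^ n)) := by ring
    _ = (b ^ 2) ^ k3 * (c ^ 2) ^ k6 * ((1 - w) ^ n * (a ^ k1 * c ^ n)) := by rw [E1, E2]
    _ = a ^ k1 * b ^ (k3 + k3) * c ^ (k6 + n + k6) * (1 - w) ^ n := by ring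

end Aux

/-- The stochastic weight of a configuration: Types 1 and 2 have weight `1`,
Type 3 ↦ `w`, Type 4 ↦ `q·w`, Type 5 ↦ `1−w`, Type 6 ↦ `1−q·w`. -/
noncomputable def wtSt {n : ℕ} (q w : ℝ) (σ : Config n) : ℝ :=
  w ^ Ncount σ 3 * (q * w) ^ Ncount σ 4 * (1 - w) ^ Ncount σ 5 * (1 - q * w) ^ Ncount σ 6

/-- The Gibbs measure with stochastic weights `1, 1, w, q·w, 1−w, 1−q·w`. -/
noncomputable def gibbsSt (n : ℕ) (q w : ℝ) (σ : DWBC n) : ℝ :=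
  wtSt q w σ.1 / ∑ σ' : DWBC n, wtSt q w σ'.1

/-- **Equality of symmetric-weight and stochastic-weight Gibbs measures:** for
`t > γ' > 0`, `a = sinh(t+γ')`, `b = sinh(t−γ')`, `c = sinh(2γ')`, `q = e^{4γ'}` and
`w = (e^{2t−2γ'}−1)/(e^{2t+2γ'}−1)` one has `0 < w < 1`, `0 < q·w < 1`, and on every
`n × n` square the DWBC Gibbs measures for the symmetric weights `(a,b,c)` and for the
stochastic weights `1, 1, w, q·w, 1−w, 1−q·w` coincide. -/
theorem symmetric_gibbs_eq_stochastic_gibbs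
    (t γ' : ℝ) (h0 : 0 < γ') (h1 : γ' < t)
    (a b c q w : ℝ)
    (ha : a = Real.sinh (t + γ')) (hb : b = Real.sinh (t - γ'))
    (hc : c = Real.sinh (2 * γ'))
    (hq : q = Real.exp (4 * γ'))
    (hw : w = (Real.exp (2 * t - 2 * γ') - 1) / (Real.exp (2 * t + 2 * γ') - 1)) :
    (0 < w ∧ w < 1 ∧ 0 < q * w ∧ q * w < 1) ∧
    ∀ n : ℕ, 1 ≤ n → ∀ σ : DWBC n, gibbs n a b c σ = gibbsSt n q w σ := by
  set u := Real.exp (t + γ') with hu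
  set v := Real.exp (t - γ') with hv
  have hu1 : 1 < u := Real.one_lt_exp_iff.mpr (by linarith)
  have hv1 : 1 < v := Real.one_lt_exp_iff.mpr (by linarith)
  have hvu : v < u := Real.exp_lt_exp.mpr (by linarith)
  have hu0 : (0:ℝ) < u := by linarith
  have hv0 : (0:ℝ) < v := by linarith
  have ha' : a = (u - u⁻¹) / 2 := by
    rw [ha, Real.sinh_eq, Real.exp_neg, hu]
  have hb' : b = (v - v⁻¹) / 2 := by
    rw [hb, Real.sinh_eq, Real.exp_neg, hv]
  have hc' : c = (u / v - v / u) / 2 := by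
    rw [hc, Real.sinh_eq, Real.exp_neg,
        show (2:ℝ) * γ' = (t + γ') - (t - γ') by ring, Real.exp_sub, ← hu, ← hv,
        show (u / v)⁻¹ = v / u by rw [inv_div]]
  have hq' : q = (u / v) * (u / v) := by
    rw [hq, show (4:ℝ) * γ' = ((t + γ') - (t - γ')) + ((t + γ') - (t - γ')) by ring,
        Real.exp_add, Real.exp_sub, ← hu, ← hv]
  have hw' : w = (v * v - 1) / (u * u - 1) := by
    rw [hw, show (2:ℝ) * t - 2 * γ' = (t - γ') + (t - γ') by ring,
        show (2:ℝ) * t + 2 * γ' = (t + γ') + (t + γ') by ring,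
        Real.exp_add, Real.exp_add, ← hu, ← hv]
  have hden : (0:ℝ) < u * u - 1 := by nlinarith
  have hnum : (0:ℝ) < v * v - 1 := by nlinarith
  have hw0 : 0 < w := by rw [hw']; positivity
  have hw1 : w < 1 := by rw [hw', div_lt_one hden]; nlinarith
  have hqw0 : 0 < q * w := by
    have : 0 < q := by rw [hq']; positivity
    exact mul_pos this hw0
  have hqw1 : q * w < 1 := by
    rw [hq', hw', div_mul_div_comm, div_mul_div_comm, div_lt_one (by positivity)]
    nlinarith
  have ha0 : 0 < a := by
    rw [ha']
    have : u⁻¹ < 1 := by rw [inv_lt_one_iff₀]; right; exact hu1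
    nlinarith
  have hc0 : 0 < c := by
    rw [hc']
    have hx : v / u < 1 := by rw [div_lt_one hu0]; exact hvu
    have h2 : 1 < u / v := by rw [lt_div_iff₀ hv0]; linarith
    linarith
  have e1 : w * (q * w) * a ^ 2 = b ^ 2 := by
    rw [hq', hw', ha', hb']
    field_simp
    ring_nf
    have hd2 : -1 + u ^ 2 ≠ 0 := by nlinarith
    field_simp
    ring
  have e2 : (1 - w) * (1 - q * w) * a ^ 2 = c ^ 2 := by
    rw [hq', hw', ha', hc']
    field_simp
    ring_nf
    have hd2 : -1 + u ^ 2 ≠ 0 := by nlinarith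
    field_simp
    ring
  refine ⟨⟨hw0, hw1, hqw0, hqw1⟩, ?_⟩
  intro n hn σ
  have star : ∀ τ : DWBC n,
      wtSt q w τ.1 * (a ^ (n * n - n) * c ^ n) = wtABC a b c τ.1 * (1 - w) ^ n := by
    intro τ
    obtain ⟨h34, h56, hall⟩ := key_counts τ.1 τ.2
    have hexp : n * n - n
        = (Ncount τ.1 1 + Ncount τ.1 2) + 2 * Ncount τ.1 3 + 2 * Ncount τ.1 6 := by omega
    simp only [wtSt, wtABC]
    rw [← h34, h56, hexp]
    exact starAux a b c q w (Ncount τ.1 1 + Ncount τ.1 2) (Ncount τ.1 3) (Ncount τ.1 6) n e1 e2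
  have hKne : a ^ (n * n - n) * c ^ n ≠ 0 :=
    mul_ne_zero (pow_ne_zero _ (ne_of_gt ha0)) (pow_ne_zero _ (ne_of_gt hc0))
  have hLne : ((1:ℝ) - w) ^ n ≠ 0 := pow_ne_zero _ (by linarith)
  have hsum : (∑ σ' : DWBC n, wtABC a b c σ'.1) * (1 - w) ^ n
      = (∑ σ' : DWBC n, wtSt q w σ'.1) * (a ^ (n * n - n) * c ^ n) := by
    rw [Finset.sum_mul, Finset.sum_mul]
    exact Finset.sum_congr rfl fun τ _ => (star τ).symm
  simp only [gibbs, gibbsSt]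
  calc wtABC a b c σ.1 / (∑ σ' : DWBC n, wtABC a b c σ'.1)
      = wtABC a b c σ.1 * (1 - w) ^ n
          / ((∑ σ' : DWBC n, wtABC a b c σ'.1) * (1 - w) ^ n) := by
        rw [mul_div_mul_right _ _ hLne]
    _ = wtSt q w σ.1 * (a ^ (n * n - n) * c ^ n)
          / ((∑ σ' : DWBC n, wtSt q w σ'.1) * (a ^ (n * n - n) * c ^ n)) := by
        rw [star σ, hsum]
    _ = wtSt q w σ.1 / (∑ σ' : DWBC n, wtSt q w σ'.1) := by
        rw [mul_div_mul_right _ _ hKne]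


end SixV
end
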